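/- arXiv:2201.07637 — 4 statements merged into one kernel-verified Lean document; each statement's English description precedes it below -/
import Mathlib

section
/- For all positive integers n, r, l: if a connected ordered graph G is n-good, then the ordered graphs G + S_{1,r}, G + S_{l,1}, S_{l,1} + G, and S_{1,r} + G are all n-good. -/
/-- `G` (an ordered graph on `[m]`, modeled on `Fin m`) is an ordered subgraph of `H`
(on `Fin N`): there is a strictly increasing map preserving edges. -/
def OrderedSubgraph {m N : ℕ} (G : SimpleGraph (Fin m)) (H : SimpleGraph (Fin N)) : Prop :=
  ∃ φ : Fin m → Fin N, StrictMono φ ∧ ∀ i j : Fin m, G.Adj i j → H.Adj (φ i) (φ j)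

/-- The ordered Ramsey number `r_<(G, H)`: the least `N` such that every red-blue coloring
of the edges of the complete ordered graph on `N` vertices (given by its red graph `R`)
contains a red ordered copy of `G` or a blue ordered copy of `H`. -/
noncomputable def orderedRamsey {m k : ℕ} (G : SimpleGraph (Fin m)) (H : SimpleGraph (Fin k)) : ℕ :=
  sInf {N : ℕ | ∀ R : SimpleGraph (Fin N), OrderedSubgraph G R ∨ OrderedSubgraph H Rᶜ}

/-- The nested matching `NM_n`: the ordered graph on `2n` vertices with edges
`{i, 2n - i + 1}` (1-indexed), i.e. `i + j = 2n - 1` in 0-indexed form. -/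
def nestedMatching (n : ℕ) : SimpleGraph (Fin (2 * n)) :=
  SimpleGraph.fromRel (fun i j => (i : ℕ) + (j : ℕ) = 2 * n - 1)

/-- The ordered star `S_{l,r}` on `l + r - 1` vertices: the `l`-th vertex (1-indexed)
is adjacent to all other vertices. -/
def orderedStar (l r : ℕ) : SimpleGraph (Fin (l + r - 1)) :=
  SimpleGraph.fromRel (fun i _ => (i : ℕ) = l - 1)

/-- The join `G + H` of ordered graphs, identifying the rightmost vertex of `G`
with the leftmost vertex of `H`. -/
def orderedJoin {m k : ℕ} (G : SimpleGraph (Fin m)) (H : SimpleGraph (Fin k)) :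
    SimpleGraph (Fin (m + k - 1)) :=
  SimpleGraph.fromRel (fun i j =>
    (∃ a b : Fin m, G.Adj a b ∧ (i : ℕ) = (a : ℕ) ∧ (j : ℕ) = (b : ℕ)) ∨
    (∃ a b : Fin k, H.Adj a b ∧ (i : ℕ) = (a : ℕ) + (m - 1) ∧ (j : ℕ) = (b : ℕ) + (m - 1)))

/-- A connected ordered graph on `m` vertices is `n`-good if
`r_<(G, K_n) = (m-1)(n-1) + 1`. -/
def IsNGood {m : ℕ} (n : ℕ) (G : SimpleGraph (Fin m)) : Prop :=
  G.Connected ∧ orderedRamsey G (⊤ : SimpleGraph (Fin n)) = (m - 1) * (n - 1) + 1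

/-- Monotone caterpillar graphs: joins `S_{l₁,r₁} + ⋯ + S_{l_k,r_k}` of one-sided
ordered stars. -/
inductive IsMonotoneCaterpillar : ∀ {m : ℕ}, SimpleGraph (Fin m) → Prop
  | star {l r : ℕ} (hl : 1 ≤ l) (hr : 1 ≤ r) (h : l = 1 ∨ r = 1) :
      IsMonotoneCaterpillar (orderedStar l r)
  | join {m l r : ℕ} {G : SimpleGraph (Fin m)} (hl : 1 ≤ l) (hr : 1 ≤ r) (h : l = 1 ∨ r = 1)
      (hG : IsMonotoneCaterpillar G) : IsMonotoneCaterpillar (orderedJoin G (orderedStar l r))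

/-- A route in the `N × N` grid: a sequence of positions going only right or down. -/
def IsRoute {N : ℕ} (s : List (Fin N × Fin N)) : Prop :=
  s.Chain' (fun p q =>
    ((q.1 : ℕ) = (p.1 : ℕ) + 1 ∧ q.2 = p.2) ∨ (q.1 = p.1 ∧ (q.2 : ℕ) = (p.2 : ℕ) + 1))

def RProp {m k : ℕ} (G : SimpleGraph (Fin m)) (H : SimpleGraph (Fin k)) (N : ℕ) : Prop :=
  ∀ R : SimpleGraph (Fin N), OrderedSubgraph G R ∨ OrderedSubgraph H Rᶜ

lemma orderedRamsey_eq_sInf {m k : ℕ} (G : SimpleGraph (Fin m)) (H : SimpleGraph (Fin k)) :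
    orderedRamsey G H = sInf {N : ℕ | RProp G H N} := rfl

lemma rprop_of_strictMono {m k N N' : ℕ} {G : SimpleGraph (Fin m)} {H : SimpleGraph (Fin k)}
    (h : RProp G H N) (f : Fin N → Fin N') (hf : StrictMono f) : RProp G H N' := by
  intro R
  rcases h (R.comap f) with ⟨φ, hm, ha⟩ | ⟨φ, hm, ha⟩
  · exact Or.inl ⟨f ∘ φ, hf.comp hm, fun i j hij => ha i j hij⟩
  · refine Or.inr ⟨f ∘ φ, hf.comp hm, fun i j hij => ?_⟩
    have := ha i j hij
    rw [SimpleGraph.compl_adj] at this ⊢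
    exact ⟨fun hc => this.1 (hf.injective hc), this.2⟩

lemma rprop_mono {m k N N' : ℕ} {G : SimpleGraph (Fin m)} {H : SimpleGraph (Fin k)}
    (h : RProp G H N) (hle : N ≤ N') : RProp G H N' :=
  rprop_of_strictMono h (Fin.castLE hle) (Fin.strictMono_castLE hle)

lemma rprop_of_eq {m k M : ℕ} {G : SimpleGraph (Fin m)} {H : SimpleGraph (Fin k)}
    (h : orderedRamsey G H = M) (hM : 0 < M) : RProp G H M := by
  have hne : {N : ℕ | RProp G H N}.Nonempty := by
    by_contra hc
    rw [Set.not_nonempty_iff_eq_empty] at hc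
    rw [orderedRamsey_eq_sInf, hc, Nat.sInf_empty] at h
    omega
  have := Nat.sInf_mem hne
  rwa [← orderedRamsey_eq_sInf, h] at this
open Finset in
lemma good_subset {m n N M : ℕ} {G : SimpleGraph (Fin m)}
    (hprop : RProp G (⊤ : SimpleGraph (Fin n)) M)
    (R : SimpleGraph (Fin N)) (S : Finset (Fin N)) (hS : S.card = M) :
    (∃ φ : Fin m → Fin N, StrictMono φ ∧ (∀ i, φ i ∈ S) ∧
      ∀ i j, G.Adj i j → R.Adj (φ i) (φ j)) ∨
    OrderedSubgraph (⊤ : SimpleGraph (Fin n)) Rᶜ := by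
  set f := S.orderEmbOfFin hS with hf
  rcases hprop (R.comap f) with ⟨φ, hm, ha⟩ | ⟨φ, hm, ha⟩
  · exact Or.inl ⟨fun i => f (φ i), f.strictMono.comp hm,
      fun i => S.orderEmbOfFin_mem hS (φ i), fun i j hij => ha i j hij⟩
  · refine Or.inr ⟨fun i => f (φ i), f.strictMono.comp hm, fun i j hij => ?_⟩
    have := ha i j hij
    rw [SimpleGraph.compl_adj] at this ⊢
    exact ⟨fun hc => this.1 (f.injective hc), this.2⟩

open Finset in
/-- Blue clique lemma (right version): if every vertex of `W` has fewer than `k`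
red neighbors to its right inside `W`, and `W` is large, there is a blue clique. -/
lemma blue_right {N : ℕ} (R : SimpleGraph (Fin N)) (k : ℕ) [DecidableRel R.Adj] :
    ∀ (n : ℕ) (W : Finset (Fin N)),
      (∀ v ∈ W, (W.filter (fun w => v < w ∧ R.Adj v w)).card < k) →
      k * n + 1 ≤ W.card →
      ∃ T ⊆ W, T.card = n + 1 ∧ ∀ a ∈ T, ∀ b ∈ T, a ≠ b → ¬ R.Adj a b := by
  intro n
  induction n with
  | zero =>
    intro W _ hcard
    have hne : W.Nonempty := card_pos.mp (by omega)
    refine ⟨{W.min' hne}, by simp [W.min'_mem hne], by simp, ?_⟩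
    intro a ha b hb hab
    simp only [mem_singleton] at ha hb
    exact absurd (ha.trans hb.symm) hab
  | succ n ih =>
    intro W hdeg hcard
    have hne : W.Nonempty := card_pos.mp (by omega)
    set v := W.min' hne with hv
    set B := W.filter (fun w => v < w ∧ ¬ R.Adj v w) with hB
    have hsub : W ⊆ insert v ((W.filter (fun w => v < w ∧ R.Adj v w)) ∪ B) := by
      intro w hw
      rcases eq_or_ne w v with h | h
      · simp [h]
      · have hlt : v < w := lt_of_le_of_ne (W.min'_le w hw) (Ne.symm h)
        by_cases hadj : R.Adj v w
        · simp [mem_insert, mem_union, hB, mem_filter, hw, hlt, hadj]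
        · simp [mem_insert, mem_union, hB, mem_filter, hw, hlt, hadj]
    have hBcard : k * n + 1 ≤ B.card := by
      have h1 := card_le_card hsub
      have h2 := card_insert_le v ((W.filter (fun w => v < w ∧ R.Adj v w)) ∪ B)
      have h3 := card_union_le (W.filter (fun w => v < w ∧ R.Adj v w)) B
      have h4 := hdeg v (W.min'_mem hne)
      have h5 : k * (n+1) = k * n + k := by ring
      omega
    have hBdeg : ∀ u ∈ B, (B.filter (fun w => u < w ∧ R.Adj u w)).card < k := by
      intro u hu
      have hBW : B ⊆ W := filter_subset _ _
      calc (B.filter (fun w => u < w ∧ R.Adj u w)).card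
          ≤ (W.filter (fun w => u < w ∧ R.Adj u w)).card :=
            card_le_card (filter_subset_filter _ hBW)
        _ < k := hdeg u (hBW hu)
    obtain ⟨T, hTB, hTcard, hTblue⟩ := ih B hBdeg hBcard
    have hvT : v ∉ T := by
      intro hvt
      have := (mem_filter.mp (hTB hvt)).2.1
      exact lt_irrefl v this
    refine ⟨insert v T, ?_, ?_, ?_⟩
    · intro x hx
      rcases mem_insert.mp hx with h | h
      · exact h ▸ W.min'_mem hne
      · exact (filter_subset _ _) (hTB h)
    · rw [card_insert_of_notMem hvT, hTcard]
    · intro a ha b hb hab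
      rcases mem_insert.mp ha with ha' | ha' <;> rcases mem_insert.mp hb with hb' | hb'
      · exact absurd (ha'.trans hb'.symm) hab
      · subst ha'; exact (mem_filter.mp (hTB hb')).2.2
      · subst hb'
        intro hadj
        exact (mem_filter.mp (hTB ha')).2.2 hadj.symm
      · exact hTblue a ha' b hb' hab

open Finset in
lemma blue_left {N : ℕ} (R : SimpleGraph (Fin N)) (k : ℕ) [DecidableRel R.Adj] :
    ∀ (n : ℕ) (W : Finset (Fin N)),
      (∀ v ∈ W, (W.filter (fun w => w < v ∧ R.Adj w v)).card < k) →
      k * n + 1 ≤ W.card →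
      ∃ T ⊆ W, T.card = n + 1 ∧ ∀ a ∈ T, ∀ b ∈ T, a ≠ b → ¬ R.Adj a b := by
  intro n
  induction n with
  | zero =>
    intro W _ hcard
    have hne : W.Nonempty := card_pos.mp (by omega)
    refine ⟨{W.max' hne}, by simp [W.max'_mem hne], by simp, ?_⟩
    intro a ha b hb hab
    simp only [mem_singleton] at ha hb
    exact absurd (ha.trans hb.symm) hab
  | succ n ih =>
    intro W hdeg hcard
    have hne : W.Nonempty := card_pos.mp (by omega)
    set v := W.max' hne with hv
    set B := W.filter (fun w => w < v ∧ ¬ R.Adj w v) with hB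
    have hsub : W ⊆ insert v ((W.filter (fun w => w < v ∧ R.Adj w v)) ∪ B) := by
      intro w hw
      rcases eq_or_ne w v with h | h
      · simp [h]
      · have hlt : w < v := lt_of_le_of_ne (W.le_max' w hw) h
        by_cases hadj : R.Adj w v
        · simp [mem_insert, mem_union, hB, mem_filter, hw, hlt, hadj]
        · simp [mem_insert, mem_union, hB, mem_filter, hw, hlt, hadj]
    have hBcard : k * n + 1 ≤ B.card := by
      have h1 := card_le_card hsub
      have h2 := card_insert_le v ((W.filter (fun w => w < v ∧ R.Adj w v)) ∪ B)
      have h3 := card_union_le (W.filter (fun w => w < v ∧ R.Adj w v)) B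
      have h4 := hdeg v (W.max'_mem hne)
      have h5 : k * (n+1) = k * n + k := by ring
      omega
    have hBdeg : ∀ u ∈ B, (B.filter (fun w => w < u ∧ R.Adj w u)).card < k := by
      intro u hu
      have hBW : B ⊆ W := filter_subset _ _
      calc (B.filter (fun w => w < u ∧ R.Adj w u)).card
          ≤ (W.filter (fun w => w < u ∧ R.Adj w u)).card :=
            card_le_card (filter_subset_filter _ hBW)
        _ < k := hdeg u (hBW hu)
    obtain ⟨T, hTB, hTcard, hTblue⟩ := ih B hBdeg hBcard
    have hvT : v ∉ T := by
      intro hvt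
      have := (mem_filter.mp (hTB hvt)).2.1
      exact lt_irrefl v this
    refine ⟨insert v T, ?_, ?_, ?_⟩
    · intro x hx
      rcases mem_insert.mp hx with h | h
      · exact h ▸ W.max'_mem hne
      · exact (filter_subset _ _) (hTB h)
    · rw [card_insert_of_notMem hvT, hTcard]
    · intro a ha b hb hab
      rcases mem_insert.mp ha with ha' | ha' <;> rcases mem_insert.mp hb with hb' | hb'
      · exact absurd (ha'.trans hb'.symm) hab
      · subst ha'
        intro hadj
        exact (mem_filter.mp (hTB hb')).2.2 hadj.symm
      · subst hb'; exact (mem_filter.mp (hTB ha')).2.2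
      · exact hTblue a ha' b hb' hab

/-- Convert a blue clique (as a Finset) to an ordered embedding of `K_n` into `Rᶜ`. -/
lemma clique_emb {N n : ℕ} {R : SimpleGraph (Fin N)} (T : Finset (Fin N)) (hT : T.card = n)
    (hblue : ∀ a ∈ T, ∀ b ∈ T, a ≠ b → ¬ R.Adj a b) :
    OrderedSubgraph (⊤ : SimpleGraph (Fin n)) Rᶜ := by
  refine ⟨T.orderEmbOfFin hT, (T.orderEmbOfFin hT).strictMono, fun i j hij => ?_⟩
  have hne : i ≠ j := hij.ne
  have hne' : T.orderEmbOfFin hT i ≠ T.orderEmbOfFin hT j :=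
    fun hc => hne ((T.orderEmbOfFin hT).injective hc)
  rw [SimpleGraph.compl_adj]
  exact ⟨hne', hblue _ (T.orderEmbOfFin_mem hT i) _ (T.orderEmbOfFin_mem hT j) hne'⟩
/-- Lower bound: any member of the Ramsey set for a connected graph `G'` on `M ≥ 1`
vertices versus `K_n` is at least `(M-1)(n-1)+1`. -/
lemma lower_bound {M n : ℕ} (G' : SimpleGraph (Fin M)) (hconn : G'.Connected) (hn : 1 ≤ n) :
    ∀ x, RProp G' (⊤ : SimpleGraph (Fin n)) x → (M - 1) * (n - 1) + 1 ≤ x := by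
  have hM : 1 ≤ M := (hconn.nonempty.elim fun v => v.pos)
  -- it suffices to show the property fails at `(M-1)*(n-1)`
  have key : ¬ RProp G' (⊤ : SimpleGraph (Fin n)) ((M - 1) * (n - 1)) := by
    set q := M - 1 with hq
    set N₀ := (M - 1) * (n - 1) with hN₀
    intro hprop
    rcases Nat.eq_zero_or_pos N₀ with h0 | hpos
    · -- no vertices at all: both sides impossible
      rcases hprop ⊥ with ⟨φ, _, _⟩ | ⟨φ, _, _⟩
      · exact absurd (φ ⟨0, hM⟩).isLt (by omega)
      · exact absurd (φ ⟨0, hn⟩).isLt (by omega)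
    have hpos' : 0 < (M - 1) * (n - 1) := hpos
    have hq1 : 1 ≤ q := by
      rcases Nat.eq_zero_or_pos (M - 1) with h | h
      · simp [h] at hpos'
      · exact h
    have hn2 : 2 ≤ n := by
      rcases Nat.eq_zero_or_pos (n - 1) with h | h
      · simp [h] at hpos'
      · omega
    -- block coloring
    set R₀ : SimpleGraph (Fin N₀) :=
      SimpleGraph.fromRel (fun u v => (u : ℕ) / q = (v : ℕ) / q) with hR₀
    rcases hprop R₀ with ⟨φ, hm, ha⟩ | ⟨φ, hm, ha⟩
    · -- a red copy of connected G' lies in one block of size q = M-1 < M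
      have hblk : ∀ a b : Fin M, G'.Reachable a b → (φ a : ℕ) / q = (φ b : ℕ) / q := by
        intro a b hr
        obtain ⟨w⟩ := hr
        induction w with
        | nil => rfl
        | cons h p ih =>
          have := ha _ _ h
          rw [hR₀, SimpleGraph.fromRel_adj] at this
          rcases this.2 with h' | h'
          · exact h'.trans ih
          · exact h'.symm.trans ih
      set c := (φ ⟨0, hM⟩ : ℕ) / q with hc
      have hmem : ∀ a : Fin M, (φ a : ℕ) / q = c := fun a =>
        (hblk _ _ (hconn.preconnected a ⟨0, hM⟩)).trans rfl
      -- map into Fin q injectively from Fin M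
      have hinj : Function.Injective (fun a : Fin M =>
          (⟨(φ a : ℕ) - c * q, by
            have h1 : (φ a : ℕ) / q = c := hmem a
            have h2 : (φ a : ℕ) < (c + 1) * q := by
              rw [← Nat.div_lt_iff_lt_mul (by omega)]
              omega
            have h3 : c * q ≤ (φ a : ℕ) := by
              have := Nat.div_mul_le_self (φ a : ℕ) q
              rw [h1] at this
              exact this
            have : (c+1)*q = c*q + q := by ring
            omega⟩ : Fin q)) := by
        intro a b hab
        apply hm.injective
        apply Fin.ext
        have h1 := hmem a
        have h2 := hmem b
        have h3 : c * q ≤ (φ a : ℕ) := by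
          have := Nat.div_mul_le_self (φ a : ℕ) q; rwa [h1] at this
        have h4 : c * q ≤ (φ b : ℕ) := by
          have := Nat.div_mul_le_self (φ b : ℕ) q; rwa [h2] at this
        have h5 : ((φ a : ℕ) - c * q) = ((φ b : ℕ) - c * q) := congrArg Fin.val hab
        omega
      have := Fintype.card_le_of_injective _ hinj
      simp only [Fintype.card_fin] at this
      omega
    · -- a blue K_n has all vertices in distinct blocks; only n-1 blocks exist
      have hinj : Function.Injective (fun i : Fin n =>
          (⟨(φ i : ℕ) / q, by
            rw [Nat.div_lt_iff_lt_mul (by omega : 0 < q)]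
            calc (φ i : ℕ) < N₀ := (φ i).isLt
              _ = (n-1) * q := by rw [hN₀]; ring⟩ : Fin (n-1))) := by
        intro i j hij
        by_contra hne
        have hadj : (⊤ : SimpleGraph (Fin n)).Adj i j := by
          simp [SimpleGraph.top_adj, hne]
        have := ha i j hadj
        rw [SimpleGraph.compl_adj, hR₀, SimpleGraph.fromRel_adj] at this
        have hdiv : (φ i : ℕ) / q = (φ j : ℕ) / q := congrArg Fin.val hij
        exact this.2 ⟨hm.injective.ne hne, Or.inl hdiv⟩
      have := Fintype.card_le_of_injective _ hinj
      simp only [Fintype.card_fin] at this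
      omega
  intro x hx
  by_contra hlt
  exact key (rprop_mono hx (by omega))
lemma star_connected (l r : ℕ) (hl : 1 ≤ l) (hr : 1 ≤ r) : (orderedStar l r).Connected := by
  rw [SimpleGraph.connected_iff_exists_forall_reachable]
  refine ⟨⟨l - 1, by omega⟩, fun w => ?_⟩
  rcases eq_or_ne (⟨l - 1, by omega⟩ : Fin (l + r - 1)) w with h | h
  · exact h ▸ SimpleGraph.Reachable.refl _
  · apply SimpleGraph.Adj.reachable
    rw [orderedStar, SimpleGraph.fromRel_adj]
    exact ⟨h, Or.inl rfl⟩

/-- The inclusion of the right-hand graph's vertices into the join. -/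
def shiftFun {m k : ℕ} (hm : 1 ≤ m) (a : Fin k) : Fin (m + k - 1) :=
  ⟨(a : ℕ) + (m - 1), by have := a.isLt; omega⟩

@[simp] lemma shiftFun_val {m k : ℕ} (hm : 1 ≤ m) (a : Fin k) :
    (shiftFun hm a : ℕ) = (a : ℕ) + (m - 1) := rfl

lemma join_connected {m k : ℕ} (G : SimpleGraph (Fin m)) (H : SimpleGraph (Fin k))
    (hG : G.Connected) (hH : H.Connected) : (orderedJoin G H).Connected := by
  have hm : 1 ≤ m := hG.nonempty.elim fun v => v.pos
  have hk : 1 ≤ k := hH.nonempty.elim fun v => v.pos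
  have hmk : m ≤ m + k - 1 := by omega
  have hGmap : ∀ {a b : Fin m}, G.Adj a b →
      (orderedJoin G H).Adj (Fin.castLE hmk a) (Fin.castLE hmk b) := by
    intro a b hab
    rw [orderedJoin, SimpleGraph.fromRel_adj]
    exact ⟨fun hc => hab.ne (Fin.castLE_injective hmk hc),
      Or.inl (Or.inl ⟨a, b, hab, rfl, rfl⟩)⟩
  have hHmap : ∀ {a b : Fin k}, H.Adj a b →
      (orderedJoin G H).Adj (shiftFun hm a) (shiftFun hm b) := by
    intro a b hab
    rw [orderedJoin, SimpleGraph.fromRel_adj]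
    refine ⟨fun hc => hab.ne (Fin.ext ?_), Or.inl (Or.inr ⟨a, b, hab, rfl, rfl⟩)⟩
    have h2 := congrArg Fin.val hc
    simp only [shiftFun_val] at h2
    omega
  let homG : G →g (orderedJoin G H) := ⟨Fin.castLE hmk, hGmap⟩
  let homH : H →g (orderedJoin G H) := ⟨shiftFun hm, hHmap⟩
  rw [SimpleGraph.connected_iff_exists_forall_reachable]
  refine ⟨Fin.castLE hmk ⟨m - 1, by omega⟩, fun u => ?_⟩
  rcases lt_or_ge (u : ℕ) m with hu | hu
  · have h1 : u = Fin.castLE hmk ⟨(u : ℕ), hu⟩ := Fin.ext rfl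
    rw [h1]
    exact (hG.preconnected ⟨m - 1, by omega⟩ ⟨(u : ℕ), hu⟩).map homG
  · have hu2 : (u : ℕ) - (m - 1) < k := by have := u.isLt; omega
    have h1 : u = shiftFun hm ⟨(u : ℕ) - (m - 1), hu2⟩ := by
      apply Fin.ext
      simp only [shiftFun_val]
      omega
    have h2 : Fin.castLE hmk ⟨m - 1, by omega⟩ = shiftFun hm ⟨0, by omega⟩ := by
      apply Fin.ext
      simp only [shiftFun_val, Fin.coe_castLE]
      omega
    rw [h1, h2]
    exact (hH.preconnected ⟨0, by omega⟩ ⟨(u : ℕ) - (m - 1), hu2⟩).map homH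
/-- A three-piece gluing function on positions. -/
def extFun3 {N m1 m2 m3 : ℕ} (f : Fin m1 → Fin N) (g : Fin m2 → Fin N) (h : Fin m3 → Fin N)
    (c : Fin N) (x : ℕ) : Fin N :=
  if h1 : x < m1 then f ⟨x, h1⟩ else if h2 : x - m1 < m2 then g ⟨x - m1, h2⟩
  else if h3 : x - m1 - m2 < m3 then h ⟨x - m1 - m2, h3⟩ else c

lemma extFun3_one {N m1 m2 m3 : ℕ} {f : Fin m1 → Fin N} {g : Fin m2 → Fin N}
    {h : Fin m3 → Fin N} {c : Fin N} {x : ℕ} (h1 : x < m1) :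
    extFun3 f g h c x = f ⟨x, h1⟩ := dif_pos h1

lemma extFun3_two {N m1 m2 m3 : ℕ} {f : Fin m1 → Fin N} {g : Fin m2 → Fin N}
    {h : Fin m3 → Fin N} {c : Fin N} {x : ℕ} (h1 : ¬ x < m1) (h2 : x - m1 < m2) :
    extFun3 f g h c x = g ⟨x - m1, h2⟩ := by
  rw [extFun3, dif_neg h1, dif_pos h2]

lemma extFun3_three {N m1 m2 m3 : ℕ} {f : Fin m1 → Fin N} {g : Fin m2 → Fin N}
    {h : Fin m3 → Fin N} {c : Fin N} {x : ℕ} (h1 : ¬ x < m1) (h2 : ¬ x - m1 < m2)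
    (h3 : x - m1 - m2 < m3) :
    extFun3 f g h c x = h ⟨x - m1 - m2, h3⟩ := by
  rw [extFun3, dif_neg h1, dif_neg h2, dif_pos h3]

lemma extFun3_last {N m1 m2 m3 : ℕ} {f : Fin m1 → Fin N} {g : Fin m2 → Fin N}
    {h : Fin m3 → Fin N} {c : Fin N} {x : ℕ} (h1 : ¬ x < m1) (h2 : ¬ x - m1 < m2)
    (h3 : ¬ x - m1 - m2 < m3) :
    extFun3 f g h c x = c := by
  rw [extFun3, dif_neg h1, dif_neg h2, dif_neg h3]
/-- Assembly for `G + S_{1,r}`: a red copy of `G` whose last vertex has `k = r-1`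
red neighbours to the right extends to a red copy of the join. -/
lemma assemble1 {N m r k : ℕ} (hr : 1 ≤ r) (hk : k = r - 1) (hm1 : m - 1 < m)
    {R : SimpleGraph (Fin N)} {G : SimpleGraph (Fin m)}
    (ψ : Fin m → Fin N) (hψmono : StrictMono ψ)
    (hψred : ∀ i j, G.Adj i j → R.Adj (ψ i) (ψ j))
    (e : Fin k → Fin N) (hemono : StrictMono e)
    (hfact : ∀ t, ψ ⟨m - 1, hm1⟩ < e t ∧ R.Adj (ψ ⟨m - 1, hm1⟩) (e t)) :
    OrderedSubgraph (orderedJoin G (orderedStar 1 r)) R := by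
  have hm : 1 ≤ m := by omega
  refine ⟨fun i => extFun3 ψ e (Fin.elim0) (ψ ⟨m - 1, hm1⟩) (i : ℕ), ?_, ?_⟩
  · -- strict monotonicity
    intro i j hij
    dsimp only
    have hij' : (i : ℕ) < (j : ℕ) := hij
    have hjlt := j.isLt
    have hjlt' : (j : ℕ) < m + k := by omega
    by_cases hi : (i : ℕ) < m <;> by_cases hj : (j : ℕ) < m
    · rw [extFun3_one hi, extFun3_one hj]
      exact hψmono (show ((⟨(i : ℕ), hi⟩ : Fin m)) < ⟨(j : ℕ), hj⟩ from hij')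
    · rw [extFun3_one hi, extFun3_two (m2 := k) hj (by omega)]
      refine lt_of_le_of_lt (hψmono.monotone
        (show ((⟨(i : ℕ), hi⟩ : Fin m)) ≤ ⟨m - 1, hm1⟩ by rw [Fin.mk_le_mk]; omega))
        (hfact _).1
    · omega
    · rw [extFun3_two (m2 := k) hi (by omega), extFun3_two (m2 := k) hj (by omega)]
      exact hemono (show ((⟨(i : ℕ) - m, _⟩ : Fin k)) < ⟨(j : ℕ) - m, _⟩ by
        rw [Fin.mk_lt_mk]; omega)
  · -- adjacency
    intro i j hadj
    rw [orderedJoin, SimpleGraph.fromRel_adj] at hadj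
    have core : ∀ i' j' : Fin (m + (1 + r - 1) - 1),
        ((∃ a b : Fin m, G.Adj a b ∧ (i' : ℕ) = (a : ℕ) ∧ (j' : ℕ) = (b : ℕ)) ∨
         (∃ a b : Fin (1 + r - 1), (orderedStar 1 r).Adj a b ∧
           (i' : ℕ) = (a : ℕ) + (m - 1) ∧ (j' : ℕ) = (b : ℕ) + (m - 1))) →
        R.Adj (extFun3 ψ e (Fin.elim0) (ψ ⟨m - 1, hm1⟩) (i' : ℕ))
          (extFun3 ψ e (Fin.elim0) (ψ ⟨m - 1, hm1⟩) (j' : ℕ)) := by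
      clear hadj i j
      rintro i' j' (⟨a, b, hab, hia, hjb⟩ | ⟨a, b, hab, hia, hjb⟩)
      · have hi : (i' : ℕ) < m := by have := a.isLt; omega
        have hj : (j' : ℕ) < m := by have := b.isLt; omega
        rw [extFun3_one hi, extFun3_one hj]
        have e1 : (⟨(i' : ℕ), hi⟩ : Fin m) = a := Fin.ext hia
        have e2 : (⟨(j' : ℕ), hj⟩ : Fin m) = b := Fin.ext hjb
        rw [e1, e2]
        exact hψred a b hab
      · rw [orderedStar, SimpleGraph.fromRel_adj] at hab
        have hvalne : (a : ℕ) ≠ (b : ℕ) := fun hc => hab.1 (Fin.ext hc)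
        have ha' := a.isLt
        have hb' := b.isLt
        have hi'lt := i'.isLt
        have hj'lt := j'.isLt
        rcases hab.2 with h0 | h0
        · have hi : (i' : ℕ) < m := by omega
          have hj : ¬ (j' : ℕ) < m := by omega
          have hj2 : (j' : ℕ) - m < k := by omega
          have g1 : extFun3 ψ e Fin.elim0 (ψ ⟨m - 1, hm1⟩) ((i' : ℕ)) = ψ ⟨(i' : ℕ), hi⟩ :=
            extFun3_one hi
          have g2 : extFun3 ψ e Fin.elim0 (ψ ⟨m - 1, hm1⟩) ((j' : ℕ)) = e ⟨(j' : ℕ) - m, hj2⟩ :=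
            extFun3_two hj hj2
          have e1 : (⟨(i' : ℕ), hi⟩ : Fin m) = ⟨m - 1, hm1⟩ :=
            Fin.ext (show (i' : ℕ) = m - 1 by omega)
          rw [g1, g2, e1]
          exact (hfact _).2
        · have hj : (j' : ℕ) < m := by omega
          have hi : ¬ (i' : ℕ) < m := by omega
          have hi2 : (i' : ℕ) - m < k := by omega
          have g1 : extFun3 ψ e Fin.elim0 (ψ ⟨m - 1, hm1⟩) ((i' : ℕ)) = e ⟨(i' : ℕ) - m, hi2⟩ :=
            extFun3_two hi hi2
          have g2 : extFun3 ψ e Fin.elim0 (ψ ⟨m - 1, hm1⟩) ((j' : ℕ)) = ψ ⟨(j' : ℕ), hj⟩ :=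
            extFun3_one hj
          have e2 : (⟨(j' : ℕ), hj⟩ : Fin m) = ⟨m - 1, hm1⟩ :=
            Fin.ext (show (j' : ℕ) = m - 1 by omega)
          rw [g1, g2, e2]
          exact ((hfact _).2).symm
    obtain ⟨hne, hrel⟩ := hadj
    rcases hrel with h | h
    · exact core i j h
    · exact (core j i h).symm

open Finset in
lemma upper_case1 {m n r : ℕ} (hn : 1 ≤ n) (hr : 1 ≤ r) {G : SimpleGraph (Fin m)}
    (hm : 1 ≤ m)
    (hprop : RProp G (⊤ : SimpleGraph (Fin n)) ((m - 1) * (n - 1) + 1)) :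
    RProp (orderedJoin G (orderedStar 1 r)) (⊤ : SimpleGraph (Fin n))
      ((m + (1 + r - 1) - 1 - 1) * (n - 1) + 1) := by
  classical
  obtain ⟨k, hk⟩ : ∃ k, k = r - 1 := ⟨_, rfl⟩
  suffices h : ∀ N, N = (m + (1 + r - 1) - 1 - 1) * (n - 1) + 1 →
      ∀ R : SimpleGraph (Fin N),
        OrderedSubgraph (orderedJoin G (orderedStar 1 r)) R ∨
        OrderedSubgraph (⊤ : SimpleGraph (Fin n)) Rᶜ by
    exact fun R => h _ rfl R
  intro N hN R
  have hNeq : N = (m - 1) * (n - 1) + (k * (n - 1) + 1) := by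
    rw [hN, hk]
    have h1 : m + (1 + r - 1) - 1 - 1 = (m - 1) + (r - 1) := by omega
    rw [h1, add_mul]
    omega
  obtain ⟨W, hW⟩ : ∃ W, W = (univ : Finset (Fin N)).filter
      (fun v => ((univ : Finset (Fin N)).filter (fun w => v < w ∧ R.Adj v w)).card < k) :=
    ⟨_, rfl⟩
  by_cases hWbig : k * (n - 1) + 1 ≤ W.card
  · -- large W: find a blue clique
    have hdeg : ∀ v ∈ W, (W.filter (fun w => v < w ∧ R.Adj v w)).card < k := by
      intro v hv
      rw [hW] at hv
      have hv2 := (mem_filter.mp hv).2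
      refine lt_of_le_of_lt (card_le_card ?_) hv2
      rw [hW]
      exact filter_subset_filter _ (filter_subset _ _)
    obtain ⟨T, _, hTcard, hblue⟩ := blue_right R k (n - 1) W hdeg hWbig
    exact Or.inr (clique_emb T (by omega) hblue)
  · -- small W: apply goodness of G on the complement
    obtain ⟨Z, hZ⟩ : ∃ Z, Z = (univ : Finset (Fin N)).filter
        (fun v => ¬ (((univ : Finset (Fin N)).filter
          (fun w => v < w ∧ R.Adj v w)).card < k)) := ⟨_, rfl⟩
    have hZcard : (m - 1) * (n - 1) + 1 ≤ Z.card := by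
      have hWZ := card_filter_add_card_filter_not (s := (univ : Finset (Fin N)))
        (p := fun v : Fin N =>
          ((univ : Finset (Fin N)).filter (fun w => v < w ∧ R.Adj v w)).card < k)
      rw [card_univ, Fintype.card_fin, ← hW, ← hZ] at hWZ
      omega
    obtain ⟨Z', hZ'sub, hZ'card⟩ := exists_subset_card_eq hZcard
    rcases good_subset hprop R Z' hZ'card with ⟨ψ, hψmono, hψmem, hψred⟩ | hblue
    · -- red copy of G; extend by the star
      left
      have hm1 : m - 1 < m := by omega
      have huk : k ≤ ((univ : Finset (Fin N)).filter
          (fun w => ψ ⟨m - 1, hm1⟩ < w ∧ R.Adj (ψ ⟨m - 1, hm1⟩) w)).card := by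
        have huZ : ψ ⟨m - 1, hm1⟩ ∈ Z := hZ'sub (hψmem _)
        rw [hZ] at huZ
        have := (mem_filter.mp huZ).2
        omega
      obtain ⟨F, hFsub, hFcard⟩ := exists_subset_card_eq huk
      obtain ⟨e, hemono, hfact⟩ : ∃ e : Fin k → Fin N, StrictMono e ∧
          ∀ t : Fin k, ψ ⟨m - 1, hm1⟩ < e t ∧ R.Adj (ψ ⟨m - 1, hm1⟩) (e t) := by
        refine ⟨F.orderEmbOfFin hFcard, (F.orderEmbOfFin hFcard).strictMono, fun t => ?_⟩
        exact (mem_filter.mp (hFsub (F.orderEmbOfFin_mem hFcard t))).2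
      exact assemble1 hr hk hm1 ψ hψmono hψred e hemono hfact
    · exact Or.inr hblue
/-- Assembly for `S_{l,1} + G`: a red copy of `G` whose first vertex has `k = l-1`
red neighbours to the left extends to a red copy of the join. -/
lemma assemble4 {N m l k : ℕ} (hl : 1 ≤ l) (hk : k = l - 1) (hm0 : 0 < m)
    {R : SimpleGraph (Fin N)} {G : SimpleGraph (Fin m)}
    (ψ : Fin m → Fin N) (hψmono : StrictMono ψ)
    (hψred : ∀ i j, G.Adj i j → R.Adj (ψ i) (ψ j))
    (e : Fin k → Fin N) (hemono : StrictMono e)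
    (hfact : ∀ t, e t < ψ ⟨0, hm0⟩ ∧ R.Adj (e t) (ψ ⟨0, hm0⟩)) :
    OrderedSubgraph (orderedJoin (orderedStar l 1) G) R := by
  refine ⟨fun i => extFun3 e ψ (Fin.elim0) (ψ ⟨0, hm0⟩) (i : ℕ), ?_, ?_⟩
  · intro i j hij
    dsimp only
    have hij' : (i : ℕ) < (j : ℕ) := hij
    have hjlt := j.isLt
    have hjlt' : (j : ℕ) < k + m := by omega
    by_cases hi : (i : ℕ) < k <;> by_cases hj : (j : ℕ) < k
    · rw [extFun3_one hi, extFun3_one hj]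
      exact hemono (show ((⟨(i : ℕ), hi⟩ : Fin k)) < ⟨(j : ℕ), hj⟩ from hij')
    · rw [extFun3_one hi, extFun3_two (m2 := m) hj (by omega)]
      exact lt_of_lt_of_le (hfact _).1 (hψmono.monotone
        (show ((⟨0, hm0⟩ : Fin m)) ≤ ⟨(j : ℕ) - k, _⟩ by rw [Fin.mk_le_mk]; omega))
    · omega
    · rw [extFun3_two (m2 := m) hi (by omega), extFun3_two (m2 := m) hj (by omega)]
      exact hψmono (show ((⟨(i : ℕ) - k, _⟩ : Fin m)) < ⟨(j : ℕ) - k, _⟩ by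
        rw [Fin.mk_lt_mk]; omega)
  · intro i j hadj
    rw [orderedJoin, SimpleGraph.fromRel_adj] at hadj
    have core : ∀ i' j' : Fin ((l + 1 - 1) + m - 1),
        ((∃ a b : Fin (l + 1 - 1), (orderedStar l 1).Adj a b ∧
           (i' : ℕ) = (a : ℕ) ∧ (j' : ℕ) = (b : ℕ)) ∨
         (∃ a b : Fin m, G.Adj a b ∧
           (i' : ℕ) = (a : ℕ) + (l + 1 - 1 - 1) ∧ (j' : ℕ) = (b : ℕ) + (l + 1 - 1 - 1))) →
        R.Adj (extFun3 e ψ (Fin.elim0) (ψ ⟨0, hm0⟩) (i' : ℕ))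
          (extFun3 e ψ (Fin.elim0) (ψ ⟨0, hm0⟩) (j' : ℕ)) := by
      clear hadj i j
      rintro i' j' (⟨a, b, hab, hia, hjb⟩ | ⟨a, b, hab, hia, hjb⟩)
      · rw [orderedStar, SimpleGraph.fromRel_adj] at hab
        have hvalne : (a : ℕ) ≠ (b : ℕ) := fun hc => hab.1 (Fin.ext hc)
        have ha' := a.isLt
        have hb' := b.isLt
        have hi'lt := i'.isLt
        have hj'lt := j'.isLt
        rcases hab.2 with h0 | h0
        · have hi : ¬ (i' : ℕ) < k := by omega
          have hi2 : (i' : ℕ) - k < m := by omega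
          have hj : (j' : ℕ) < k := by omega
          have g1 : extFun3 e ψ Fin.elim0 (ψ ⟨0, hm0⟩) ((i' : ℕ)) = ψ ⟨(i' : ℕ) - k, hi2⟩ :=
            extFun3_two hi hi2
          have g2 : extFun3 e ψ Fin.elim0 (ψ ⟨0, hm0⟩) ((j' : ℕ)) = e ⟨(j' : ℕ), hj⟩ :=
            extFun3_one hj
          have e1 : (⟨(i' : ℕ) - k, hi2⟩ : Fin m) = ⟨0, hm0⟩ :=
            Fin.ext (show (i' : ℕ) - k = 0 by omega)
          rw [g1, g2, e1]
          exact ((hfact _).2).symm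
        · have hj : ¬ (j' : ℕ) < k := by omega
          have hj2 : (j' : ℕ) - k < m := by omega
          have hi : (i' : ℕ) < k := by omega
          have g1 : extFun3 e ψ Fin.elim0 (ψ ⟨0, hm0⟩) ((i' : ℕ)) = e ⟨(i' : ℕ), hi⟩ :=
            extFun3_one hi
          have g2 : extFun3 e ψ Fin.elim0 (ψ ⟨0, hm0⟩) ((j' : ℕ)) = ψ ⟨(j' : ℕ) - k, hj2⟩ :=
            extFun3_two hj hj2
          have e2 : (⟨(j' : ℕ) - k, hj2⟩ : Fin m) = ⟨0, hm0⟩ :=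
            Fin.ext (show (j' : ℕ) - k = 0 by omega)
          rw [g1, g2, e2]
          exact (hfact _).2
      · have ha' := a.isLt
        have hb' := b.isLt
        have hi : ¬ (i' : ℕ) < k := by omega
        have hj : ¬ (j' : ℕ) < k := by omega
        have hi2 : (i' : ℕ) - k < m := by omega
        have hj2 : (j' : ℕ) - k < m := by omega
        have g1 : extFun3 e ψ Fin.elim0 (ψ ⟨0, hm0⟩) ((i' : ℕ)) = ψ ⟨(i' : ℕ) - k, hi2⟩ :=
          extFun3_two hi hi2
        have g2 : extFun3 e ψ Fin.elim0 (ψ ⟨0, hm0⟩) ((j' : ℕ)) = ψ ⟨(j' : ℕ) - k, hj2⟩ :=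
          extFun3_two hj hj2
        have hv1 : (i' : ℕ) - k = (a : ℕ) := by omega
        have e1 : (⟨(i' : ℕ) - k, hi2⟩ : Fin m) = a := Fin.ext hv1
        have hv2 : (j' : ℕ) - k = (b : ℕ) := by omega
        have e2 : (⟨(j' : ℕ) - k, hj2⟩ : Fin m) = b := Fin.ext hv2
        rw [g1, g2, e1, e2]
        exact hψred a b hab
    obtain ⟨hne, hrel⟩ := hadj
    rcases hrel with h | h
    · exact core i j h
    · exact (core j i h).symm

open Finset in
lemma upper_case4 {m n l : ℕ} (hn : 1 ≤ n) (hl : 1 ≤ l) {G : SimpleGraph (Fin m)}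
    (hm : 1 ≤ m)
    (hprop : RProp G (⊤ : SimpleGraph (Fin n)) ((m - 1) * (n - 1) + 1)) :
    RProp (orderedJoin (orderedStar l 1) G) (⊤ : SimpleGraph (Fin n))
      (((l + 1 - 1) + m - 1 - 1) * (n - 1) + 1) := by
  classical
  obtain ⟨k, hk⟩ : ∃ k, k = l - 1 := ⟨_, rfl⟩
  suffices h : ∀ N, N = ((l + 1 - 1) + m - 1 - 1) * (n - 1) + 1 →
      ∀ R : SimpleGraph (Fin N),
        OrderedSubgraph (orderedJoin (orderedStar l 1) G) R ∨
        OrderedSubgraph (⊤ : SimpleGraph (Fin n)) Rᶜ by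
    exact fun R => h _ rfl R
  intro N hN R
  have hNeq : N = (m - 1) * (n - 1) + (k * (n - 1) + 1) := by
    rw [hN, hk]
    have h1 : (l + 1 - 1) + m - 1 - 1 = (m - 1) + (l - 1) := by omega
    rw [h1, add_mul]
    omega
  obtain ⟨W, hW⟩ : ∃ W, W = (univ : Finset (Fin N)).filter
      (fun v => ((univ : Finset (Fin N)).filter (fun w => w < v ∧ R.Adj w v)).card < k) :=
    ⟨_, rfl⟩
  by_cases hWbig : k * (n - 1) + 1 ≤ W.card
  · have hdeg : ∀ v ∈ W, (W.filter (fun w => w < v ∧ R.Adj w v)).card < k := by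
      intro v hv
      rw [hW] at hv
      have hv2 := (mem_filter.mp hv).2
      refine lt_of_le_of_lt (card_le_card ?_) hv2
      rw [hW]
      exact filter_subset_filter _ (filter_subset _ _)
    obtain ⟨T, _, hTcard, hblue⟩ := blue_left R k (n - 1) W hdeg hWbig
    exact Or.inr (clique_emb T (by omega) hblue)
  · obtain ⟨Z, hZ⟩ : ∃ Z, Z = (univ : Finset (Fin N)).filter
        (fun v => ¬ (((univ : Finset (Fin N)).filter
          (fun w => w < v ∧ R.Adj w v)).card < k)) := ⟨_, rfl⟩
    have hZcard : (m - 1) * (n - 1) + 1 ≤ Z.card := by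
      have hWZ := card_filter_add_card_filter_not (s := (univ : Finset (Fin N)))
        (p := fun v : Fin N =>
          ((univ : Finset (Fin N)).filter (fun w => w < v ∧ R.Adj w v)).card < k)
      rw [card_univ, Fintype.card_fin, ← hW, ← hZ] at hWZ
      omega
    obtain ⟨Z', hZ'sub, hZ'card⟩ := exists_subset_card_eq hZcard
    rcases good_subset hprop R Z' hZ'card with ⟨ψ, hψmono, hψmem, hψred⟩ | hblue
    · left
      have hm0 : 0 < m := hm
      have huk : k ≤ ((univ : Finset (Fin N)).filter
          (fun w => w < ψ ⟨0, hm0⟩ ∧ R.Adj w (ψ ⟨0, hm0⟩))).card := by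
        have huZ : ψ ⟨0, hm0⟩ ∈ Z := hZ'sub (hψmem _)
        rw [hZ] at huZ
        have := (mem_filter.mp huZ).2
        omega
      obtain ⟨F, hFsub, hFcard⟩ := exists_subset_card_eq huk
      obtain ⟨e, hemono, hfact⟩ : ∃ e : Fin k → Fin N, StrictMono e ∧
          ∀ t : Fin k, e t < ψ ⟨0, hm0⟩ ∧ R.Adj (e t) (ψ ⟨0, hm0⟩) := by
        refine ⟨F.orderEmbOfFin hFcard, (F.orderEmbOfFin hFcard).strictMono, fun t => ?_⟩
        exact (mem_filter.mp (hFsub (F.orderEmbOfFin_mem hFcard t))).2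
      exact assemble4 hl hk hm0 ψ hψmono hψred e hemono hfact
    · exact Or.inr hblue
/-- Assembly for `G + S_{l,1}` with `l ≥ 2`. -/
lemma assemble2 {N m l : ℕ} (hl : 2 ≤ l) (hm1 : m - 1 < m)
    {R : SimpleGraph (Fin N)} {G : SimpleGraph (Fin m)}
    (ψ : Fin m → Fin N) (hψmono : StrictMono ψ)
    (hψred : ∀ i j, G.Adj i j → R.Adj (ψ i) (ψ j))
    (c : Fin N) (hc1 : ψ ⟨m - 1, hm1⟩ < c) (hc2 : R.Adj (ψ ⟨m - 1, hm1⟩) c)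
    (e : Fin (l - 2) → Fin N) (hemono : StrictMono e)
    (hfact : ∀ t, ψ ⟨m - 1, hm1⟩ < e t ∧ e t < c ∧ R.Adj (e t) c) :
    OrderedSubgraph (orderedJoin G (orderedStar l 1)) R := by
  have hm : 1 ≤ m := by omega
  refine ⟨fun i => extFun3 ψ e (Fin.elim0) c (i : ℕ), ?_, ?_⟩
  · intro i j hij
    dsimp only
    have hij' : (i : ℕ) < (j : ℕ) := hij
    have hjlt := j.isLt
    have hilt := i.isLt
    by_cases hi1 : (i : ℕ) < m
    · rw [extFun3_one hi1]
      by_cases hj1 : (j : ℕ) < m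
      · rw [extFun3_one hj1]
        exact hψmono (show ((⟨(i : ℕ), hi1⟩ : Fin m)) < ⟨(j : ℕ), hj1⟩ from hij')
      · have hle : ψ ⟨(i : ℕ), hi1⟩ ≤ ψ ⟨m - 1, hm1⟩ :=
          hψmono.monotone (by rw [Fin.mk_le_mk]; omega)
        by_cases hj2 : (j : ℕ) - m < l - 2
        · rw [extFun3_two hj1 hj2]
          exact lt_of_le_of_lt hle (hfact _).1
        · rw [extFun3_last hj1 hj2 (by omega)]
          exact lt_of_le_of_lt hle hc1
    · by_cases hi2 : (i : ℕ) - m < l - 2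
      · rw [extFun3_two hi1 hi2]
        by_cases hj2 : (j : ℕ) - m < l - 2
        · rw [extFun3_two (by omega : ¬ (j : ℕ) < m) hj2]
          exact hemono (show ((⟨(i : ℕ) - m, hi2⟩ : Fin (l - 2))) < ⟨(j : ℕ) - m, hj2⟩ by
            rw [Fin.mk_lt_mk]; omega)
        · rw [extFun3_last (by omega : ¬ (j : ℕ) < m) hj2 (by omega)]
          exact (hfact _).2.1
      · -- i is the last position; j can't be beyond it
        exfalso
        omega
  · have core : ∀ i' j' : Fin (m + (l + 1 - 1) - 1),
        ((∃ a b : Fin m, G.Adj a b ∧ (i' : ℕ) = (a : ℕ) ∧ (j' : ℕ) = (b : ℕ)) ∨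
         (∃ a b : Fin (l + 1 - 1), (orderedStar l 1).Adj a b ∧
           (i' : ℕ) = (a : ℕ) + (m - 1) ∧ (j' : ℕ) = (b : ℕ) + (m - 1))) →
        R.Adj (extFun3 ψ e (Fin.elim0) c (i' : ℕ)) (extFun3 ψ e (Fin.elim0) c (j' : ℕ)) := by
      rintro i' j' (⟨a, b, hab, hia, hjb⟩ | ⟨a, b, hab, hia, hjb⟩)
      · have hi : (i' : ℕ) < m := by have := a.isLt; omega
        have hj : (j' : ℕ) < m := by have := b.isLt; omega
        rw [extFun3_one hi, extFun3_one hj]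
        have e1 : (⟨(i' : ℕ), hi⟩ : Fin m) = a := Fin.ext hia
        have e2 : (⟨(j' : ℕ), hj⟩ : Fin m) = b := Fin.ext hjb
        rw [e1, e2]
        exact hψred a b hab
      · rw [orderedStar, SimpleGraph.fromRel_adj] at hab
        have hvalne : (a : ℕ) ≠ (b : ℕ) := fun hc => hab.1 (Fin.ext hc)
        have ha' := a.isLt
        have hb' := b.isLt
        have hi'lt := i'.isLt
        have hj'lt := j'.isLt
        rcases hab.2 with h0 | h0
        · -- `a` is the centre: `i'` is the last position, mapped to `c`
          have hi1 : ¬ (i' : ℕ) < m := by omega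
          have hi2 : ¬ (i' : ℕ) - m < l - 2 := by omega
          have g1 : extFun3 ψ e Fin.elim0 c ((i' : ℕ)) = c :=
            extFun3_last hi1 hi2 (by omega)
          by_cases hb0 : (b : ℕ) = 0
          · have hj1 : (j' : ℕ) < m := by omega
            have g2 : extFun3 ψ e Fin.elim0 c ((j' : ℕ)) = ψ ⟨(j' : ℕ), hj1⟩ :=
              extFun3_one hj1
            have e2 : (⟨(j' : ℕ), hj1⟩ : Fin m) = ⟨m - 1, hm1⟩ :=
              Fin.ext (show (j' : ℕ) = m - 1 by omega)
            rw [g1, g2, e2]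
            exact hc2.symm
          · have hj1 : ¬ (j' : ℕ) < m := by omega
            have hj2 : (j' : ℕ) - m < l - 2 := by omega
            have g2 : extFun3 ψ e Fin.elim0 c ((j' : ℕ)) = e ⟨(j' : ℕ) - m, hj2⟩ :=
              extFun3_two hj1 hj2
            rw [g1, g2]
            exact ((hfact _).2.2).symm
        · -- `b` is the centre: `j'` is the last position, mapped to `c`
          have hj1 : ¬ (j' : ℕ) < m := by omega
          have hj2 : ¬ (j' : ℕ) - m < l - 2 := by omega
          have g2 : extFun3 ψ e Fin.elim0 c ((j' : ℕ)) = c :=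
            extFun3_last hj1 hj2 (by omega)
          by_cases ha0 : (a : ℕ) = 0
          · have hi1 : (i' : ℕ) < m := by omega
            have g1 : extFun3 ψ e Fin.elim0 c ((i' : ℕ)) = ψ ⟨(i' : ℕ), hi1⟩ :=
              extFun3_one hi1
            have e1 : (⟨(i' : ℕ), hi1⟩ : Fin m) = ⟨m - 1, hm1⟩ :=
              Fin.ext (show (i' : ℕ) = m - 1 by omega)
            rw [g1, g2, e1]
            exact hc2
          · have hi1 : ¬ (i' : ℕ) < m := by omega
            have hi2 : (i' : ℕ) - m < l - 2 := by omega
            have g1 : extFun3 ψ e Fin.elim0 c ((i' : ℕ)) = e ⟨(i' : ℕ) - m, hi2⟩ :=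
              extFun3_two hi1 hi2
            rw [g1, g2]
            exact (hfact _).2.2
    intro i j hadj
    rw [orderedJoin, SimpleGraph.fromRel_adj] at hadj
    obtain ⟨hne, hrel⟩ := hadj
    rcases hrel with h | h
    · exact core i j h
    · exact (core j i h).symm

open Finset in
lemma upper_case2 {m n l : ℕ} (hn : 1 ≤ n) (hl : 2 ≤ l) {G : SimpleGraph (Fin m)}
    (hm : 1 ≤ m)
    (hprop : RProp G (⊤ : SimpleGraph (Fin n)) ((m - 1) * (n - 1) + 1)) :
    RProp (orderedJoin G (orderedStar l 1)) (⊤ : SimpleGraph (Fin n))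
      ((m + (l + 1 - 1) - 1 - 1) * (n - 1) + 1) := by
  classical
  obtain ⟨k, hk⟩ : ∃ k, k = l - 1 := ⟨_, rfl⟩
  suffices h : ∀ N, N = (m + (l + 1 - 1) - 1 - 1) * (n - 1) + 1 →
      ∀ R : SimpleGraph (Fin N),
        OrderedSubgraph (orderedJoin G (orderedStar l 1)) R ∨
        OrderedSubgraph (⊤ : SimpleGraph (Fin n)) Rᶜ by
    exact fun R => h _ rfl R
  intro N hN R
  have hNeq : N = (m - 1) * (n - 1) + (k * (n - 1) + 1) := by
    rw [hN, hk]
    have h1 : m + (l + 1 - 1) - 1 - 1 = (m - 1) + (l - 1) := by omega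
    rw [h1, add_mul]
    omega
  -- `P v`: `v` has a red right-neighbour `c` with at least `l-2` red in-neighbours in `(v,c)`
  obtain ⟨W, hW⟩ : ∃ W, W = (univ : Finset (Fin N)).filter
      (fun v => ¬ ∃ c, v < c ∧ R.Adj v c ∧
        l - 2 ≤ ((univ : Finset (Fin N)).filter
          (fun x => v < x ∧ x < c ∧ R.Adj x c)).card) := ⟨_, rfl⟩
  by_cases hWbig : k * (n - 1) + 1 ≤ W.card
  · have hdeg : ∀ v ∈ W, (W.filter (fun w => w < v ∧ R.Adj w v)).card < k := by
      intro v hv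
      by_contra hcon
      push_neg at hcon
      obtain ⟨S, hS⟩ : ∃ S, S = W.filter (fun w => w < v ∧ R.Adj w v) := ⟨_, rfl⟩
      rw [← hS] at hcon
      have hSne : S.Nonempty := card_pos.mp (by omega)
      obtain ⟨v0, hv0min⟩ : ∃ v0, v0 = S.min' hSne := ⟨_, rfl⟩
      have hv0mem : v0 ∈ S := hv0min ▸ S.min'_mem hSne
      have hv0f : v0 ∈ W.filter (fun w => w < v ∧ R.Adj w v) := by rw [← hS]; exact hv0mem
      obtain ⟨hv0W, hv0lt, hv0adj⟩ := mem_filter.mp hv0f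
      rw [hW] at hv0W
      refine (mem_filter.mp hv0W).2 ⟨v, hv0lt, hv0adj, ?_⟩
      have hsub : S.erase v0 ⊆ (univ : Finset (Fin N)).filter
          (fun x => v0 < x ∧ x < v ∧ R.Adj x v) := by
        intro x hx
        obtain ⟨hxne, hxS⟩ := mem_erase.mp hx
        have hxf : x ∈ W.filter (fun w => w < v ∧ R.Adj w v) := by rw [← hS]; exact hxS
        obtain ⟨_, hxlt, hxadj⟩ := mem_filter.mp hxf
        refine mem_filter.mpr ⟨mem_univ x, ?_, hxlt, hxadj⟩
        exact lt_of_le_of_ne (hv0min ▸ S.min'_le x hxS) (Ne.symm hxne)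
      have hcard := card_le_card hsub
      rw [card_erase_of_mem hv0mem] at hcard
      omega
    obtain ⟨T, _, hTcard, hblue⟩ := blue_left R k (n - 1) W hdeg hWbig
    exact Or.inr (clique_emb T (by omega) hblue)
  · obtain ⟨Z, hZ⟩ : ∃ Z, Z = (univ : Finset (Fin N)).filter
        (fun v => ∃ c, v < c ∧ R.Adj v c ∧
          l - 2 ≤ ((univ : Finset (Fin N)).filter
            (fun x => v < x ∧ x < c ∧ R.Adj x c)).card) := ⟨_, rfl⟩
    have hZcard : (m - 1) * (n - 1) + 1 ≤ Z.card := by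
      have hWZ := card_filter_add_card_filter_not (s := (univ : Finset (Fin N)))
        (p := fun v : Fin N => ∃ c, v < c ∧ R.Adj v c ∧
          l - 2 ≤ ((univ : Finset (Fin N)).filter
            (fun x => v < x ∧ x < c ∧ R.Adj x c)).card)
      rw [card_univ, Fintype.card_fin, ← hW, ← hZ] at hWZ
      omega
    obtain ⟨Z', hZ'sub, hZ'card⟩ := exists_subset_card_eq hZcard
    rcases good_subset hprop R Z' hZ'card with ⟨ψ, hψmono, hψmem, hψred⟩ | hblue
    · left
      have hm1 : m - 1 < m := by omega
      have huZ : ψ ⟨m - 1, hm1⟩ ∈ Z := hZ'sub (hψmem _)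
      rw [hZ] at huZ
      obtain ⟨c, hc1, hc2, hXcard⟩ := (mem_filter.mp huZ).2
      obtain ⟨X', hX'sub, hX'card⟩ := exists_subset_card_eq hXcard
      obtain ⟨e, hemono, hfact⟩ : ∃ e : Fin (l - 2) → Fin N, StrictMono e ∧
          ∀ t, ψ ⟨m - 1, hm1⟩ < e t ∧ e t < c ∧ R.Adj (e t) c := by
        refine ⟨X'.orderEmbOfFin hX'card, (X'.orderEmbOfFin hX'card).strictMono, fun t => ?_⟩
        exact (mem_filter.mp (hX'sub (X'.orderEmbOfFin_mem hX'card t))).2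
      exact assemble2 hl hm1 ψ hψmono hψred c hc1 hc2 e hemono hfact
    · exact Or.inr hblue
/-- Assembly for `S_{1,r} + G` with `r ≥ 2`. -/
lemma assemble3 {N m r : ℕ} (hr : 2 ≤ r) (hm0 : 0 < m)
    {R : SimpleGraph (Fin N)} {G : SimpleGraph (Fin m)}
    (ψ : Fin m → Fin N) (hψmono : StrictMono ψ)
    (hψred : ∀ i j, G.Adj i j → R.Adj (ψ i) (ψ j))
    (c : Fin N) (hc1 : c < ψ ⟨0, hm0⟩) (hc2 : R.Adj c (ψ ⟨0, hm0⟩))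
    (e : Fin (r - 2) → Fin N) (hemono : StrictMono e)
    (hfact : ∀ t, c < e t ∧ e t < ψ ⟨0, hm0⟩ ∧ R.Adj c (e t)) :
    OrderedSubgraph (orderedJoin (orderedStar 1 r) G) R := by
  refine ⟨fun i => extFun3 (fun _ : Fin 1 => c) e ψ c (i : ℕ), ?_, ?_⟩
  · intro i j hij
    dsimp only
    have hij' : (i : ℕ) < (j : ℕ) := hij
    have hjlt := j.isLt
    have hilt := i.isLt
    by_cases hi1 : (i : ℕ) < 1
    · have g1 : extFun3 (fun _ : Fin 1 => c) e ψ c ((i : ℕ)) = c := extFun3_one hi1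
      rw [g1]
      by_cases hj2 : (j : ℕ) - 1 < r - 2
      · rw [extFun3_two (by omega : ¬ (j : ℕ) < 1) hj2]
        exact (hfact _).1
      · rw [extFun3_three (by omega : ¬ (j : ℕ) < 1) hj2 (by omega : (j : ℕ) - 1 - (r - 2) < m)]
        exact lt_of_lt_of_le hc1 (hψmono.monotone (by rw [Fin.mk_le_mk]; omega))
    · by_cases hi2 : (i : ℕ) - 1 < r - 2
      · rw [extFun3_two hi1 hi2]
        by_cases hj2 : (j : ℕ) - 1 < r - 2
        · rw [extFun3_two (by omega : ¬ (j : ℕ) < 1) hj2]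
          exact hemono (show ((⟨(i : ℕ) - 1, hi2⟩ : Fin (r - 2))) < ⟨(j : ℕ) - 1, hj2⟩ by
            rw [Fin.mk_lt_mk]; omega)
        · rw [extFun3_three (by omega : ¬ (j : ℕ) < 1) hj2 (by omega : (j : ℕ) - 1 - (r - 2) < m)]
          exact lt_of_lt_of_le (hfact _).2.1 (hψmono.monotone (by rw [Fin.mk_le_mk]; omega))
      · rw [extFun3_three hi1 hi2 (by omega : (i : ℕ) - 1 - (r - 2) < m),
          extFun3_three (by omega : ¬ (j : ℕ) < 1) (by omega : ¬ (j : ℕ) - 1 < r - 2)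
            (by omega : (j : ℕ) - 1 - (r - 2) < m)]
        exact hψmono (show ((⟨(i : ℕ) - 1 - (r - 2), _⟩ : Fin m)) < ⟨(j : ℕ) - 1 - (r - 2), _⟩ by
          rw [Fin.mk_lt_mk]; omega)
  · have core : ∀ i' j' : Fin ((1 + r - 1) + m - 1),
        ((∃ a b : Fin (1 + r - 1), (orderedStar 1 r).Adj a b ∧
           (i' : ℕ) = (a : ℕ) ∧ (j' : ℕ) = (b : ℕ)) ∨
         (∃ a b : Fin m, G.Adj a b ∧
           (i' : ℕ) = (a : ℕ) + (1 + r - 1 - 1) ∧ (j' : ℕ) = (b : ℕ) + (1 + r - 1 - 1))) →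
        R.Adj (extFun3 (fun _ : Fin 1 => c) e ψ c (i' : ℕ))
          (extFun3 (fun _ : Fin 1 => c) e ψ c (j' : ℕ)) := by
      rintro i' j' (⟨a, b, hab, hia, hjb⟩ | ⟨a, b, hab, hia, hjb⟩)
      · rw [orderedStar, SimpleGraph.fromRel_adj] at hab
        have hvalne : (a : ℕ) ≠ (b : ℕ) := fun hc => hab.1 (Fin.ext hc)
        have ha' := a.isLt
        have hb' := b.isLt
        have hi'lt := i'.isLt
        have hj'lt := j'.isLt
        rcases hab.2 with h0 | h0
        · -- `a` is the centre (position 0)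
          have hi1 : (i' : ℕ) < 1 := by omega
          have g1 : extFun3 (fun _ : Fin 1 => c) e ψ c ((i' : ℕ)) = c := extFun3_one hi1
          by_cases hj2 : (j' : ℕ) - 1 < r - 2
          · have g2 : extFun3 (fun _ : Fin 1 => c) e ψ c ((j' : ℕ)) =
                e ⟨(j' : ℕ) - 1, hj2⟩ := extFun3_two (by omega) hj2
            rw [g1, g2]
            exact (hfact _).2.2
          · have hj3 : (j' : ℕ) - 1 - (r - 2) < m := by omega
            have g2 : extFun3 (fun _ : Fin 1 => c) e ψ c ((j' : ℕ)) =
                ψ ⟨(j' : ℕ) - 1 - (r - 2), hj3⟩ := extFun3_three (by omega) hj2 hj3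
            have e2 : (⟨(j' : ℕ) - 1 - (r - 2), hj3⟩ : Fin m) = ⟨0, hm0⟩ :=
              Fin.ext (show (j' : ℕ) - 1 - (r - 2) = 0 by omega)
            rw [g1, g2, e2]
            exact hc2
        · -- `b` is the centre (position 0)
          have hj1 : (j' : ℕ) < 1 := by omega
          have g2 : extFun3 (fun _ : Fin 1 => c) e ψ c ((j' : ℕ)) = c := extFun3_one hj1
          by_cases hi2 : (i' : ℕ) - 1 < r - 2
          · have g1 : extFun3 (fun _ : Fin 1 => c) e ψ c ((i' : ℕ)) =
                e ⟨(i' : ℕ) - 1, hi2⟩ := extFun3_two (by omega) hi2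
            rw [g1, g2]
            exact ((hfact _).2.2).symm
          · have hi3 : (i' : ℕ) - 1 - (r - 2) < m := by omega
            have g1 : extFun3 (fun _ : Fin 1 => c) e ψ c ((i' : ℕ)) =
                ψ ⟨(i' : ℕ) - 1 - (r - 2), hi3⟩ := extFun3_three (by omega) hi2 hi3
            have e1 : (⟨(i' : ℕ) - 1 - (r - 2), hi3⟩ : Fin m) = ⟨0, hm0⟩ :=
              Fin.ext (show (i' : ℕ) - 1 - (r - 2) = 0 by omega)
            rw [g1, g2, e1]
            exact hc2.symm
      · have ha' := a.isLt
        have hb' := b.isLt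
        have hi3 : (i' : ℕ) - 1 - (r - 2) < m := by omega
        have hj3 : (j' : ℕ) - 1 - (r - 2) < m := by omega
        have g1 : extFun3 (fun _ : Fin 1 => c) e ψ c ((i' : ℕ)) =
            ψ ⟨(i' : ℕ) - 1 - (r - 2), hi3⟩ := extFun3_three (by omega) (by omega) hi3
        have g2 : extFun3 (fun _ : Fin 1 => c) e ψ c ((j' : ℕ)) =
            ψ ⟨(j' : ℕ) - 1 - (r - 2), hj3⟩ := extFun3_three (by omega) (by omega) hj3
        have hv1 : (i' : ℕ) - 1 - (r - 2) = (a : ℕ) := by omega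
        have hv2 : (j' : ℕ) - 1 - (r - 2) = (b : ℕ) := by omega
        have e1 : (⟨(i' : ℕ) - 1 - (r - 2), hi3⟩ : Fin m) = a := Fin.ext hv1
        have e2 : (⟨(j' : ℕ) - 1 - (r - 2), hj3⟩ : Fin m) = b := Fin.ext hv2
        rw [g1, g2, e1, e2]
        exact hψred a b hab
    intro i j hadj
    rw [orderedJoin, SimpleGraph.fromRel_adj] at hadj
    obtain ⟨hne, hrel⟩ := hadj
    rcases hrel with h | h
    · exact core i j h
    · exact (core j i h).symm

open Finset in
lemma upper_case3 {m n r : ℕ} (hn : 1 ≤ n) (hr : 2 ≤ r) {G : SimpleGraph (Fin m)}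
    (hm : 1 ≤ m)
    (hprop : RProp G (⊤ : SimpleGraph (Fin n)) ((m - 1) * (n - 1) + 1)) :
    RProp (orderedJoin (orderedStar 1 r) G) (⊤ : SimpleGraph (Fin n))
      (((1 + r - 1) + m - 1 - 1) * (n - 1) + 1) := by
  classical
  obtain ⟨k, hk⟩ : ∃ k, k = r - 1 := ⟨_, rfl⟩
  suffices h : ∀ N, N = ((1 + r - 1) + m - 1 - 1) * (n - 1) + 1 →
      ∀ R : SimpleGraph (Fin N),
        OrderedSubgraph (orderedJoin (orderedStar 1 r) G) R ∨
        OrderedSubgraph (⊤ : SimpleGraph (Fin n)) Rᶜ by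
    exact fun R => h _ rfl R
  intro N hN R
  have hNeq : N = (m - 1) * (n - 1) + (k * (n - 1) + 1) := by
    rw [hN, hk]
    have h1 : (1 + r - 1) + m - 1 - 1 = (m - 1) + (r - 1) := by omega
    rw [h1, add_mul]
    omega
  -- `P v`: `v` has a red left-neighbour `c` with at least `r-2` red out-neighbours in `(c,v)`
  obtain ⟨W, hW⟩ : ∃ W, W = (univ : Finset (Fin N)).filter
      (fun v => ¬ ∃ c, c < v ∧ R.Adj c v ∧
        r - 2 ≤ ((univ : Finset (Fin N)).filter
          (fun x => c < x ∧ x < v ∧ R.Adj c x)).card) := ⟨_, rfl⟩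
  by_cases hWbig : k * (n - 1) + 1 ≤ W.card
  · have hdeg : ∀ v ∈ W, (W.filter (fun w => v < w ∧ R.Adj v w)).card < k := by
      intro v hv
      by_contra hcon
      push_neg at hcon
      obtain ⟨S, hS⟩ : ∃ S, S = W.filter (fun w => v < w ∧ R.Adj v w) := ⟨_, rfl⟩
      rw [← hS] at hcon
      have hSne : S.Nonempty := card_pos.mp (by omega)
      obtain ⟨v0, hv0max⟩ : ∃ v0, v0 = S.max' hSne := ⟨_, rfl⟩
      have hv0mem : v0 ∈ S := hv0max ▸ S.max'_mem hSne
      have hv0f : v0 ∈ W.filter (fun w => v < w ∧ R.Adj v w) := by rw [← hS]; exact hv0mem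
      obtain ⟨hv0W, hv0lt, hv0adj⟩ := mem_filter.mp hv0f
      rw [hW] at hv0W
      refine (mem_filter.mp hv0W).2 ⟨v, hv0lt, hv0adj, ?_⟩
      have hsub : S.erase v0 ⊆ (univ : Finset (Fin N)).filter
          (fun x => v < x ∧ x < v0 ∧ R.Adj v x) := by
        intro x hx
        obtain ⟨hxne, hxS⟩ := mem_erase.mp hx
        have hxf : x ∈ W.filter (fun w => v < w ∧ R.Adj v w) := by rw [← hS]; exact hxS
        obtain ⟨_, hxlt, hxadj⟩ := mem_filter.mp hxf
        refine mem_filter.mpr ⟨mem_univ x, hxlt, ?_, hxadj⟩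
        exact lt_of_le_of_ne (hv0max ▸ S.le_max' x hxS) hxne
      have hcard := card_le_card hsub
      rw [card_erase_of_mem hv0mem] at hcard
      omega
    obtain ⟨T, _, hTcard, hblue⟩ := blue_right R k (n - 1) W hdeg hWbig
    exact Or.inr (clique_emb T (by omega) hblue)
  · obtain ⟨Z, hZ⟩ : ∃ Z, Z = (univ : Finset (Fin N)).filter
        (fun v => ∃ c, c < v ∧ R.Adj c v ∧
          r - 2 ≤ ((univ : Finset (Fin N)).filter
            (fun x => c < x ∧ x < v ∧ R.Adj c x)).card) := ⟨_, rfl⟩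
    have hZcard : (m - 1) * (n - 1) + 1 ≤ Z.card := by
      have hWZ := card_filter_add_card_filter_not (s := (univ : Finset (Fin N)))
        (p := fun v : Fin N => ∃ c, c < v ∧ R.Adj c v ∧
          r - 2 ≤ ((univ : Finset (Fin N)).filter
            (fun x => c < x ∧ x < v ∧ R.Adj c x)).card)
      rw [card_univ, Fintype.card_fin, ← hW, ← hZ] at hWZ
      omega
    obtain ⟨Z', hZ'sub, hZ'card⟩ := exists_subset_card_eq hZcard
    rcases good_subset hprop R Z' hZ'card with ⟨ψ, hψmono, hψmem, hψred⟩ | hblue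
    · left
      have hm0 : 0 < m := hm
      have huZ : ψ ⟨0, hm0⟩ ∈ Z := hZ'sub (hψmem _)
      rw [hZ] at huZ
      obtain ⟨c, hc1, hc2, hXcard⟩ := (mem_filter.mp huZ).2
      obtain ⟨X', hX'sub, hX'card⟩ := exists_subset_card_eq hXcard
      obtain ⟨e, hemono, hfact⟩ : ∃ e : Fin (r - 2) → Fin N, StrictMono e ∧
          ∀ t, c < e t ∧ e t < ψ ⟨0, hm0⟩ ∧ R.Adj c (e t) := by
        refine ⟨X'.orderEmbOfFin hX'card, (X'.orderEmbOfFin hX'card).strictMono, fun t => ?_⟩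
        exact (mem_filter.mp (hX'sub (X'.orderEmbOfFin_mem hX'card t))).2
      exact assemble3 hr hm0 ψ hψmono hψred c hc1 hc2 e hemono hfact
    · exact Or.inr hblue
lemma ngood_of {M n : ℕ} (G' : SimpleGraph (Fin M)) (hconn : G'.Connected) (hn : 1 ≤ n)
    (hupper : RProp G' (⊤ : SimpleGraph (Fin n)) ((M - 1) * (n - 1) + 1)) :
    IsNGood n G' := by
  refine ⟨hconn, le_antisymm (Nat.sInf_le hupper) ?_⟩
  exact le_csInf ⟨_, hupper⟩ (fun x hx => lower_bound G' hconn hn x hx)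

lemma ngood_case1 {m n r : ℕ} (hn : 1 ≤ n) (hr : 1 ≤ r) {G : SimpleGraph (Fin m)}
    (hG : G.Connected) (hgood : IsNGood n G) :
    IsNGood n (orderedJoin G (orderedStar 1 r)) := by
  have hm : 1 ≤ m := hG.nonempty.elim fun v => v.pos
  have hconn := join_connected G (orderedStar 1 r) hG (star_connected 1 r le_rfl hr)
  exact ngood_of _ hconn hn (upper_case1 hn hr hm (rprop_of_eq hgood.2 (by omega)))

lemma ngood_case2 {m n l : ℕ} (hn : 1 ≤ n) (hl : 1 ≤ l) {G : SimpleGraph (Fin m)}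
    (hG : G.Connected) (hgood : IsNGood n G) :
    IsNGood n (orderedJoin G (orderedStar l 1)) := by
  rcases eq_or_lt_of_le hl with h1 | h2
  · subst h1
    exact ngood_case1 hn le_rfl hG hgood
  · have hm : 1 ≤ m := hG.nonempty.elim fun v => v.pos
    have hconn := join_connected G (orderedStar l 1) hG (star_connected l 1 (by omega) le_rfl)
    exact ngood_of _ hconn hn (upper_case2 hn h2 hm (rprop_of_eq hgood.2 (by omega)))

lemma ngood_case4 {m n l : ℕ} (hn : 1 ≤ n) (hl : 1 ≤ l) {G : SimpleGraph (Fin m)}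
    (hG : G.Connected) (hgood : IsNGood n G) :
    IsNGood n (orderedJoin (orderedStar l 1) G) := by
  have hm : 1 ≤ m := hG.nonempty.elim fun v => v.pos
  have hconn := join_connected (orderedStar l 1) G (star_connected l 1 hl le_rfl) hG
  exact ngood_of _ hconn hn (upper_case4 hn hl hm (rprop_of_eq hgood.2 (by omega)))


lemma ngood_case3 {m n r : ℕ} (hn : 1 ≤ n) (hr : 1 ≤ r) {G : SimpleGraph (Fin m)}
    (hG : G.Connected) (hgood : IsNGood n G) :
    IsNGood n (orderedJoin (orderedStar 1 r) G) := by
  rcases eq_or_lt_of_le hr with h1 | h2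
  · subst h1
    exact ngood_case4 hn le_rfl hG hgood
  · have hm : 1 ≤ m := hG.nonempty.elim fun v => v.pos
    have hconn := join_connected (orderedStar 1 r) G (star_connected 1 r le_rfl (by omega)) hG
    exact ngood_of _ hconn hn (upper_case3 hn h2 hm (rprop_of_eq hgood.2 (by omega)))

/-- For all positive integers `n`, `r`, `l`: if a connected ordered graph `G`
is `n`-good, then `G + S_{1,r}`, `G + S_{l,1}`, `S_{l,1} + G` and `S_{1,r} + G` are
`n`-good. -/
theorem stmt_9 (n r l : ℕ) (hn : 1 ≤ n) (hr : 1 ≤ r) (hl : 1 ≤ l)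
    (m : ℕ) (G : SimpleGraph (Fin m)) (hG : G.Connected) (hgood : IsNGood n G) :
    IsNGood n (orderedJoin G (orderedStar 1 r)) ∧
    IsNGood n (orderedJoin G (orderedStar l 1)) ∧
    IsNGood n (orderedJoin (orderedStar l 1) G) ∧
    IsNGood n (orderedJoin (orderedStar 1 r) G) :=
  ⟨ngood_case1 hn hr hG hgood, ngood_case2 hn hl hG hgood,
   ngood_case4 hn hl hG hgood, ngood_case3 hn hr hG hgood⟩
end

section
/- Every monotone caterpillar graph is good; that is, if G is a connected ordered graph on m vertices that is a join of one-sided ordered stars, then r_<(G, K_n) = (m−1)(n−1) + 1 for every positive integer n. -/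

def HasCopy {m : ℕ} (G : SimpleGraph (Fin m)) {α : Type} [Preorder α]
    (R : SimpleGraph α) : Prop :=
  ∃ φ : Fin m → α, StrictMono φ ∧ ∀ i j : Fin m, G.Adj i j → R.Adj (φ i) (φ j)

def ext1 {α : Type} {p q : ℕ} (f : Fin p → α) (g : Fin q → α) (i : Fin (p + q)) : α :=
  if h : (i : ℕ) < p then f ⟨i, h⟩ else g ⟨(i : ℕ) - p, by omega⟩

lemma ext1_apply_left {α : Type} {p q : ℕ} (f : Fin p → α) (g : Fin q → α)
    (i : Fin (p + q)) (h : (i : ℕ) < p) : ext1 f g i = f ⟨i, h⟩ := dif_pos h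

lemma ext1_apply_right {α : Type} {p q : ℕ} (f : Fin p → α) (g : Fin q → α)
    (i : Fin (p + q)) (h : ¬ (i : ℕ) < p) :
    ext1 f g i = g ⟨(i : ℕ) - p, by omega⟩ := dif_neg h

lemma ext1_strictMono {α : Type} [Preorder α] {p q : ℕ} {f : Fin p → α} {g : Fin q → α}
    (hf : StrictMono f) (hg : StrictMono g) (hfg : ∀ i j, f i < g j) :
    StrictMono (ext1 f g) := by
  intro i j hij
  have hij' : (i : ℕ) < (j : ℕ) := hij
  unfold ext1
  by_cases hi : (i : ℕ) < p <;> by_cases hj : (j : ℕ) < p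
  · simp only [dif_pos hi, dif_pos hj]; exact hf hij'
  · simp only [dif_pos hi, dif_neg hj]; exact hfg _ _
  · omega
  · simp only [dif_neg hi, dif_neg hj]; exact hg (by simp [Fin.lt_def]; omega)

lemma orderedStar_adj {l r : ℕ} (i j : Fin (l + r - 1)) :
    (orderedStar l r).Adj i j ↔ i ≠ j ∧ ((i : ℕ) = l - 1 ∨ (j : ℕ) = l - 1) :=
  SimpleGraph.fromRel_adj _ _ _

lemma orderedJoin_adj {m k : ℕ} (G : SimpleGraph (Fin m)) (H : SimpleGraph (Fin k))
    (i j : Fin (m + k - 1)) :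
    (orderedJoin G H).Adj i j ↔ i ≠ j ∧
      (((∃ a b : Fin m, G.Adj a b ∧ (i : ℕ) = (a : ℕ) ∧ (j : ℕ) = (b : ℕ)) ∨
        (∃ a b : Fin k, H.Adj a b ∧ (i : ℕ) = (a : ℕ) + (m - 1) ∧ (j : ℕ) = (b : ℕ) + (m - 1))) ∨
       ((∃ a b : Fin m, G.Adj a b ∧ (j : ℕ) = (a : ℕ) ∧ (i : ℕ) = (b : ℕ)) ∨
        (∃ a b : Fin k, H.Adj a b ∧ (j : ℕ) = (a : ℕ) + (m - 1) ∧ (i : ℕ) = (b : ℕ) + (m - 1)))) :=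
  SimpleGraph.fromRel_adj _ _ _

lemma strictMono_cast {p q : ℕ} (e : p = q) : StrictMono (Fin.cast e) :=
  fun _ _ hab => hab

/-- build a copy of `orderedStar 1 r` from a center and `r - 1` larger neighbors -/
lemma copy_starR {r : ℕ} (hr : 1 ≤ r) {α : Type} [LinearOrder α] (R : SimpleGraph α) (v : α)
    (t : Finset α) (ht : t.card = (1 + r - 1) - 1)
    (htsub : ∀ u ∈ t, R.Adj v u ∧ v < u) : HasCopy (orderedStar 1 r) R := by
  have e : 1 + r - 1 = 1 + ((1 + r - 1) - 1) := by omega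
  refine ⟨fun i => ext1 (fun _ : Fin 1 => v) (fun i => t.orderEmbOfFin ht i) (Fin.cast e i),
    ?_, ?_⟩
  · exact (ext1_strictMono (Subsingleton.strictMono _)
      (fun i j hij => (t.orderEmbOfFin ht).strictMono hij)
      (fun i j => (htsub _ (t.orderEmbOfFin_mem ht j)).2)).comp (strictMono_cast e)
  · have key : ∀ x y : Fin (1 + r - 1), x ≠ y → (x : ℕ) = 1 - 1 →
        R.Adj (ext1 (fun _ : Fin 1 => v) (fun i => t.orderEmbOfFin ht i) (Fin.cast e x))
          (ext1 (fun _ : Fin 1 => v) (fun i => t.orderEmbOfFin ht i) (Fin.cast e y)) := by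
      intro x y hne hx
      have hx0 : (x : ℕ) = 0 := by omega
      have hy0 : (y : ℕ) ≠ 0 := fun h => hne (Fin.ext (by omega))
      have hylt : (y : ℕ) < 1 + r - 1 := y.isLt
      have h1 : ext1 (fun _ : Fin 1 => v) (fun i => t.orderEmbOfFin ht i) (Fin.cast e x) = v :=
        ext1_apply_left _ _ _ (show ((Fin.cast e x : Fin _) : ℕ) < 1 by simpa [hx0])
      have h2 : ext1 (fun _ : Fin 1 => v) (fun i => t.orderEmbOfFin ht i) (Fin.cast e y)
          = t.orderEmbOfFin ht ⟨(y : ℕ) - 1, by omega⟩ :=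
        ext1_apply_right _ _ _ (show ¬ ((Fin.cast e y : Fin _) : ℕ) < 1 by simp; omega)
      rw [h1, h2]
      exact (htsub _ (t.orderEmbOfFin_mem ht _)).1
    intro i j hadj
    rw [orderedStar_adj] at hadj
    rcases hadj.2 with h | h
    · exact key i j hadj.1 h
    · exact (key j i hadj.1.symm h).symm

/-- build a copy of `orderedStar l 1` from a center and `l - 1` smaller neighbors -/
lemma copy_starL {l : ℕ} (hl : 1 ≤ l) {α : Type} [LinearOrder α] (R : SimpleGraph α) (v : α)
    (t : Finset α) (ht : t.card = (l + 1 - 1) - 1)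
    (htsub : ∀ u ∈ t, R.Adj v u ∧ u < v) : HasCopy (orderedStar l 1) R := by
  have e : l + 1 - 1 = ((l + 1 - 1) - 1) + 1 := by omega
  refine ⟨fun i => ext1 (fun i => t.orderEmbOfFin ht i) (fun _ : Fin 1 => v) (Fin.cast e i),
    ?_, ?_⟩
  · exact (ext1_strictMono (fun i j hij => (t.orderEmbOfFin ht).strictMono hij)
      (Subsingleton.strictMono _)
      (fun i j => (htsub _ (t.orderEmbOfFin_mem ht i)).2)).comp (strictMono_cast e)
  · have key : ∀ x y : Fin (l + 1 - 1), x ≠ y → (x : ℕ) = l - 1 →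
        R.Adj (ext1 (fun i => t.orderEmbOfFin ht i) (fun _ : Fin 1 => v) (Fin.cast e x))
          (ext1 (fun i => t.orderEmbOfFin ht i) (fun _ : Fin 1 => v) (Fin.cast e y)) := by
      intro x y hne hx
      have hxlt : (x : ℕ) < l + 1 - 1 := x.isLt
      have hylt : (y : ℕ) < l + 1 - 1 := y.isLt
      have hyv : (y : ℕ) < (l + 1 - 1) - 1 := by
        have : (y : ℕ) ≠ l - 1 := fun h => hne (Fin.ext (by omega))
        omega
      have h1 : ext1 (fun i => t.orderEmbOfFin ht i) (fun _ : Fin 1 => v) (Fin.cast e x) = v :=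
        ext1_apply_right _ _ _ (show ¬ ((Fin.cast e x : Fin _) : ℕ) < (l + 1 - 1) - 1 by
          simp; omega)
      have h2 : ext1 (fun i => t.orderEmbOfFin ht i) (fun _ : Fin 1 => v) (Fin.cast e y)
          = t.orderEmbOfFin ht ⟨(y : ℕ), hyv⟩ :=
        ext1_apply_left _ _ _ (show ((Fin.cast e y : Fin _) : ℕ) < (l + 1 - 1) - 1 by simpa)
      rw [h1, h2]
      exact (htsub _ (t.orderEmbOfFin_mem ht _)).1
    intro i j hadj
    rw [orderedStar_adj] at hadj
    rcases hadj.2 with h | h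
    · exact key i j hadj.1 h
    · exact (key j i hadj.1.symm h).symm

/-- extend a copy of `G` by a right star -/
lemma copy_joinR {m r : ℕ} (hm : 1 ≤ m) (hr : 1 ≤ r) {α : Type} [LinearOrder α]
    (R : SimpleGraph α) {G : SimpleGraph (Fin m)} (ψ : Fin m → α) (hψm : StrictMono ψ)
    (hψh : ∀ i j, G.Adj i j → R.Adj (ψ i) (ψ j))
    (t : Finset α) (ht : t.card = r - 1)
    (htsub : ∀ u ∈ t, R.Adj (ψ ⟨m - 1, by omega⟩) u ∧ ψ ⟨m - 1, by omega⟩ < u) :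
    HasCopy (orderedJoin G (orderedStar 1 r)) R := by
  have e : m + (1 + r - 1) - 1 = m + (r - 1) := by omega
  refine ⟨fun i => ext1 ψ (fun i => t.orderEmbOfFin ht i) (Fin.cast e i), ?_, ?_⟩
  · refine (ext1_strictMono hψm (fun i j hij => (t.orderEmbOfFin ht).strictMono hij)
      (fun i j => ?_)).comp (strictMono_cast e)
    exact lt_of_le_of_lt
      (hψm.monotone (show i ≤ ⟨m - 1, by omega⟩ from by
        rw [Fin.le_def]; have := i.isLt; simp; omega))
      ((htsub _ (t.orderEmbOfFin_mem ht j)).2)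
  · have key : ∀ x y : Fin (m + (1 + r - 1) - 1),
        ((∃ a b : Fin m, G.Adj a b ∧ (x : ℕ) = (a : ℕ) ∧ (y : ℕ) = (b : ℕ)) ∨
         (∃ a b : Fin (1 + r - 1), (orderedStar 1 r).Adj a b ∧
            (x : ℕ) = (a : ℕ) + (m - 1) ∧ (y : ℕ) = (b : ℕ) + (m - 1))) →
        R.Adj (ext1 ψ (fun i => t.orderEmbOfFin ht i) (Fin.cast e x))
          (ext1 ψ (fun i => t.orderEmbOfFin ht i) (Fin.cast e y)) := by
      rintro x y (⟨a, b, hab, hxa, hyb⟩ | ⟨a, b, hab, hxa, hyb⟩)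
      · have h1 : ext1 ψ (fun i => t.orderEmbOfFin ht i) (Fin.cast e x) = ψ a := by
          rw [ext1_apply_left _ _ _ (show ((Fin.cast e x : Fin _) : ℕ) < m from by
            simp [hxa])]
          exact congrArg ψ (Fin.ext (by simp [hxa]))
        have h2 : ext1 ψ (fun i => t.orderEmbOfFin ht i) (Fin.cast e y) = ψ b := by
          rw [ext1_apply_left _ _ _ (show ((Fin.cast e y : Fin _) : ℕ) < m from by
            simp [hyb])]
          exact congrArg ψ (Fin.ext (by simp [hyb]))
        rw [h1, h2]
        exact hψh a b hab
      · rw [orderedStar_adj] at hab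
        have halt : (a : ℕ) < 1 + r - 1 := a.isLt
        have hblt : (b : ℕ) < 1 + r - 1 := b.isLt
        have hxlt : (x : ℕ) < m + (1 + r - 1) - 1 := x.isLt
        have hylt : (y : ℕ) < m + (1 + r - 1) - 1 := y.isLt
        rcases hab.2 with hc | hc
        · have ha0 : (a : ℕ) = 0 := by omega
          have hb0 : (b : ℕ) ≠ 0 := fun h => hab.1 (Fin.ext (by omega))
          have h1 : ext1 ψ (fun i => t.orderEmbOfFin ht i) (Fin.cast e x)
              = ψ ⟨m - 1, by omega⟩ := by
            rw [ext1_apply_left _ _ _ (show ((Fin.cast e x : Fin _) : ℕ) < m from by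
              simp; omega)]
            exact congrArg ψ (Fin.ext (by simp; omega))
          have h2 : ext1 ψ (fun i => t.orderEmbOfFin ht i) (Fin.cast e y)
              = t.orderEmbOfFin ht ⟨(y : ℕ) - m, by omega⟩ := by
            rw [ext1_apply_right _ _ _ (show ¬ ((Fin.cast e y : Fin _) : ℕ) < m from by
              simp; omega)]
            rfl
          rw [h1, h2]
          exact (htsub _ (t.orderEmbOfFin_mem ht _)).1
        · have hb0 : (b : ℕ) = 0 := by omega
          have ha0 : (a : ℕ) ≠ 0 := fun h => hab.1 (Fin.ext (by omega))
          have h2 : ext1 ψ (fun i => t.orderEmbOfFin ht i) (Fin.cast e y)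
              = ψ ⟨m - 1, by omega⟩ := by
            rw [ext1_apply_left _ _ _ (show ((Fin.cast e y : Fin _) : ℕ) < m from by
              simp; omega)]
            exact congrArg ψ (Fin.ext (by simp; omega))
          have h1 : ext1 ψ (fun i => t.orderEmbOfFin ht i) (Fin.cast e x)
              = t.orderEmbOfFin ht ⟨(x : ℕ) - m, by omega⟩ := by
            rw [ext1_apply_right _ _ _ (show ¬ ((Fin.cast e x : Fin _) : ℕ) < m from by
              simp; omega)]
            rfl
          rw [h1, h2]
          exact ((htsub _ (t.orderEmbOfFin_mem ht _)).1).symm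
    intro i j hadj
    rw [orderedJoin_adj] at hadj
    rcases hadj.2 with h | h
    · exact key i j h
    · exact (key j i h).symm

/-- extend a copy of `G` by a left star -/
lemma copy_joinL {m l : ℕ} (hm : 1 ≤ m) (hl : 2 ≤ l) {α : Type} [LinearOrder α]
    (R : SimpleGraph α) {G : SimpleGraph (Fin m)} (ψ : Fin m → α) (hψm : StrictMono ψ)
    (hψh : ∀ i j, G.Adj i j → R.Adj (ψ i) (ψ j)) (v : α)
    (hadjv : R.Adj (ψ ⟨m - 1, by omega⟩) v) (hltv : ψ ⟨m - 1, by omega⟩ < v)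
    (t : Finset α) (ht : t.card = l - 2)
    (htsub : ∀ u ∈ t, R.Adj v u ∧ ψ ⟨m - 1, by omega⟩ < u ∧ u < v) :
    HasCopy (orderedJoin G (orderedStar l 1)) R := by
  have e : m + (l + 1 - 1) - 1 = m + ((l - 2) + 1) := by omega
  set g : Fin ((l - 2) + 1) → α :=
    ext1 (fun i => t.orderEmbOfFin ht i) (fun _ : Fin 1 => v) with hg
  have hgw : ∀ j, ψ ⟨m - 1, by omega⟩ < g j := by
    intro j
    by_cases hj : (j : ℕ) < l - 2
    · rw [hg, ext1_apply_left _ _ _ hj]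
      exact (htsub _ (t.orderEmbOfFin_mem ht _)).2.1
    · rw [hg, ext1_apply_right _ _ _ hj]
      exact hltv
  have hgv : ∀ j : Fin ((l - 2) + 1), (j : ℕ) = l - 2 → g j = v := by
    intro j hj
    rw [hg, ext1_apply_right _ _ _ (by omega)]
  have hgt : ∀ j : Fin ((l - 2) + 1), (hj : (j : ℕ) < l - 2) →
      g j = t.orderEmbOfFin ht ⟨(j : ℕ), hj⟩ := by
    intro j hj
    rw [hg, ext1_apply_left _ _ _ hj]
  refine ⟨fun i => ext1 ψ g (Fin.cast e i), ?_, ?_⟩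
  · refine (ext1_strictMono hψm ?_ (fun i j => ?_)).comp (strictMono_cast e)
    · refine ext1_strictMono (fun i j hij => (t.orderEmbOfFin ht).strictMono hij)
        (Subsingleton.strictMono _) (fun i j => (htsub _ (t.orderEmbOfFin_mem ht i)).2.2)
    · exact lt_of_le_of_lt
        (hψm.monotone (show i ≤ ⟨m - 1, by omega⟩ from by
          rw [Fin.le_def]; have := i.isLt; simp; omega)) (hgw j)
  · have key : ∀ x y : Fin (m + (l + 1 - 1) - 1),
        ((∃ a b : Fin m, G.Adj a b ∧ (x : ℕ) = (a : ℕ) ∧ (y : ℕ) = (b : ℕ)) ∨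
         (∃ a b : Fin (l + 1 - 1), (orderedStar l 1).Adj a b ∧
            (x : ℕ) = (a : ℕ) + (m - 1) ∧ (y : ℕ) = (b : ℕ) + (m - 1))) →
        R.Adj (ext1 ψ g (Fin.cast e x)) (ext1 ψ g (Fin.cast e y)) := by
      have hsub : ∀ y : Fin (m + (l + 1 - 1) - 1), ∀ b : Fin (l + 1 - 1),
          (y : ℕ) = (b : ℕ) + (m - 1) → (b : ℕ) ≠ l - 1 →
          R.Adj v (ext1 ψ g (Fin.cast e y)) := by
        intro y b hyb hbne
        have hblt : (b : ℕ) < l + 1 - 1 := b.isLt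
        by_cases hb0 : (b : ℕ) = 0
        · have h2 : ext1 ψ g (Fin.cast e y) = ψ ⟨m - 1, by omega⟩ := by
            rw [ext1_apply_left _ _ _ (show ((Fin.cast e y : Fin _) : ℕ) < m from by
              simp; omega)]
            exact congrArg ψ (Fin.ext (by simp; omega))
          rw [h2]
          exact hadjv.symm
        · have h2 : ext1 ψ g (Fin.cast e y) = g ⟨(y : ℕ) - m, by omega⟩ := by
            rw [ext1_apply_right _ _ _ (show ¬ ((Fin.cast e y : Fin _) : ℕ) < m from by
              simp; omega)]
            rfl
          rw [h2, hgt _ (show ((⟨(y : ℕ) - m, by omega⟩ : Fin ((l - 2) + 1)) : ℕ) < l - 2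
            from by simp; omega)]
          exact (htsub _ (t.orderEmbOfFin_mem ht _)).1
      rintro x y (⟨a, b, hab, hxa, hyb⟩ | ⟨a, b, hab, hxa, hyb⟩)
      · have h1 : ext1 ψ g (Fin.cast e x) = ψ a := by
          rw [ext1_apply_left _ _ _ (show ((Fin.cast e x : Fin _) : ℕ) < m from by
            simp [hxa])]
          exact congrArg ψ (Fin.ext (by simp [hxa]))
        have h2 : ext1 ψ g (Fin.cast e y) = ψ b := by
          rw [ext1_apply_left _ _ _ (show ((Fin.cast e y : Fin _) : ℕ) < m from by
            simp [hyb])]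
          exact congrArg ψ (Fin.ext (by simp [hyb]))
        rw [h1, h2]
        exact hψh a b hab
      · rw [orderedStar_adj] at hab
        have halt : (a : ℕ) < l + 1 - 1 := a.isLt
        have hblt : (b : ℕ) < l + 1 - 1 := b.isLt
        rcases hab.2 with hc | hc
        · -- a is the center
          have hbne : (b : ℕ) ≠ l - 1 := fun h => hab.1 (Fin.ext (by omega))
          have h1 : ext1 ψ g (Fin.cast e x) = v := by
            rw [ext1_apply_right _ _ _ (show ¬ ((Fin.cast e x : Fin _) : ℕ) < m from by
              simp; omega)]
            exact hgv _ (by simp; omega)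
          rw [h1]
          exact hsub y b hyb hbne
        · -- b is the center
          have hane : (a : ℕ) ≠ l - 1 := fun h => hab.1 (Fin.ext (by omega))
          have h2 : ext1 ψ g (Fin.cast e y) = v := by
            rw [ext1_apply_right _ _ _ (show ¬ ((Fin.cast e y : Fin _) : ℕ) < m from by
              simp; omega)]
            exact hgv _ (by simp; omega)
          rw [h2]
          exact (hsub x a hxa hane).symm
    intro i j hadj
    rw [orderedJoin_adj] at hadj
    rcases hadj.2 with h | h
    · exact key i j h
    · exact (key j i h).symm

/-- joining by a trivial star does not change the graph (copy version) -/
lemma copy_join11 {m : ℕ} (hm : 1 ≤ m) {α : Type} [LinearOrder α]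
    (R : SimpleGraph α) {G : SimpleGraph (Fin m)} (ψ : Fin m → α) (hψm : StrictMono ψ)
    (hψh : ∀ i j, G.Adj i j → R.Adj (ψ i) (ψ j)) :
    HasCopy (orderedJoin G (orderedStar 1 1)) R := by
  have e : m + (1 + 1 - 1) - 1 = m := by omega
  refine ⟨fun i => ψ (Fin.cast e i), hψm.comp (strictMono_cast e), ?_⟩
  have key : ∀ x y : Fin (m + (1 + 1 - 1) - 1),
      ((∃ a b : Fin m, G.Adj a b ∧ (x : ℕ) = (a : ℕ) ∧ (y : ℕ) = (b : ℕ)) ∨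
       (∃ a b : Fin (1 + 1 - 1), (orderedStar 1 1).Adj a b ∧
          (x : ℕ) = (a : ℕ) + (m - 1) ∧ (y : ℕ) = (b : ℕ) + (m - 1))) →
      R.Adj (ψ (Fin.cast e x)) (ψ (Fin.cast e y)) := by
    rintro x y (⟨a, b, hab, hxa, hyb⟩ | ⟨a, b, hab, hxa, hyb⟩)
    · have h1 : Fin.cast e x = a := Fin.ext (by simp [hxa])
      have h2 : Fin.cast e y = b := Fin.ext (by simp [hyb])
      rw [h1, h2]
      exact hψh a b hab
    · rw [orderedStar_adj] at hab
      have : a = b := Fin.ext (by have := a.isLt; have := b.isLt; omega)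
      exact absurd this hab.1
  intro i j hadj
  rw [orderedJoin_adj] at hadj
  rcases hadj.2 with h | h
  · exact key i j h
  · exact (key j i h).symm

lemma greedy_gt {α : Type} [LinearOrder α] (R : SimpleGraph α) [DecidableRel R.Adj]
    (k : ℕ) (s : Finset α)
    (hdeg : ∀ v ∈ s, (s.filter fun u => R.Adj v u ∧ v < u).card < k) :
    ∃ c : α → ℕ, (∀ v ∈ s, c v < k) ∧ ∀ u ∈ s, ∀ v ∈ s, R.Adj u v → c u ≠ c v := by
  induction s using Finset.strongInduction with
  | _ s ih =>
    rcases s.eq_empty_or_nonempty with rfl | hne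
    · exact ⟨fun _ => 0, by simp, by simp⟩
    · set a := s.min' hne with ha_def
      have ha : a ∈ s := s.min'_mem hne
      obtain ⟨c, hc1, hc2⟩ := ih (s.erase a) (Finset.erase_ssubset ha)
        (fun v hv => lt_of_le_of_lt
          (Finset.card_le_card (Finset.filter_subset_filter _ (Finset.erase_subset _ _)))
          (hdeg v (Finset.mem_of_mem_erase hv)))
      set F := (s.filter fun u => R.Adj a u ∧ a < u).image c with hF_def
      have hFcard : F.card < k := lt_of_le_of_lt Finset.card_image_le (hdeg a ha)
      have hex : ∃ x ∈ Finset.range k, x ∉ F := by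
        by_contra hx
        push_neg at hx
        have : (Finset.range k).card ≤ F.card := Finset.card_le_card hx
        simp only [Finset.card_range] at this
        omega
      obtain ⟨x, hxk, hxF⟩ := hex
      rw [Finset.mem_range] at hxk
      refine ⟨Function.update c a x, ?_, ?_⟩
      · intro v hv
        rcases eq_or_ne v a with rfl | hva
        · simpa using hxk
        · rw [Function.update_of_ne hva]
          exact hc1 v (Finset.mem_erase.mpr ⟨hva, hv⟩)
      · intro u hu v hv hadj
        rcases eq_or_ne u a with rfl | hua <;> rcases eq_or_ne v a with rfl | hva
        · exact absurd hadj (R.irrefl)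
        · rw [Function.update_self, Function.update_of_ne hva]
          have hlt : a < v := lt_of_le_of_ne (s.min'_le v hv) (Ne.symm hva)
          intro hcontra
          exact hxF (Finset.mem_image.mpr ⟨v, Finset.mem_filter.mpr ⟨hv, hadj, hlt⟩, hcontra.symm⟩)
        · rw [Function.update_self, Function.update_of_ne hua]
          have hlt : a < u := lt_of_le_of_ne (s.min'_le u hu) (Ne.symm hua)
          intro hcontra
          exact hxF (Finset.mem_image.mpr ⟨u, Finset.mem_filter.mpr ⟨hu, hadj.symm, hlt⟩, hcontra⟩)
        · rw [Function.update_of_ne hua, Function.update_of_ne hva]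
          exact hc2 u (Finset.mem_erase.mpr ⟨hua, hu⟩) v (Finset.mem_erase.mpr ⟨hva, hv⟩) hadj

lemma greedy_lt {α : Type} [LinearOrder α] (R : SimpleGraph α) [DecidableRel R.Adj]
    (k : ℕ) (s : Finset α)
    (hdeg : ∀ v ∈ s, (s.filter fun u => R.Adj v u ∧ u < v).card < k) :
    ∃ c : α → ℕ, (∀ v ∈ s, c v < k) ∧ ∀ u ∈ s, ∀ v ∈ s, R.Adj u v → c u ≠ c v := by
  induction s using Finset.strongInduction with
  | _ s ih =>
    rcases s.eq_empty_or_nonempty with rfl | hne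
    · exact ⟨fun _ => 0, by simp, by simp⟩
    · set a := s.max' hne with ha_def
      have ha : a ∈ s := s.max'_mem hne
      obtain ⟨c, hc1, hc2⟩ := ih (s.erase a) (Finset.erase_ssubset ha)
        (fun v hv => lt_of_le_of_lt
          (Finset.card_le_card (Finset.filter_subset_filter _ (Finset.erase_subset _ _)))
          (hdeg v (Finset.mem_of_mem_erase hv)))
      set F := (s.filter fun u => R.Adj a u ∧ u < a).image c with hF_def
      have hFcard : F.card < k := lt_of_le_of_lt Finset.card_image_le (hdeg a ha)
      have hex : ∃ x ∈ Finset.range k, x ∉ F := by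
        by_contra hx
        push_neg at hx
        have : (Finset.range k).card ≤ F.card := Finset.card_le_card hx
        simp only [Finset.card_range] at this
        omega
      obtain ⟨x, hxk, hxF⟩ := hex
      rw [Finset.mem_range] at hxk
      refine ⟨Function.update c a x, ?_, ?_⟩
      · intro v hv
        rcases eq_or_ne v a with rfl | hva
        · simpa using hxk
        · rw [Function.update_of_ne hva]
          exact hc1 v (Finset.mem_erase.mpr ⟨hva, hv⟩)
      · intro u hu v hv hadj
        rcases eq_or_ne u a with rfl | hua <;> rcases eq_or_ne v a with rfl | hva
        · exact absurd hadj (R.irrefl)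
        · rw [Function.update_self, Function.update_of_ne hva]
          have hlt : v < a := lt_of_le_of_ne (s.le_max' v hv) (hva)
          intro hcontra
          exact hxF (Finset.mem_image.mpr ⟨v, Finset.mem_filter.mpr ⟨hv, hadj, hlt⟩, hcontra.symm⟩)
        · rw [Function.update_self, Function.update_of_ne hua]
          have hlt : u < a := lt_of_le_of_ne (s.le_max' u hu) (hua)
          intro hcontra
          exact hxF (Finset.mem_image.mpr ⟨u, Finset.mem_filter.mpr ⟨hu, hadj.symm, hlt⟩, hcontra⟩)
        · rw [Function.update_of_ne hua, Function.update_of_ne hva]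
          exact hc2 u (Finset.mem_erase.mpr ⟨hua, hu⟩) v (Finset.mem_erase.mpr ⟨hva, hv⟩) hadj

lemma cat_one_le {m : ℕ} {G : SimpleGraph (Fin m)} (h : IsMonotoneCaterpillar G) : 1 ≤ m := by
  induction h with
  | star hl hr h => omega
  | join hl hr h hG ih => omega

/-- Key lemma: an ordered graph with no ordered copy of a monotone caterpillar on `m`
vertices has a proper coloring with `m - 1` colors. -/
lemma cat_chrom {m : ℕ} {G : SimpleGraph (Fin m)} (hcat : IsMonotoneCaterpillar G) :
    ∀ {α : Type} [LinearOrder α] [Fintype α] (R : SimpleGraph α), ¬ HasCopy G R →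
      ∃ c : α → ℕ, (∀ v, c v < m - 1) ∧ ∀ u v, R.Adj u v → c u ≠ c v := by
  induction hcat with
  | @star l r hl hr h =>
    intro α _ _ R hnc
    classical
    rcases h with hl1 | hr1
    · subst hl1
      have hdeg : ∀ v ∈ (Finset.univ : Finset α),
          ((Finset.univ.filter fun u => R.Adj v u ∧ v < u)).card < (1 + r - 1) - 1 := by
        intro v _
        by_contra hcon
        push_neg at hcon
        obtain ⟨t, hts, htc⟩ := Finset.exists_subset_card_eq hcon
        refine hnc (copy_starR hr R v t htc fun u hu => ?_)
        have := hts hu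
        rw [Finset.mem_filter] at this
        exact this.2
      obtain ⟨c, hc1, hc2⟩ := greedy_gt R ((1 + r - 1) - 1) Finset.univ hdeg
      exact ⟨c, fun v => hc1 v (Finset.mem_univ v),
        fun u v hadj => hc2 u (Finset.mem_univ u) v (Finset.mem_univ v) hadj⟩
    · subst hr1
      have hdeg : ∀ v ∈ (Finset.univ : Finset α),
          ((Finset.univ.filter fun u => R.Adj v u ∧ u < v)).card < (l + 1 - 1) - 1 := by
        intro v _
        by_contra hcon
        push_neg at hcon
        obtain ⟨t, hts, htc⟩ := Finset.exists_subset_card_eq hcon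
        refine hnc (copy_starL hl R v t htc fun u hu => ?_)
        have := hts hu
        rw [Finset.mem_filter] at this
        exact this.2
      obtain ⟨c, hc1, hc2⟩ := greedy_lt R ((l + 1 - 1) - 1) Finset.univ hdeg
      exact ⟨c, fun v => hc1 v (Finset.mem_univ v),
        fun u v hadj => hc2 u (Finset.mem_univ u) v (Finset.mem_univ v) hadj⟩
  | @join m l r G hl hr h hG ih =>
    intro α _ _ R hnc
    classical
    have hm : 1 ≤ m := cat_one_le hG
    by_cases hr1 : r = 1
    · subst hr1
      by_cases hl1 : l = 1
      · subst hl1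
        have hnc' : ¬ HasCopy G R := fun ⟨ψ, h1, h2⟩ => hnc (copy_join11 hm R ψ h1 h2)
        obtain ⟨c, hc1, hc2⟩ := ih R hnc'
        exact ⟨c, fun v => by have := hc1 v; omega, hc2⟩
      · -- left star
        have hl2 : 2 ≤ l := by omega
        set W : Finset α := Finset.univ.filter (fun w => ∃ v, R.Adj w v ∧ w < v ∧
          (l - 2 : ℕ) ≤ ((Finset.univ.filter fun u => R.Adj v u ∧ w < u ∧ u < v)).card)
          with hW
        have hGW : ¬ HasCopy G (R.comap (fun x : {x : α // x ∈ W} => (x : α))) := by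
          rintro ⟨ψ, hψm, hψh⟩
          have hwW := (ψ ⟨m - 1, by omega⟩).2
          obtain ⟨-, v, hv1, hv2, hv3⟩ := Finset.mem_filter.mp hwW
          obtain ⟨t, hts, htc⟩ := Finset.exists_subset_card_eq hv3
          refine hnc (copy_joinL hm hl2 R (fun i => ((ψ i : α))) (fun i j hij => hψm hij)
            (fun i j hadj => hψh i j hadj) v hv1 hv2 t htc fun u hu => ?_)
          have := hts hu
          rw [Finset.mem_filter] at this
          exact this.2
        obtain ⟨cW, hcW1, hcW2⟩ := ih _ hGW
        have hdeg : ∀ v ∈ Wᶜ, ((Wᶜ.filter fun u => R.Adj v u ∧ u < v)).card < l - 1 := by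
          intro v hv
          by_contra hcon
          push_neg at hcon
          obtain ⟨t, hts, htc⟩ := Finset.exists_subset_card_eq hcon
          have htne : t.Nonempty := Finset.card_pos.mp (by omega)
          have hu₁t : t.min' htne ∈ t := t.min'_mem htne
          have hu₁f := hts hu₁t
          rw [Finset.mem_filter] at hu₁f
          obtain ⟨hu₁c, hu₁a, hu₁lt⟩ := hu₁f
          have hu₁W : t.min' htne ∈ W := by
            refine Finset.mem_filter.mpr ⟨Finset.mem_univ _, v, hu₁a.symm, hu₁lt, ?_⟩
            have hsub2 : t.erase (t.min' htne) ⊆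
                Finset.univ.filter fun u => R.Adj v u ∧ t.min' htne < u ∧ u < v := by
              intro x hx
              have hxt := Finset.mem_of_mem_erase hx
              have hxf := hts hxt
              rw [Finset.mem_filter] at hxf
              exact Finset.mem_filter.mpr ⟨Finset.mem_univ _, hxf.2.1,
                lt_of_le_of_ne (t.min'_le x hxt) (Ne.symm (Finset.ne_of_mem_erase hx)),
                hxf.2.2⟩
            have := Finset.card_le_card hsub2
            rw [Finset.card_erase_of_mem hu₁t, htc] at this
            omega
          exact absurd hu₁W (Finset.mem_compl.mp hu₁c)
        obtain ⟨cO, hcO1, hcO2⟩ := greedy_lt R (l - 1) Wᶜ hdeg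
        refine ⟨fun a => if h : a ∈ W then cW ⟨a, h⟩ else (m - 1) + cO a, ?_, ?_⟩
        · intro a
          by_cases ha : a ∈ W
          · simp only [dif_pos ha]
            have := hcW1 ⟨a, ha⟩
            omega
          · simp only [dif_neg ha]
            have := hcO1 a (Finset.mem_compl.mpr ha)
            omega
        · intro u v hadj
          by_cases hu : u ∈ W <;> by_cases hv : v ∈ W
          · simp only [dif_pos hu, dif_pos hv]
            exact hcW2 ⟨u, hu⟩ ⟨v, hv⟩ hadj
          · simp only [dif_pos hu, dif_neg hv]
            have := hcW1 ⟨u, hu⟩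
            omega
          · simp only [dif_neg hu, dif_pos hv]
            have := hcW1 ⟨v, hv⟩
            omega
          · simp only [dif_neg hu, dif_neg hv]
            have := hcO2 u (Finset.mem_compl.mpr hu) v (Finset.mem_compl.mpr hv) hadj
            omega
    · -- right star
      have hl1 : l = 1 := h.resolve_right hr1
      subst hl1
      set W : Finset α := Finset.univ.filter (fun w =>
        (r - 1 : ℕ) ≤ ((Finset.univ.filter fun u => R.Adj w u ∧ w < u)).card) with hW
      have hGW : ¬ HasCopy G (R.comap (fun x : {x : α // x ∈ W} => (x : α))) := by
        rintro ⟨ψ, hψm, hψh⟩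
        have hwW := (ψ ⟨m - 1, by omega⟩).2
        obtain ⟨t, hts, htc⟩ := Finset.exists_subset_card_eq (Finset.mem_filter.mp hwW).2
        refine hnc (copy_joinR hm hr R (fun i => ((ψ i : α))) (fun i j hij => hψm hij)
          (fun i j hadj => hψh i j hadj) t htc fun u hu => ?_)
        have := hts hu
        rw [Finset.mem_filter] at this
        exact this.2
      obtain ⟨cW, hcW1, hcW2⟩ := ih _ hGW
      have hdeg : ∀ v ∈ Wᶜ, ((Wᶜ.filter fun u => R.Adj v u ∧ v < u)).card < r - 1 := by
        intro v hv
        have hvW := Finset.mem_compl.mp hv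
        have h2 : ((Finset.univ.filter fun u => R.Adj v u ∧ v < u)).card < r - 1 := by
          by_contra hcon
          push_neg at hcon
          exact hvW (Finset.mem_filter.mpr ⟨Finset.mem_univ v, hcon⟩)
        calc ((Wᶜ.filter fun u => R.Adj v u ∧ v < u)).card
            ≤ ((Finset.univ.filter fun u => R.Adj v u ∧ v < u)).card :=
              Finset.card_le_card (Finset.filter_subset_filter _ (Finset.subset_univ _))
          _ < r - 1 := h2
      obtain ⟨cO, hcO1, hcO2⟩ := greedy_gt R (r - 1) Wᶜ hdeg
      refine ⟨fun a => if h : a ∈ W then cW ⟨a, h⟩ else (m - 1) + cO a, ?_, ?_⟩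
      · intro a
        by_cases ha : a ∈ W
        · simp only [dif_pos ha]
          have := hcW1 ⟨a, ha⟩
          omega
        · simp only [dif_neg ha]
          have := hcO1 a (Finset.mem_compl.mpr ha)
          omega
      · intro u v hadj
        by_cases hu : u ∈ W <;> by_cases hv : v ∈ W
        · simp only [dif_pos hu, dif_pos hv]
          exact hcW2 ⟨u, hu⟩ ⟨v, hv⟩ hadj
        · simp only [dif_pos hu, dif_neg hv]
          have := hcW1 ⟨u, hu⟩
          omega
        · simp only [dif_neg hu, dif_pos hv]
          have := hcW1 ⟨v, hv⟩
          omega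
        · simp only [dif_neg hu, dif_neg hv]
          have := hcO2 u (Finset.mem_compl.mpr hu) v (Finset.mem_compl.mpr hv) hadj
          omega

lemma cat_upper {m n : ℕ} {G : SimpleGraph (Fin m)} (hcat : IsMonotoneCaterpillar G) (hn : 1 ≤ n) :
    ∀ R : SimpleGraph (Fin ((m - 1) * (n - 1) + 1)),
      OrderedSubgraph G R ∨ OrderedSubgraph (⊤ : SimpleGraph (Fin n)) Rᶜ := by
  intro R
  classical
  by_cases hc : HasCopy G R
  · exact Or.inl hc
  right
  obtain ⟨c, hc1, hc2⟩ := cat_chrom hcat R hc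
  have hm1 : 1 ≤ m := cat_one_le hcat
  have hm2 : 2 ≤ m := by
    by_contra hcon
    have hm : m = 1 := by omega
    subst hm
    apply hc
    refine ⟨fun _ => ⟨0, by omega⟩, ?_, ?_⟩
    · intro i j hij
      have h1 : (i : ℕ) < 1 := i.isLt
      have h2 : (j : ℕ) < 1 := j.isLt
      exact absurd (Fin.lt_def.mp hij) (by omega)
    · intro i j hij
      have hij' : i = j := Fin.ext (by have := i.isLt; have := j.isLt; omega)
      rw [hij'] at hij
      exact (G.irrefl hij).elim
  have hmaps : ∀ a ∈ (Finset.univ : Finset (Fin ((m - 1) * (n - 1) + 1))),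
      c a ∈ Finset.range (m - 1) := fun a _ => Finset.mem_range.mpr (hc1 a)
  have hlt : (Finset.range (m - 1)).card * (n - 1) <
      (Finset.univ : Finset (Fin ((m - 1) * (n - 1) + 1))).card := by
    simp
  obtain ⟨b, hb, hfib⟩ := Finset.exists_lt_card_fiber_of_mul_lt_card_of_maps_to hmaps hlt
  have hn' : n ≤ (Finset.univ.filter fun a => c a = b).card := by omega
  obtain ⟨t, hts, htc⟩ := Finset.exists_subset_card_eq hn'
  refine ⟨fun i => t.orderEmbOfFin htc i, fun i j hij => (t.orderEmbOfFin htc).strictMono hij, ?_⟩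
  intro i j hij
  rw [SimpleGraph.top_adj] at hij
  rw [SimpleGraph.compl_adj]
  refine ⟨fun hEq => hij ((t.orderEmbOfFin htc).injective hEq), fun hadj => ?_⟩
  have h1 := hts (t.orderEmbOfFin_mem htc i)
  have h2 := hts (t.orderEmbOfFin_mem htc j)
  rw [Finset.mem_filter] at h1 h2
  exact hc2 _ _ hadj (h1.2.trans h2.2.symm)

lemma cat_lower {m n N : ℕ} {G : SimpleGraph (Fin m)} (hG : G.Connected) (hm : 1 ≤ m) (hn : 1 ≤ n)
    (hN : N ≤ (m - 1) * (n - 1)) :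
    ¬ (∀ R : SimpleGraph (Fin N),
        OrderedSubgraph G R ∨ OrderedSubgraph (⊤ : SimpleGraph (Fin n)) Rᶜ) := by
  intro hmem
  rcases Nat.eq_zero_or_pos N with hN0 | hN1
  · subst hN0
    rcases hmem ⊥ with ⟨φ, -, -⟩ | ⟨φ, -, -⟩
    · exact (φ ⟨0, by omega⟩).elim0
    · exact (φ ⟨0, by omega⟩).elim0
  · have hm2 : 2 ≤ m := by
      by_contra hcon
      have hcon' : m - 1 = 0 := by omega
      rw [hcon', Nat.zero_mul] at hN
      omega
    set R : SimpleGraph (Fin N) :=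
      SimpleGraph.fromRel (fun i j => (i : ℕ) / (m - 1) = (j : ℕ) / (m - 1)) with hR
    rcases hmem R with ⟨φ, hmono, hhom⟩ | ⟨φ, hmono, hhom⟩
    · have hblk : ∀ a b : Fin m, G.Adj a b → (φ a : ℕ) / (m - 1) = (φ b : ℕ) / (m - 1) := by
        intro a b hab
        have h := hhom a b hab
        rw [hR, SimpleGraph.fromRel_adj] at h
        rcases h.2 with h | h
        · exact h
        · exact h.symm
      have hreach : ∀ a b : Fin m, G.Reachable a b →
          (φ a : ℕ) / (m - 1) = (φ b : ℕ) / (m - 1) := by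
        intro a b hr
        obtain ⟨p⟩ := hr
        induction p with
        | nil => rfl
        | cons h p ih => exact (hblk _ _ h).trans ih
      have hcard : (Finset.range (m - 1)).card < (Finset.univ : Finset (Fin m)).card := by
        simp
        omega
      obtain ⟨a, -, b, -, hne, heq⟩ := Finset.exists_ne_map_eq_of_card_lt_of_maps_to hcard
        (fun a _ => Finset.mem_range.mpr (Nat.mod_lt _ (by omega) : (φ a : ℕ) % (m - 1) < m - 1))
      have hdiv := hreach a b (hG.preconnected a b)
      have hφeq : (φ a : ℕ) = (φ b : ℕ) := by
        have e1 := Nat.div_add_mod (φ a : ℕ) (m - 1)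
        have e2 := Nat.div_add_mod (φ b : ℕ) (m - 1)
        rw [hdiv, heq] at e1
        omega
      exact hne (hmono.injective (Fin.ext hφeq))
    · have hblk : ∀ i j : Fin n, i < j → (φ i : ℕ) / (m - 1) < (φ j : ℕ) / (m - 1) := by
        intro i j hij
        have hadj := hhom i j ((SimpleGraph.top_adj _ _).mpr (ne_of_lt hij))
        rw [hR, SimpleGraph.compl_adj, SimpleGraph.fromRel_adj] at hadj
        have hndiv : (φ i : ℕ) / (m - 1) ≠ (φ j : ℕ) / (m - 1) := by
          intro hEq
          exact hadj.2 ⟨hadj.1, Or.inl hEq⟩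
        exact lt_of_le_of_ne (Nat.div_le_div_right (le_of_lt (hmono hij))) hndiv
      have hchain : ∀ k : ℕ, ∀ hk : k < n, k ≤ (φ ⟨k, hk⟩ : ℕ) / (m - 1) := by
        intro k
        induction k with
        | zero => intro hk; exact Nat.zero_le _
        | succ k ihk =>
          intro hk
          have h1 := ihk (by omega)
          have h2 := hblk ⟨k, by omega⟩ ⟨k + 1, hk⟩ (by simp [Fin.lt_def])
          omega
      have hkn : n - 1 < n := by omega
      have hfin := hchain (n - 1) hkn
      have hlt : (φ ⟨n - 1, hkn⟩ : ℕ) < (m - 1) * (n - 1) :=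
        lt_of_lt_of_le (Fin.is_lt (φ ⟨n - 1, hkn⟩)) hN
      have hdivlt : (φ ⟨n - 1, hkn⟩ : ℕ) / (m - 1) < n - 1 :=
        (Nat.div_lt_iff_lt_mul (show 0 < m - 1 by omega)).mpr (by rw [Nat.mul_comm]; exact hlt)
      omega

/-- Every monotone caterpillar graph is good: if `G` is a connected ordered
graph on `m` vertices that is a join of one-sided ordered stars, then
`r_<(G, K_n) = (m - 1)(n - 1) + 1` for every positive integer `n`. -/
theorem stmt_10 (m : ℕ) (G : SimpleGraph (Fin m)) (hG : G.Connected)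
    (hcat : IsMonotoneCaterpillar G) (n : ℕ) (hn : 1 ≤ n) :
    orderedRamsey G (⊤ : SimpleGraph (Fin n)) = (m - 1) * (n - 1) + 1 := by
  have hm1 : 1 ≤ m := cat_one_le hcat
  apply le_antisymm
  · exact Nat.sInf_le (cat_upper hcat hn)
  · refine le_csInf ⟨_, cat_upper hcat hn⟩ (fun N hN => ?_)
    by_contra hcon
    push_neg at hcon
    exact cat_lower hG hm1 hn (by omega) hN
end

section
/- A connected ordered graph G is a monotone caterpillar graph if and only if G contains none of the following four ordered graphs as an ordered subgraph: A, the ordered graph on [4] with edges {1,4} and {2,3}; B, the ordered graph on [4] with edges {1,3} and {2,4}; C, the ordered graph on [4] with edges {1,2}, {1,4} and {3,4}; and D, the complete ordered graph K_3 on [3]. -/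
/-- The ordered graph `A` on `[4]` with edges `{1,4}` and `{2,3}`. -/
def graphA : SimpleGraph (Fin 4) :=
  SimpleGraph.fromRel (fun i j => (i = 0 ∧ j = 3) ∨ (i = 1 ∧ j = 2))

/-- The ordered graph `B` on `[4]` with edges `{1,3}` and `{2,4}`. -/
def graphB : SimpleGraph (Fin 4) :=
  SimpleGraph.fromRel (fun i j => (i = 0 ∧ j = 2) ∨ (i = 1 ∧ j = 3))

/-- The ordered graph `C` on `[4]` with edges `{1,2}`, `{1,4}` and `{3,4}`. -/
def graphC : SimpleGraph (Fin 4) :=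
  SimpleGraph.fromRel (fun i j => (i = 0 ∧ j = 1) ∨ (i = 0 ∧ j = 3) ∨ (i = 2 ∧ j = 3))


namespace Stmt12Aux

def NoA {m : ℕ} (G : SimpleGraph (Fin m)) : Prop :=
  ∀ a b c d : Fin m, (a:ℕ) < b → (b:ℕ) < c → (c:ℕ) < d → G.Adj a d → G.Adj b c → False
def NoB {m : ℕ} (G : SimpleGraph (Fin m)) : Prop :=
  ∀ a b c d : Fin m, (a:ℕ) < b → (b:ℕ) < c → (c:ℕ) < d → G.Adj a c → G.Adj b d → False
def NoC {m : ℕ} (G : SimpleGraph (Fin m)) : Prop :=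
  ∀ a b c d : Fin m, (a:ℕ) < b → (b:ℕ) < c → (c:ℕ) < d →
    G.Adj a b → G.Adj a d → G.Adj c d → False
def NoD {m : ℕ} (G : SimpleGraph (Fin m)) : Prop :=
  ∀ a b c : Fin m, (a:ℕ) < b → (b:ℕ) < c → G.Adj a b → G.Adj a c → G.Adj b c → False

lemma strictMono_vec4 {α} [Preorder α] {a b c d : α} (h1 : a<b) (h2 : b<c) (h3 : c<d) :
    StrictMono ![a,b,c,d] := by
  intro i j hij
  fin_cases i <;> fin_cases j <;> simp_all <;>
    first | exact h1.trans h2 | exact (h1.trans h2).trans h3 | exact h2.trans h3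

lemma strictMono_vec3 {α} [Preorder α] {a b c : α} (h1 : a<b) (h2 : b<c) :
    StrictMono ![a,b,c] := by
  intro i j hij
  fin_cases i <;> fin_cases j <;> simp_all <;> exact h1.trans h2

lemma notA_iff {m : ℕ} (G : SimpleGraph (Fin m)) : ¬ OrderedSubgraph graphA G ↔ NoA G := by
  constructor
  · intro hn a b c d h1 h2 h3 e1 e2
    refine hn ⟨![a,b,c,d], strictMono_vec4 (Fin.lt_def.2 h1) (Fin.lt_def.2 h2) (Fin.lt_def.2 h3), ?_⟩
    intro i j h
    fin_cases i <;> fin_cases j <;> simp_all [graphA, SimpleGraph.fromRel_adj] <;>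
      first | exact e1 | exact e2 | exact e1.symm | exact e2.symm
  · rintro hno ⟨φ, hm, he⟩
    exact hno (φ 0) (φ 1) (φ 2) (φ 3) (hm (by decide)) (hm (by decide)) (hm (by decide))
      (he 0 3 (by simp [graphA, SimpleGraph.fromRel_adj]))
      (he 1 2 (by simp [graphA, SimpleGraph.fromRel_adj]))

lemma notB_iff {m : ℕ} (G : SimpleGraph (Fin m)) : ¬ OrderedSubgraph graphB G ↔ NoB G := by
  constructor
  · intro hn a b c d h1 h2 h3 e1 e2
    refine hn ⟨![a,b,c,d], strictMono_vec4 (Fin.lt_def.2 h1) (Fin.lt_def.2 h2) (Fin.lt_def.2 h3), ?_⟩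
    intro i j h
    fin_cases i <;> fin_cases j <;> simp_all [graphB, SimpleGraph.fromRel_adj] <;>
      first | exact e1 | exact e2 | exact e1.symm | exact e2.symm
  · rintro hno ⟨φ, hm, he⟩
    exact hno (φ 0) (φ 1) (φ 2) (φ 3) (hm (by decide)) (hm (by decide)) (hm (by decide))
      (he 0 2 (by simp [graphB, SimpleGraph.fromRel_adj]))
      (he 1 3 (by simp [graphB, SimpleGraph.fromRel_adj]))

lemma notC_iff {m : ℕ} (G : SimpleGraph (Fin m)) : ¬ OrderedSubgraph graphC G ↔ NoC G := by
  constructor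
  · intro hn a b c d h1 h2 h3 e1 e2 e3
    refine hn ⟨![a,b,c,d], strictMono_vec4 (Fin.lt_def.2 h1) (Fin.lt_def.2 h2) (Fin.lt_def.2 h3), ?_⟩
    intro i j h
    fin_cases i <;> fin_cases j <;> simp_all [graphC, SimpleGraph.fromRel_adj] <;>
      first | exact e1 | exact e2 | exact e3 | exact e1.symm | exact e2.symm | exact e3.symm
  · rintro hno ⟨φ, hm, he⟩
    exact hno (φ 0) (φ 1) (φ 2) (φ 3) (hm (by decide)) (hm (by decide)) (hm (by decide))
      (he 0 1 (by simp [graphC, SimpleGraph.fromRel_adj]))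
      (he 0 3 (by simp [graphC, SimpleGraph.fromRel_adj]))
      (he 2 3 (by simp [graphC, SimpleGraph.fromRel_adj]))

lemma notD_iff {m : ℕ} (G : SimpleGraph (Fin m)) :
    ¬ OrderedSubgraph (⊤ : SimpleGraph (Fin 3)) G ↔ NoD G := by
  constructor
  · intro hn a b c h1 h2 e1 e2 e3
    refine hn ⟨![a,b,c], strictMono_vec3 (Fin.lt_def.2 h1) (Fin.lt_def.2 h2), ?_⟩
    intro i j h
    fin_cases i <;> fin_cases j <;> simp_all <;>
      first | exact e1 | exact e2 | exact e3 | exact e1.symm | exact e2.symm | exact e3.symm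
  · rintro hno ⟨φ, hm, he⟩
    exact hno (φ 0) (φ 1) (φ 2) (hm (by decide)) (hm (by decide))
      (he 0 1 (by simp)) (he 0 2 (by simp)) (he 1 2 (by simp))

lemma star_adj {l r : ℕ} (i j : Fin (l + r - 1)) :
    (orderedStar l r).Adj i j ↔ i ≠ j ∧ ((i:ℕ) = l - 1 ∨ (j:ℕ) = l - 1) := by
  simp [orderedStar, SimpleGraph.fromRel_adj]

lemma adj_congr {m : ℕ} (G : SimpleGraph (Fin m)) {x y x' y' : Fin m}
    (hx : (x:ℕ) = x') (hy : (y:ℕ) = y') : G.Adj x y ↔ G.Adj x' y' := by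
  rw [Fin.val_eq_val] at hx hy; rw [hx, hy]

lemma join_adj {p q : ℕ} (G : SimpleGraph (Fin p)) (S : SimpleGraph (Fin q))
    (i j : Fin (p + q - 1)) :
    (orderedJoin G S).Adj i j ↔ i ≠ j ∧
      ((∃ a b : Fin p, G.Adj a b ∧ (i:ℕ) = a ∧ (j:ℕ) = b) ∨
       (∃ a b : Fin q, S.Adj a b ∧ (i:ℕ) = (a:ℕ) + (p-1) ∧ (j:ℕ) = (b:ℕ) + (p-1))) := by
  simp only [orderedJoin, SimpleGraph.fromRel_adj]
  constructor
  · rintro ⟨hne, (h | h) | (⟨a,b,hab,hi,hj⟩ | ⟨a,b,hab,hi,hj⟩)⟩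
    · exact ⟨hne, Or.inl h⟩
    · exact ⟨hne, Or.inr h⟩
    · exact ⟨hne, Or.inl ⟨b, a, hab.symm, hj, hi⟩⟩
    · exact ⟨hne, Or.inr ⟨b, a, hab.symm, hj, hi⟩⟩
  · rintro ⟨hne, h⟩; exact ⟨hne, Or.inl h⟩

lemma joinStar_cases {p l r : ℕ} (G : SimpleGraph (Fin p))
    {i j : Fin (p + (l + r - 1) - 1)} (h : (orderedJoin G (orderedStar l r)).Adj i j) :
    ((i:ℕ) < p ∧ (j:ℕ) < p ∧
      ∀ (hi : (i:ℕ) < p) (hj : (j:ℕ) < p), G.Adj ⟨i, hi⟩ ⟨j, hj⟩) ∨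
    ((i:ℕ) ≠ (j:ℕ) ∧ p - 1 ≤ (i:ℕ) ∧ p - 1 ≤ (j:ℕ) ∧
      ((i:ℕ) = (l - 1) + (p - 1) ∨ (j:ℕ) = (l - 1) + (p - 1))) := by
  rw [join_adj] at h
  obtain ⟨hne, (⟨a, b, hab, hi, hj⟩ | ⟨a, b, hab, hi, hj⟩)⟩ := h
  · left
    refine ⟨hi ▸ a.2, hj ▸ b.2, fun hi' hj' => ?_⟩
    exact (adj_congr G (x' := a) (y' := b) hi hj).2 hab
  · right
    rw [star_adj] at hab
    refine ⟨fun hc => hne (Fin.val_eq_val _ _ |>.1 hc), by omega, by omega, ?_⟩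
    rcases hab.2 with h' | h'
    · left; omega
    · right; omega

lemma fwd {m : ℕ} {G : SimpleGraph (Fin m)} (h : IsMonotoneCaterpillar G) :
    NoA G ∧ NoB G ∧ NoC G ∧ NoD G := by
  induction h with
  | star hl hr hside =>
    refine ⟨?_, ?_, ?_, ?_⟩
    · intro a b c d h1 h2 h3 e1 e2
      rw [star_adj] at e1 e2
      rcases e1.2 with h' | h' <;> rcases e2.2 with h'' | h'' <;> omega
    · intro a b c d h1 h2 h3 e1 e2
      rw [star_adj] at e1 e2
      rcases e1.2 with h' | h' <;> rcases e2.2 with h'' | h'' <;> omega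
    · intro a b c d h1 h2 h3 e1 e2 e3
      rw [star_adj] at e1 e2 e3
      rcases e1.2 with h' | h' <;> rcases e3.2 with h'' | h'' <;> omega
    · intro a b c h1 h2 e1 e2 e3
      rw [star_adj] at e1 e2 e3
      rcases e1.2 with h' | h' <;> rcases e2.2 with h'' | h'' <;>
        rcases e3.2 with h''' | h''' <;> omega
  | @join p l r G hl hr hside hG ih =>
    obtain ⟨ihA, ihB, ihC, ihD⟩ := ih
    refine ⟨?_, ?_, ?_, ?_⟩
    · intro a b c d h1 h2 h3 e1 e2
      rcases joinStar_cases G e1 with ⟨ha, hd, h'⟩ | ⟨_, ha, hd, hz1⟩ <;>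
        rcases joinStar_cases G e2 with ⟨hb, hc, h''⟩ | ⟨_, hb, hc, hz2⟩
      · exact ihA ⟨a, ha⟩ ⟨b, hb⟩ ⟨c, hc⟩ ⟨d, hd⟩ h1 h2 h3 (h' ha hd) (h'' hb hc)
      all_goals omega
    · intro a b c d h1 h2 h3 e1 e2
      rcases joinStar_cases G e1 with ⟨ha, hc, h'⟩ | ⟨_, ha, hc, hz1⟩ <;>
        rcases joinStar_cases G e2 with ⟨hb, hd, h''⟩ | ⟨_, hb, hd, hz2⟩
      · exact ihB ⟨a, ha⟩ ⟨b, hb⟩ ⟨c, hc⟩ ⟨d, hd⟩ h1 h2 h3 (h' ha hc) (h'' hb hd)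
      all_goals omega
    · intro a b c d h1 h2 h3 e1 e2 e3
      rcases joinStar_cases G e1 with ⟨ha, hb, h'⟩ | ⟨hne1, ha, hb, hz1⟩ <;>
        rcases joinStar_cases G e2 with ⟨ha', hd, h''⟩ | ⟨hne2, ha', hd, hz2⟩ <;>
          rcases joinStar_cases G e3 with ⟨hc, hd', h'''⟩ | ⟨hne3, hc, hd', hz3⟩
      · exact ihC ⟨a, ha⟩ ⟨b, hb⟩ ⟨c, hc⟩ ⟨d, hd⟩ h1 h2 h3 (h' ha hb) (h'' ha' hd) (h''' hc hd')
      all_goals omega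
    · intro a b c h1 h2 e1 e2 e3
      rcases joinStar_cases G e1 with ⟨ha, hb, h'⟩ | ⟨hne1, ha, hb, hz1⟩ <;>
        rcases joinStar_cases G e2 with ⟨ha', hc, h''⟩ | ⟨hne2, ha', hc, hz2⟩ <;>
          rcases joinStar_cases G e3 with ⟨hb', hc', h'''⟩ | ⟨hne3, hb', hc', hz3⟩
      · exact ihD ⟨a, ha⟩ ⟨b, hb⟩ ⟨c, hc⟩ h1 h2 (h' ha hb) (h'' ha' hc) (h''' hb' hc')
      all_goals omega

lemma imc_congr {a b : ℕ} (h : a = b) {Ga : SimpleGraph (Fin a)} {Gb : SimpleGraph (Fin b)}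
    (hadj : ∀ i j : Fin a, Ga.Adj i j ↔ Gb.Adj (Fin.cast h i) (Fin.cast h j))
    (hGa : IsMonotoneCaterpillar Ga) : IsMonotoneCaterpillar Gb := by
  subst h
  have he : Ga = Gb := by
    ext i j
    simpa using hadj i j
  exact he ▸ hGa

end Stmt12Aux

namespace Stmt12Aux

lemma exists_adj_of_walk {V : Type*} {G : SimpleGraph V} {x y : V} (w : G.Walk x y)
    (h : x ≠ y) : ∃ u, G.Adj x u := by
  cases w with
  | nil => exact absurd rfl h
  | cons h' p => exact ⟨_, h'⟩

lemma bwd : ∀ m : ℕ, ∀ G : SimpleGraph (Fin m), G.Connected →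
    NoA G → NoB G → NoC G → NoD G → IsMonotoneCaterpillar G := by
  intro m
  induction m using Nat.strong_induction_on with
  | _ m IH =>
  intro G hconn hA hB hC hD
  classical
  rcases Nat.eq_zero_or_pos m with rfl | hm0
  · exact (hconn.nonempty.some).elim0
  by_cases hm1 : m = 1
  · subst hm1
    have hadj : ∀ i j : Fin (1+1-1), (orderedStar 1 1).Adj i j ↔
        G.Adj (Fin.cast rfl i) (Fin.cast rfl j) := by
      intro i j
      rw [star_adj]
      constructor
      · rintro ⟨hne, -⟩
        exact absurd (Fin.ext (by omega : (i:ℕ) = j)) hne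
      · intro hadj
        refine absurd (Fin.ext ?_ :
          (Fin.cast rfl i : Fin 1) = (Fin.cast rfl j : Fin 1)) hadj.ne
        have h1 := (Fin.cast rfl i : Fin 1).2
        have h2 := (Fin.cast rfl j : Fin 1).2
        omega
    exact imc_congr rfl hadj (IsMonotoneCaterpillar.star le_rfl le_rfl (Or.inl rfl))
  have hm2 : 2 ≤ m := by omega
  have hvlt : m - 1 < m := by omega
  set v : Fin m := ⟨m-1, hvlt⟩ with hv
  have hvval : (v:ℕ) = m - 1 := by rw [hv]
  -- v has a neighbor
  have hex : ∃ n : ℕ, ∃ h : n < m, G.Adj ⟨n, h⟩ v := by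
    have h0lt : 0 < m := by omega
    have hz : ((⟨0, h0lt⟩ : Fin m):ℕ) = 0 := rfl
    obtain ⟨w⟩ := hconn v ⟨0, h0lt⟩
    obtain ⟨u, hu⟩ := exists_adj_of_walk w (Fin.ne_of_val_ne (by omega))
    exact ⟨(u:ℕ), u.2, hu.symm⟩
  have hspec := Nat.find_spec hex
  set c : ℕ := Nat.find hex with hcdef
  obtain ⟨hclt, hcadj⟩ : ∃ h : c < m, G.Adj ⟨c, h⟩ v := hspec
  have hcmin : ∀ x : Fin m, G.Adj x v → c ≤ (x:ℕ) := by
    intro x hx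
    by_contra hcon
    exact Nat.find_min hex (by omega) ⟨x.2, hx⟩
  have hcv : c < m - 1 := by
    have hne : (⟨c, hclt⟩ : Fin m) ≠ v := G.ne_of_adj hcadj
    have : c ≠ m - 1 := fun h => hne (Fin.ext h)
    omega
  -- edge classification
  have hEdge : ∀ x y : Fin m, G.Adj x y → (x:ℕ) < y →
      ((y:ℕ) ≤ c) ∨ ((x:ℕ) = c ∧ c < y ∧ (y:ℕ) < m - 1) ∨ ((y:ℕ) = m - 1 ∧ c ≤ x) := by
    intro x y hxy hlt
    rcases le_or_gt (y:ℕ) c with hyc | hyc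
    · exact Or.inl hyc
    by_cases hym : (y:ℕ) = m - 1
    · refine Or.inr (Or.inr ⟨hym, hcmin x ?_⟩)
      have hyv : y = v := Fin.ext (by rw [hvval]; exact hym)
      exact hyv ▸ hxy
    · have hylt : (y:ℕ) < m - 1 := by have := y.2; omega
      refine Or.inr (Or.inl ⟨?_, hyc, hylt⟩)
      rcases lt_trichotomy (x:ℕ) c with h | h | h
      · exact absurd (hB x ⟨c, hclt⟩ y v h hyc (by rw [hvval]; omega) hxy hcadj) not_false
      · exact h
      · exact absurd (hA ⟨c, hclt⟩ x y v h hlt (by rw [hvval]; omega) hcadj hxy) not_false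
  -- every vertex other than v has a neighbor
  have hNbr : ∀ x : Fin m, x ≠ v → ∃ u : Fin m, G.Adj x u := by
    intro x hx
    obtain ⟨w⟩ := hconn x v
    exact exists_adj_of_walk w hx
  -- the induced graph on [0,c]
  have hle : c + 1 ≤ m := by omega
  set G' : SimpleGraph (Fin (c+1)) := G.comap (Fin.castLE hle) with hG'def
  have hG'adj : ∀ a b : Fin (c+1), G'.Adj a b ↔ G.Adj (Fin.castLE hle a) (Fin.castLE hle b) :=
    fun a b => by rw [hG'def]; rfl
  set proj : Fin m → Fin (c+1) := fun x => ⟨min (x:ℕ) c, by omega⟩ with hprojdef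
  have hprojval : ∀ x : Fin m, ((proj x : Fin (c+1)):ℕ) = min (x:ℕ) c := fun x => by
    rw [hprojdef]
  have key : ∀ x y : Fin m, G.Adj x y → (x:ℕ) < y →
      (proj x = proj y ∨ G'.Adj (proj x) (proj y)) := by
    intro x y hxy hlt
    rcases hEdge x y hxy hlt with h | ⟨h1, h2, h3⟩ | ⟨h1, h2⟩
    · right
      rw [hG'adj]
      refine (adj_congr G ?_ ?_).1 hxy
      · simp only [Fin.coe_castLE, hprojval]; omega
      · simp only [Fin.coe_castLE, hprojval]; omega
    · exact Or.inl (Fin.ext (by rw [hprojval, hprojval]; omega))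
    · exact Or.inl (Fin.ext (by rw [hprojval, hprojval]; omega))
  have walkProj : ∀ (x y : Fin m), G.Walk x y → G'.Reachable (proj x) (proj y) := by
    intro x y w
    induction w with
    | nil => exact SimpleGraph.Reachable.refl _
    | @cons x' u' y' h p ih =>
      rcases lt_trichotomy ((x':ℕ)) ((u':ℕ)) with hlt | heq | hgt
      · rcases key x' u' h hlt with he | ha
        · rw [he]; exact ih
        · exact ha.reachable.trans ih
      · rw [show x' = u' from Fin.ext heq]; exact ih
      · rcases key u' x' h.symm hgt with he | ha
        · rw [← he]; exact ih
        · exact ha.symm.reachable.trans ih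
  have hconn' : G'.Connected := by
    rw [SimpleGraph.connected_iff]
    refine ⟨fun a b => ?_, ⟨⟨0, by omega⟩⟩⟩
    obtain ⟨w⟩ := hconn (Fin.castLE hle a) (Fin.castLE hle b)
    have hr := walkProj _ _ w
    have ha : proj (Fin.castLE hle a) = a :=
      Fin.ext (by rw [hprojval]; have := a.2; simp only [Fin.coe_castLE]; omega)
    have hb : proj (Fin.castLE hle b) = b :=
      Fin.ext (by rw [hprojval]; have := b.2; simp only [Fin.coe_castLE]; omega)
    rwa [ha, hb] at hr
  have hA' : NoA G' := fun a b c' d h1 h2 h3 e1 e2 =>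
    hA _ _ _ _ (by simpa using h1) (by simpa using h2) (by simpa using h3) e1 e2
  have hB' : NoB G' := fun a b c' d h1 h2 h3 e1 e2 =>
    hB _ _ _ _ (by simpa using h1) (by simpa using h2) (by simpa using h3) e1 e2
  have hC' : NoC G' := fun a b c' d h1 h2 h3 e1 e2 e3 =>
    hC _ _ _ _ (by simpa using h1) (by simpa using h2) (by simpa using h3) e1 e2 e3
  have hD' : NoD G' := fun a b c' h1 h2 e1 e2 e3 =>
    hD _ _ _ (by simpa using h1) (by simpa using h2) e1 e2 e3
  have hIMC' : IsMonotoneCaterpillar G' := IH (c+1) (by omega) G' hconn' hA' hB' hC' hD'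
  by_cases hcase : ∃ w : Fin m, c < (w:ℕ) ∧ (w:ℕ) < m - 1 ∧ G.Adj w v
  · -- Case R: the last block is S_{m-c,1}, centered at the last vertex
    obtain ⟨w₀, hw₀1, hw₀2, hw₀3⟩ := hcase
    have hR1 : ∀ w : Fin m, c < (w:ℕ) → (w:ℕ) < m - 1 → G.Adj w v := by
      intro w hw1 hw2
      obtain ⟨u, hu⟩ := hNbr w (by intro h; rw [h, hvval] at hw2; omega)
      rcases lt_trichotomy ((u:ℕ)) ((w:ℕ)) with h | h | h
      · rcases hEdge u w hu.symm h with h' | ⟨h1', h2', h3'⟩ | ⟨h1', h2'⟩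
        · omega
        · exfalso
          have hcw : G.Adj ⟨c, hclt⟩ w := (adj_congr G h1' rfl).1 hu.symm
          rcases lt_trichotomy ((w:ℕ)) ((w₀:ℕ)) with hh | hh | hh
          · exact hC ⟨c, hclt⟩ w w₀ v hw1 hh (by rw [hvval]; omega) hcw hcadj hw₀3
          · exact hD ⟨c, hclt⟩ w v hw1 (by rw [hvval]; omega) hcw hcadj
              ((Fin.ext hh : w = w₀) ▸ hw₀3)
          · exact hB ⟨c, hclt⟩ w₀ w v hw₀1 hh (by rw [hvval]; omega) hcw hw₀3
        · omega
      · exact absurd (Fin.ext h.symm) (G.ne_of_adj hu)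
      · rcases hEdge w u hu h with h' | ⟨h1', h2', h3'⟩ | ⟨h1', h2'⟩
        · omega
        · omega
        · exact (adj_congr G rfl (by rw [hvval]; exact h1')).1 hu
    have hR2 : ∀ y : Fin m, c < (y:ℕ) → (y:ℕ) < m - 1 → ¬ G.Adj ⟨c, hclt⟩ y := by
      intro y h1 h2 hcy
      exact hD ⟨c, hclt⟩ y v h1 (by rw [hvval]; omega) hcy hcadj (hR1 y h1 h2)
    -- G = G' + S_{m-c,1}
    have hX : (c+1) + ((m-c) + 1 - 1) - 1 = m := by omega
    refine imc_congr hX ?_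
      (IsMonotoneCaterpillar.join (l := m - c) (r := 1) (by omega) le_rfl (Or.inr rfl) hIMC')
    intro i j
    have hi2 := i.2
    have hj2 := j.2
    rw [join_adj]
    constructor
    · rintro ⟨hne, (⟨a, b, hab, hi, hj⟩ | ⟨a, b, hab, hi, hj⟩)⟩
      · exact (adj_congr G (x := Fin.castLE hle a) (y := Fin.castLE hle b)
          (by simp only [Fin.coe_castLE, Fin.coe_cast]; omega)
          (by simp only [Fin.coe_castLE, Fin.coe_cast]; omega)).1 hab
      · rw [star_adj] at hab
        obtain ⟨hne', hz⟩ := hab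
        have ha2 := a.2
        have hb2 := b.2
        have hnev : (a:ℕ) ≠ b := fun hh => hne' (Fin.ext hh)
        rcases hz with hz | hz
        · -- i is the center (= m-1); j ∈ [c, m-1)
          have hadjjv : G.Adj (Fin.cast hX j) v := by
            rcases Nat.eq_zero_or_pos (b:ℕ) with hb0 | hb0
            · exact (adj_congr G (x := (⟨c, hclt⟩ : Fin m)) (y := v)
                (by simp only [Fin.coe_cast]; omega) rfl).1 hcadj
            · exact hR1 (Fin.cast hX j) (by simp only [Fin.coe_cast]; omega)
                (by simp only [Fin.coe_cast]; omega)
          exact (adj_congr G (x := v) (y := Fin.cast hX j)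
            (by simp only [Fin.coe_cast, hvval]; omega) rfl).1 hadjjv.symm
        · -- j is the center
          have hadjiv : G.Adj (Fin.cast hX i) v := by
            rcases Nat.eq_zero_or_pos (a:ℕ) with ha0 | ha0
            · exact (adj_congr G (x := (⟨c, hclt⟩ : Fin m)) (y := v)
                (by simp only [Fin.coe_cast]; omega) rfl).1 hcadj
            · exact hR1 (Fin.cast hX i) (by simp only [Fin.coe_cast]; omega)
                (by simp only [Fin.coe_cast]; omega)
          exact (adj_congr G (x := Fin.cast hX i) (y := v) rfl
            (by simp only [Fin.coe_cast, hvval]; omega)).1 hadjiv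
    · intro hGadj
      have haux : ∀ i' j' : Fin ((c+1) + ((m-c) + 1 - 1) - 1), (i':ℕ) < (j':ℕ) →
          G.Adj (Fin.cast hX i') (Fin.cast hX j') →
          (i' ≠ j' ∧
          ((∃ a b : Fin (c+1), G'.Adj a b ∧ (i':ℕ) = a ∧ (j':ℕ) = b) ∨
           (∃ a b : Fin ((m-c) + 1 - 1), (orderedStar (m-c) 1).Adj a b ∧
             (i':ℕ) = (a:ℕ) + ((c+1)-1) ∧ (j':ℕ) = (b:ℕ) + ((c+1)-1)))) := by
        intro i' j' hlt hadj'
        have hne : i' ≠ j' := fun hh => by rw [hh] at hlt; omega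
        have hi2' := i'.2
        have hj2' := j'.2
        refine ⟨hne, ?_⟩
        rcases hEdge _ _ hadj' (by simp only [Fin.coe_cast]; exact hlt)
          with h | ⟨h1, h2, h3⟩ | ⟨h1, h2⟩
        · rw [Fin.coe_cast] at h
          left
          refine ⟨⟨(i':ℕ), by omega⟩, ⟨(j':ℕ), by omega⟩, ?_, rfl, rfl⟩
          rw [hG'adj]
          exact (adj_congr G (x := Fin.cast hX i') (y := Fin.cast hX j')
            (by simp only [Fin.coe_castLE, Fin.coe_cast]) (by simp only [Fin.coe_castLE, Fin.coe_cast])).1 hadj'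
        · -- i' = c and c < j' < m-1 : contradicts hR2
          exfalso
          rw [Fin.coe_cast] at h1 h2 h3
          exact hR2 (Fin.cast hX j') (by simp only [Fin.coe_cast]; omega)
            (by simp only [Fin.coe_cast]; omega)
            ((adj_congr G (x := Fin.cast hX i') (y := Fin.cast hX j')
              (by simp only [Fin.coe_cast]; omega) rfl).1 hadj')
        · -- j' = m-1 : star edge
          right
          rw [Fin.coe_cast] at h1 h2
          refine ⟨⟨(i':ℕ) - c, by omega⟩, ⟨m - c - 1, by omega⟩, ?_,
            by show (i':ℕ) = (i':ℕ) - c + ((c+1)-1); omega,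
            by show (j':ℕ) = (m - c - 1) + ((c+1)-1); omega⟩
          rw [star_adj]
          exact ⟨Fin.ne_of_val_ne (show (i':ℕ) - c ≠ m - c - 1 by omega),
            Or.inr (show m - c - 1 = (m - c) - 1 by omega)⟩
      rcases lt_trichotomy ((i:ℕ)) ((j:ℕ)) with hlt | heq | hgt
      · exact haux i j hlt hGadj
      · exfalso
        have : Fin.cast hX i = Fin.cast hX j :=
          Fin.ext (by simp only [Fin.coe_cast]; exact heq)
        rw [this] at hGadj
        exact G.irrefl hGadj
      · obtain ⟨hne, hor⟩ := haux j i hgt hGadj.symm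
        refine ⟨hne.symm, ?_⟩
        rcases hor with ⟨a, b, hab, h1, h2⟩ | ⟨a, b, hab, h1, h2⟩
        · exact Or.inl ⟨b, a, hab.symm, h2, h1⟩
        · exact Or.inr ⟨b, a, hab.symm, h2, h1⟩
  · -- Case L: the last block is S_{1,m-c}, centered at c
    push_neg at hcase
    have hL1 : ∀ w : Fin m, c < (w:ℕ) → (w:ℕ) ≤ m - 1 → G.Adj ⟨c, hclt⟩ w := by
      intro w hw1 hw2
      by_cases hwv : (w:ℕ) = m - 1
      · exact (adj_congr G rfl (by rw [hvval]; omega)).1 hcadj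
      · obtain ⟨u, hu⟩ := hNbr w (fun h => by rw [h, hvval] at hwv; exact hwv rfl)
        rcases lt_trichotomy ((u:ℕ)) ((w:ℕ)) with h | h | h
        · rcases hEdge u w hu.symm h with h' | ⟨h1', h2', h3'⟩ | ⟨h1', h2'⟩
          · omega
          · exact (adj_congr G h1' rfl).1 hu.symm
          · omega
        · exact absurd (Fin.ext h.symm) (G.ne_of_adj hu)
        · rcases hEdge w u hu h with h' | ⟨h1', h2', h3'⟩ | ⟨h1', h2'⟩
          · omega
          · omega
          · exact absurd ((adj_congr G rfl (by rw [hvval]; exact h1')).1 hu)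
              (hcase w hw1 (by omega))
    have hL2 : ∀ x : Fin m, G.Adj x v → (x:ℕ) = c := by
      intro x hx
      have h1 := hcmin x hx
      have h2 : (x:ℕ) ≠ m - 1 := by
        intro hh
        exact (G.ne_of_adj hx) (Fin.ext (by rw [hvval]; exact hh))
      have h3 := x.2
      rcases Nat.eq_or_lt_of_le h1 with h | h
      · omega
      · exact absurd hx (hcase x h (by omega))
    have hX : (c+1) + (1 + (m-c) - 1) - 1 = m := by omega
    refine imc_congr hX ?_
      (IsMonotoneCaterpillar.join (l := 1) (r := m - c) le_rfl (by omega) (Or.inl rfl) hIMC')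
    intro i j
    have hi2 := i.2
    have hj2 := j.2
    rw [join_adj]
    constructor
    · rintro ⟨hne, (⟨a, b, hab, hi, hj⟩ | ⟨a, b, hab, hi, hj⟩)⟩
      · exact (adj_congr G (x := Fin.castLE hle a) (y := Fin.castLE hle b)
          (by simp only [Fin.coe_castLE, Fin.coe_cast]; omega)
          (by simp only [Fin.coe_castLE, Fin.coe_cast]; omega)).1 hab
      · rw [star_adj] at hab
        obtain ⟨hne', hz⟩ := hab
        have ha2 := a.2
        have hb2 := b.2
        have hnev : (a:ℕ) ≠ b := fun hh => hne' (Fin.ext hh)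
        rcases hz with hz | hz
        · -- i is the center (= c); j ∈ (c, m-1]
          exact (adj_congr G (x := (⟨c, hclt⟩ : Fin m)) (y := Fin.cast hX j)
            (by simp only [Fin.coe_cast]; omega) rfl).1
            (hL1 (Fin.cast hX j) (by simp only [Fin.coe_cast]; omega)
              (by simp only [Fin.coe_cast]; omega))
        · -- j is the center (= c); i ∈ (c, m-1]
          exact ((adj_congr G (x := (⟨c, hclt⟩ : Fin m)) (y := Fin.cast hX i)
            (by simp only [Fin.coe_cast]; omega) rfl).1
            (hL1 (Fin.cast hX i) (by simp only [Fin.coe_cast]; omega)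
              (by simp only [Fin.coe_cast]; omega))).symm
    · intro hGadj
      have haux : ∀ i' j' : Fin ((c+1) + (1 + (m-c) - 1) - 1), (i':ℕ) < (j':ℕ) →
          G.Adj (Fin.cast hX i') (Fin.cast hX j') →
          (i' ≠ j' ∧
          ((∃ a b : Fin (c+1), G'.Adj a b ∧ (i':ℕ) = a ∧ (j':ℕ) = b) ∨
           (∃ a b : Fin (1 + (m-c) - 1), (orderedStar 1 (m-c)).Adj a b ∧
             (i':ℕ) = (a:ℕ) + ((c+1)-1) ∧ (j':ℕ) = (b:ℕ) + ((c+1)-1)))) := by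
        intro i' j' hlt hadj'
        have hne : i' ≠ j' := fun hh => by rw [hh] at hlt; omega
        have hi2' := i'.2
        have hj2' := j'.2
        refine ⟨hne, ?_⟩
        have hstar : (i':ℕ) = c → c < (j':ℕ) → (j':ℕ) ≤ m - 1 →
            (∃ a b : Fin (1 + (m-c) - 1), (orderedStar 1 (m-c)).Adj a b ∧
             (i':ℕ) = (a:ℕ) + ((c+1)-1) ∧ (j':ℕ) = (b:ℕ) + ((c+1)-1)) := by
          intro hic hcj hjm
          refine ⟨⟨0, by omega⟩, ⟨(j':ℕ) - c, by omega⟩, ?_,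
            by show (i':ℕ) = 0 + ((c+1)-1); omega,
            by show (j':ℕ) = (j':ℕ) - c + ((c+1)-1); omega⟩
          rw [star_adj]
          exact ⟨Fin.ne_of_val_ne (show (0:ℕ) ≠ (j':ℕ) - c by omega),
            Or.inl (show (0:ℕ) = 1 - 1 by omega)⟩
        rcases hEdge _ _ hadj' (by simp only [Fin.coe_cast]; exact hlt)
          with h | ⟨h1, h2, h3⟩ | ⟨h1, h2⟩
        · rw [Fin.coe_cast] at h
          left
          refine ⟨⟨(i':ℕ), by omega⟩, ⟨(j':ℕ), by omega⟩, ?_, rfl, rfl⟩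
          rw [hG'adj]
          exact (adj_congr G (x := Fin.cast hX i') (y := Fin.cast hX j')
            (by simp only [Fin.coe_castLE, Fin.coe_cast])
            (by simp only [Fin.coe_castLE, Fin.coe_cast])).1 hadj'
        · rw [Fin.coe_cast] at h1 h2 h3
          exact Or.inr (hstar h1 h2 (by omega))
        · -- j' = m-1 ; need i' = c
          rw [Fin.coe_cast] at h1 h2
          have hadjv : G.Adj (Fin.cast hX i') v :=
            (adj_congr G (x := Fin.cast hX i') (y := Fin.cast hX j') rfl
              (by simp only [Fin.coe_cast, hvval]; omega)).1 hadj'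
          have hic : (i':ℕ) = c := by
            have := hL2 (Fin.cast hX i') hadjv
            simpa using this
          exact Or.inr (hstar hic (by omega) (by omega))
      rcases lt_trichotomy ((i:ℕ)) ((j:ℕ)) with hlt | heq | hgt
      · exact haux i j hlt hGadj
      · exfalso
        have : Fin.cast hX i = Fin.cast hX j :=
          Fin.ext (by simp only [Fin.coe_cast]; exact heq)
        rw [this] at hGadj
        exact G.irrefl hGadj
      · obtain ⟨hne, hor⟩ := haux j i hgt hGadj.symm
        refine ⟨hne.symm, ?_⟩
        rcases hor with ⟨a, b, hab, h1, h2⟩ | ⟨a, b, hab, h1, h2⟩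
        · exact Or.inl ⟨b, a, hab.symm, h2, h1⟩
        · exact Or.inr ⟨b, a, hab.symm, h2, h1⟩

end Stmt12Aux

/-- A connected ordered graph is a monotone caterpillar graph iff it
contains none of `A`, `B`, `C`, `D = K_3` as an ordered subgraph. -/
theorem stmt_12 (m : ℕ) (G : SimpleGraph (Fin m)) (hG : G.Connected) :
    IsMonotoneCaterpillar G ↔
      (¬ OrderedSubgraph graphA G ∧ ¬ OrderedSubgraph graphB G ∧
       ¬ OrderedSubgraph graphC G ∧ ¬ OrderedSubgraph (⊤ : SimpleGraph (Fin 3)) G) := by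
  constructor
  · intro h
    obtain ⟨hA, hB, hC, hD⟩ := Stmt12Aux.fwd h
    exact ⟨(Stmt12Aux.notA_iff G).2 hA, (Stmt12Aux.notB_iff G).2 hB,
      (Stmt12Aux.notC_iff G).2 hC, (Stmt12Aux.notD_iff G).2 hD⟩
  · rintro ⟨h1, h2, h3, h4⟩
    exact Stmt12Aux.bwd m G hG ((Stmt12Aux.notA_iff G).1 h1) ((Stmt12Aux.notB_iff G).1 h2)
      ((Stmt12Aux.notC_iff G).1 h3) ((Stmt12Aux.notD_iff G).1 h4)
end

section
/- An ordered tree G is a monotone caterpillar graph if and only if G does not contain any ordered tree on four vertices that is not a monotone caterpillar graph as an ordered subgraph. -/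
/-! ### Auxiliary theory for statement 13 -/

/-- No two vertex-disjoint (or left-endpoint-sharing) edges overlap improperly. -/
def NoCross {n : ℕ} (G : SimpleGraph (Fin n)) : Prop :=
  ∀ a b c d : Fin n, G.Adj a b → G.Adj c d →
    (a : ℕ) < b → (c : ℕ) < d → (a : ℕ) < c → (c : ℕ) < b → (b : ℕ) = d

/-- No "center switching" configuration. -/
def NoSwitch {n : ℕ} (G : SimpleGraph (Fin n)) : Prop :=
  ∀ a b c d : Fin n, G.Adj a b → G.Adj a d → G.Adj c d →
    (a : ℕ) < b → (b : ℕ) < d → (a : ℕ) < c → (c : ℕ) < d → False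

lemma star_adj {l r : ℕ} {i j : Fin (l + r - 1)} :
    (orderedStar l r).Adj i j ↔ i ≠ j ∧ ((i : ℕ) = l - 1 ∨ (j : ℕ) = l - 1) :=
  SimpleGraph.fromRel_adj _ i j

/-- In a one-sided star every sorted edge has its center on the appropriate side. -/
lemma star_edge {l r : ℕ} (h : l = 1 ∨ r = 1) {i j : Fin (l + r - 1)}
    (hij : (orderedStar l r).Adj i j) (hlt : (i : ℕ) < j) :
    (l = 1 ∧ (i : ℕ) = 0) ∨ (r = 1 ∧ (j : ℕ) = l - 1) := by
  rw [star_adj] at hij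
  obtain ⟨hne, hc | hc⟩ := hij
  · rcases h with h1 | h1
    · exact Or.inl ⟨h1, by omega⟩
    · exfalso
      have := j.isLt
      omega
  · rcases h with h1 | h1
    · exfalso; omega
    · exact Or.inr ⟨h1, hc⟩

lemma star_noCross (l r : ℕ) (h : l = 1 ∨ r = 1) : NoCross (orderedStar l r) := by
  intro a b c d hab hcd h1 h2 h3 h4
  rcases star_edge h hab h1 with ⟨hl, ha⟩ | ⟨hr, hb⟩ <;>
    rcases star_edge h hcd h2 with ⟨hl', hc⟩ | ⟨hr', hd⟩ <;> omega

lemma star_noSwitch (l r : ℕ) (h : l = 1 ∨ r = 1) : NoSwitch (orderedStar l r) := by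
  intro a b c d hab had hcd h1 h2 h3 h4
  rcases star_edge h hab h1 with ⟨hl, ha⟩ | ⟨hr, hb⟩ <;>
    rcases star_edge h hcd h4 with ⟨hl', hc⟩ | ⟨hr', hd⟩ <;>
      rcases star_edge h had (by omega) with ⟨hl'', ha'⟩ | ⟨hr'', hd'⟩ <;> omega

/-- Clean elimination for join adjacency. -/
lemma join_adj_elim {m k : ℕ} {G : SimpleGraph (Fin m)} {H : SimpleGraph (Fin k)}
    {i j : Fin (m + k - 1)} (hij : (orderedJoin G H).Adj i j) :
    (∃ a b : Fin m, G.Adj a b ∧ (i : ℕ) = (a : ℕ) ∧ (j : ℕ) = (b : ℕ)) ∨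
    (∃ a b : Fin k, H.Adj a b ∧ (i : ℕ) = (a : ℕ) + (m - 1) ∧ (j : ℕ) = (b : ℕ) + (m - 1)) := by
  rw [orderedJoin, SimpleGraph.fromRel_adj] at hij
  obtain ⟨-, h | h⟩ := hij
  · exact h
  · rcases h with ⟨a, b, hab, h1, h2⟩ | ⟨a, b, hab, h1, h2⟩
    · exact Or.inl ⟨b, a, hab.symm, h2, h1⟩
    · exact Or.inr ⟨b, a, hab.symm, h2, h1⟩

lemma join_noCross {m k : ℕ} {G : SimpleGraph (Fin m)} {H : SimpleGraph (Fin k)}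
    (hG : NoCross G) (hH : NoCross H) : NoCross (orderedJoin G H) := by
  intro a b c d hab hcd h1 h2 h3 h4
  rcases join_adj_elim hab with ⟨a', b', hab', ha, hb⟩ | ⟨a', b', hab', ha, hb⟩ <;>
    rcases join_adj_elim hcd with ⟨c', d', hcd', hc, hd⟩ | ⟨c', d', hcd', hc, hd⟩
  · have := hG a' b' c' d' hab' hcd' (by omega) (by omega) (by omega) (by omega)
    omega
  · have := b'.isLt; omega
  · have := d'.isLt; omega
  · have := hH a' b' c' d' hab' hcd' (by omega) (by omega) (by omega) (by omega)
    omega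

lemma join_noSwitch {m k : ℕ} {G : SimpleGraph (Fin m)} {H : SimpleGraph (Fin k)}
    (hG : NoSwitch G) (hH : NoSwitch H) : NoSwitch (orderedJoin G H) := by
  intro a b c d hab had hcd h1 h2 h3 h4
  rcases join_adj_elim had with ⟨a', d', had', ha, hd⟩ | ⟨a', d', had', ha, hd⟩
  · rcases join_adj_elim hab with ⟨a'', b', hab', ha', hb⟩ | ⟨a'', b', hab', ha', hb⟩
    · rcases join_adj_elim hcd with ⟨c', d'', hcd', hc, hd'⟩ | ⟨c', d'', hcd', hc, hd'⟩
      · have ha2 : a'' = a' := Fin.ext (by omega)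
        have hd2 : d'' = d' := Fin.ext (by omega)
        exact hG a' b' c' d' (ha2 ▸ hab') had' (hd2 ▸ hcd') (by omega) (by omega)
          (by omega) (by omega)
      · have := d'.isLt; omega
    · have := d'.isLt; omega
  · rcases join_adj_elim hab with ⟨a'', b', hab', ha', hb⟩ | ⟨a'', b', hab', ha', hb⟩
    · have := b'.isLt; omega
    · rcases join_adj_elim hcd with ⟨c', d'', hcd', hc, hd'⟩ | ⟨c', d'', hcd', hc, hd'⟩
      · have := d''.isLt; omega
      · have ha2 : a'' = a' := Fin.ext (by omega)
        have hd2 : d'' = d' := Fin.ext (by omega)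
        exact hH a' b' c' d' (ha2 ▸ hab') had' (hd2 ▸ hcd') (by omega) (by omega)
          (by omega) (by omega)

lemma cat_noCross_noSwitch {m : ℕ} {G : SimpleGraph (Fin m)}
    (h : IsMonotoneCaterpillar G) : NoCross G ∧ NoSwitch G := by
  induction h with
  | star hl hr h => exact ⟨star_noCross _ _ h, star_noSwitch _ _ h⟩
  | join hl hr h hG ih =>
      exact ⟨join_noCross ih.1 (star_noCross _ _ h), join_noSwitch ih.2 (star_noSwitch _ _ h)⟩

/-! ### Restriction of an ordered graph to an initial segment -/

section Restrict
variable {m : ℕ} (G : SimpleGraph (Fin m))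

/-- restriction of an ordered graph to the first k vertices -/
def gRestrict (k : ℕ) (h : k ≤ m) : SimpleGraph (Fin k) where
  Adj i j := G.Adj (Fin.castLE h i) (Fin.castLE h j)
  symm := ⟨fun _ _ hh => G.adj_symm hh⟩
  loopless := ⟨fun _ hh => G.irrefl hh⟩

lemma gRestrict_adj {k : ℕ} (h : k ≤ m) (i j : Fin k) :
    (gRestrict G k h).Adj i j ↔ G.Adj (Fin.castLE h i) (Fin.castLE h j) := Iff.rfl

lemma gRestrict_acyclic {k : ℕ} (h : k ≤ m) (ha : G.IsAcyclic) :
    (gRestrict G k h).IsAcyclic := by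
  intro v c hc
  have hinj : Function.Injective (Fin.castLE h) := Fin.castLE_injective h
  let f : gRestrict G k h →g G := ⟨Fin.castLE h, fun hadj => hadj⟩
  exact ha (c.map f) (hc.map hinj)

lemma adj_of_walk_ne {z t : Fin m} (hne : z ≠ t) (w : G.Walk z t) : ∃ y, G.Adj z y := by
  cases w with
  | nil => exact absurd rfl hne
  | cons h _ => exact ⟨_, h⟩

/-- every vertex has a neighbor in a connected graph on ≥ 2 vertices -/
lemma exists_nbr (hc : G.Connected) (hm : 2 ≤ m) (z : Fin m) : ∃ y, G.Adj z y := by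
  have h0 : (0 : ℕ) < m := by omega
  have h1 : (1 : ℕ) < m := by omega
  by_cases hz : z = ⟨0, h0⟩
  · have hne : z ≠ ⟨1, h1⟩ := by
      rw [hz]; intro hh; exact absurd (congrArg Fin.val hh) (by simp)
    obtain ⟨w⟩ := hc.preconnected z ⟨1, h1⟩
    exact adj_of_walk_ne G hne w
  · obtain ⟨w⟩ := hc.preconnected z ⟨0, h0⟩
    exact adj_of_walk_ne G hz w

end Restrict

/-- transport of `IsMonotoneCaterpillar` across an equality of sizes -/
lemma mc_congr : ∀ {n m : ℕ} (h : n = m) (H : SimpleGraph (Fin n)),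
    IsMonotoneCaterpillar H → ∀ (G : SimpleGraph (Fin m)),
    (∀ i j : Fin n, H.Adj i j ↔ G.Adj (Fin.cast h i) (Fin.cast h j)) →
    IsMonotoneCaterpillar G := by
  intro n m h H hH
  subst h
  intro G hadj
  have : H = G := by
    ext i j
    simpa using hadj i j
  exact this ▸ hH

lemma adj_symm_ext {n n' : ℕ} (h : n = n') (A : SimpleGraph (Fin n)) (B : SimpleGraph (Fin n'))
    (hs : ∀ i j : Fin n, (i : ℕ) < j → (A.Adj i j ↔ B.Adj (Fin.cast h i) (Fin.cast h j))) :
    ∀ i j, A.Adj i j ↔ B.Adj (Fin.cast h i) (Fin.cast h j) := by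
  intro i j
  rcases Nat.lt_trichotomy (i : ℕ) (j : ℕ) with hij | hij | hij
  · exact hs i j hij
  · have : i = j := Fin.ext hij
    subst this
    constructor
    · intro hk; exact absurd rfl hk.ne
    · intro hk; exact absurd rfl hk.ne
  · exact ⟨fun hk => ((hs j i hij).mp hk.symm).symm, fun hk => ((hs j i hij).mpr hk.symm).symm⟩

/-- Main structural lemma: an ordered tree with no crossing and no switching
configuration is a monotone caterpillar. -/
lemma tree_noCross_noSwitch_cat : ∀ m : ℕ, ∀ G : SimpleGraph (Fin m), G.Connected →
    G.IsAcyclic → NoCross G → NoSwitch G → IsMonotoneCaterpillar G := by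
  intro m
  induction m using Nat.strong_induction_on with
  | _ m IH =>
  intro G hconn hacyc hnc hns
  classical
  rcases Nat.lt_or_ge m 2 with hm | hm
  · -- m = 0 or m = 1
    have hm0 : m ≠ 0 := by
      intro h0
      have := hconn.nonempty
      rw [h0] at this
      exact this.elim fun x => x.elim0
    have hm1 : m = 1 := by omega
    subst hm1
    have hGeq : G = orderedStar 1 1 := by
      ext i j
      have hij : i = j := Subsingleton.elim i j
      subst hij
      constructor
      · intro hk; exact absurd rfl hk.ne
      · intro hk; exact absurd rfl hk.ne
    rw [hGeq]
    exact .star le_rfl le_rfl (Or.inl rfl)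
  · -- m ≥ 2
    have hm1 : m - 1 < m := by omega
    obtain ⟨last, hlastval⟩ : ∃ x : Fin m, (x : ℕ) = m - 1 := ⟨⟨m - 1, hm1⟩, rfl⟩
    obtain ⟨y0, hy0⟩ := exists_nbr G hconn hm last
    -- minimal neighbor of the last vertex
    have hex : ∃ k, ∃ y : Fin m, G.Adj last y ∧ (y : ℕ) = k := ⟨_, y0, hy0, rfl⟩
    obtain ⟨p, hp, hpP⟩ := Nat.find_spec hex
    set P : ℕ := Nat.find hex with hPdef
    have hpmin : ∀ y, G.Adj last y → P ≤ (y : ℕ) := fun y hy =>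
      Nat.find_min' hex ⟨y, hy, rfl⟩
    have hPlt : P < m - 1 := by
      have h1 : p ≠ last := fun hh => G.irrefl (hh ▸ hp)
      have h2 : (p : ℕ) ≠ m - 1 := fun hh => h1 (Fin.ext (hh.trans hlastval.symm))
      have := p.isLt
      omega
    have hPm : P + 1 ≤ m := by omega
    -- reusable components
    have hG'conn_aux : (∀ x y : Fin m, G.Adj x y → (x : ℕ) ≤ P → P < (y : ℕ) →
        (x : ℕ) = P) → (gRestrict G (P+1) hPm).Connected := by
      intro hbound
      rw [SimpleGraph.connected_iff]
      refine ⟨?_, ⟨⟨0, by omega⟩⟩⟩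
      set proj : Fin m → Fin (P+1) := fun x =>
        if hx : (x : ℕ) ≤ P then ⟨x, by omega⟩ else ⟨P, by omega⟩ with hproj
      have hproj_small : ∀ x : Fin m, (hx : (x : ℕ) ≤ P) → proj x = ⟨(x : ℕ), by omega⟩ := by
        intro x hx; simp [hproj, hx]
      have hproj_big : ∀ x : Fin m, ¬((x : ℕ) ≤ P) → proj x = ⟨P, by omega⟩ := by
        intro x hx; simp [hproj, hx]
      have hstep : ∀ x y : Fin m, G.Adj x y →
          (gRestrict G (P+1) hPm).Reachable (proj x) (proj y) := by
        intro x y hxy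
        rcases le_or_gt (x : ℕ) P with hx | hx <;> rcases le_or_gt (y : ℕ) P with hy | hy
        · apply SimpleGraph.Adj.reachable
          rw [gRestrict_adj]
          have e1 : Fin.castLE hPm (proj x) = x := by
            rw [hproj_small x hx]; exact Fin.ext rfl
          have e2 : Fin.castLE hPm (proj y) = y := by
            rw [hproj_small y hy]; exact Fin.ext rfl
          rw [e1, e2]; exact hxy
        · have hxP : (x : ℕ) = P := hbound x y hxy hx hy
          have e : proj x = proj y := by
            rw [hproj_small x hx, hproj_big y (not_le.mpr hy)]
            exact Fin.ext hxP
          rw [e]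
        · have hyP : (y : ℕ) = P := hbound y x hxy.symm hy hx
          have e : proj x = proj y := by
            rw [hproj_small y hy, hproj_big x (not_le.mpr hx)]
            exact Fin.ext hyP.symm
          rw [e]
        · have e : proj x = proj y := by
            rw [hproj_big x (not_le.mpr hx), hproj_big y (not_le.mpr hy)]
          rw [e]
      have hwalk : ∀ (x y : Fin m) (w : G.Walk x y),
          (gRestrict G (P+1) hPm).Reachable (proj x) (proj y) := by
        intro x y w
        induction w with
        | nil => exact SimpleGraph.Reachable.refl _
        | cons h w ih => exact (hstep _ _ h).trans ih
      intro u' v'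
      obtain ⟨w⟩ := hconn.preconnected (Fin.castLE hPm u') (Fin.castLE hPm v')
      have hr := hwalk _ _ w
      have hu : ((Fin.castLE hPm u' : Fin m) : ℕ) ≤ P := by
        have := u'.isLt; simp only [Fin.coe_castLE]; omega
      have hv : ((Fin.castLE hPm v' : Fin m) : ℕ) ≤ P := by
        have := v'.isLt; simp only [Fin.coe_castLE]; omega
      rwa [hproj_small _ hu, hproj_small _ hv,
        (by exact Fin.ext rfl : (⟨((Fin.castLE hPm u' : Fin m) : ℕ), _⟩ : Fin (P+1)) = u'),
        (by exact Fin.ext rfl : (⟨((Fin.castLE hPm v' : Fin m) : ℕ), _⟩ : Fin (P+1)) = v')] at hr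
    have hG'cat_aux : (∀ x y : Fin m, G.Adj x y → (x : ℕ) ≤ P → P < (y : ℕ) →
        (x : ℕ) = P) → IsMonotoneCaterpillar (gRestrict G (P+1) hPm) := by
      intro hbound
      refine IH (P+1) (by omega) _ (hG'conn_aux hbound) (gRestrict_acyclic G hPm hacyc) ?_ ?_
      · intro a b c d hab hcd h1 h2 h3 h4
        exact hnc _ _ _ _ hab hcd h1 h2 h3 h4
      · intro a b c d hab had hcd h1 h2 h3 h4
        exact hns _ _ _ _ hab had hcd h1 h2 h3 h4
    by_cases hq : ∃ q, G.Adj last q ∧ q ≠ p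
    · -- CASE A : the last vertex is the center of the final star S_{l,1}
      obtain ⟨q, hq1, hq2⟩ := hq
      have hqP : P < (q : ℕ) := by
        have h1 := hpmin q hq1
        have h2 : (q : ℕ) ≠ (p : ℕ) := fun hh => hq2 (Fin.ext hh)
        omega
      have hqlt : (q : ℕ) < m - 1 := by
        have h1 : q ≠ last := fun hh => G.irrefl (hh ▸ hq1)
        have h2 : (q : ℕ) ≠ m - 1 := fun hh => h1 (Fin.ext (hh.trans hlastval.symm))
        have := q.isLt
        omega
      have hA0 : ∀ z : Fin m, P < (z : ℕ) → (z : ℕ) < m - 1 →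
          ∀ y : Fin m, G.Adj z y → y = last := by
        intro z hz1 hz2 y hzy
        rcases Nat.lt_trichotomy (y : ℕ) P with hyP | hyP | hyP
        · exfalso
          have := hnc y z p last hzy.symm hp.symm (by omega) (by omega) (by omega) (by omega)
          omega
        · exfalso
          have hyp : y = p := Fin.ext (by omega)
          exact hns p z q last (hyp ▸ hzy.symm) hp.symm hq1.symm (by omega) (by omega)
            (by omega) (by omega)
        · rcases Nat.lt_trichotomy (y : ℕ) (m - 1) with hym | hym | hym
          · exfalso
            rcases Nat.lt_trichotomy (z : ℕ) (y : ℕ) with hzy' | hzy' | hzy'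
            · have := hnc p last z y hp.symm hzy (by omega) (by omega) (by omega) (by omega)
              omega
            · exact hzy.ne (Fin.ext hzy')
            · have := hnc p last y z hp.symm hzy.symm (by omega) (by omega) (by omega)
                (by omega)
              omega
          · exact Fin.ext (by omega)
          · exfalso; have := y.isLt; omega
      have hA1 : ∀ z : Fin m, P < (z : ℕ) → (z : ℕ) < m - 1 → G.Adj z last := by
        intro z hz1 hz2
        obtain ⟨y, hy⟩ := exists_nbr G hconn hm z
        have := hA0 z hz1 hz2 y hy
        exact this ▸ hy
      have hbound : ∀ x y : Fin m, G.Adj x y → (x : ℕ) ≤ P → P < (y : ℕ) → (x : ℕ) = P := by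
        intro x y hxy hx hy
        rcases Nat.lt_trichotomy (y : ℕ) (m - 1) with hym | hym | hym
        · exfalso
          have h1 := hA0 y hy hym x hxy.symm
          have h2 := congrArg Fin.val h1
          omega
        · have hyl : y = last := Fin.ext (by omega)
          have := hpmin x (hyl ▸ hxy.symm)
          omega
        · exfalso; have := y.isLt; omega
      obtain ⟨l, hldef⟩ : ∃ l, l = m - P := ⟨_, rfl⟩
      have hl2 : 2 ≤ l := by omega
      have hsz : (P + 1) + (l + 1 - 1) - 1 = m := by omega
      apply mc_congr hsz _
        (IsMonotoneCaterpillar.join (l := l) (r := 1) (by omega) le_rfl (Or.inr rfl)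
          (hG'cat_aux hbound)) G
      apply adj_symm_ext
      intro i j hij
      have hIv : (Fin.cast hsz i : ℕ) = (i : ℕ) := rfl
      have hJv : (Fin.cast hsz j : ℕ) = (j : ℕ) := rfl
      have hjm : (j : ℕ) < m := by have := j.isLt; omega
      constructor
      · intro hadj
        rcases join_adj_elim hadj with ⟨a, b, hab, ha, hb⟩ | ⟨a, b, hab, ha, hb⟩
        · rw [gRestrict_adj] at hab
          have e1 : Fin.cast hsz i = Fin.castLE hPm a := Fin.ext (by rw [hIv]; exact ha)
          have e2 : Fin.cast hsz j = Fin.castLE hPm b := Fin.ext (by rw [hJv]; exact hb)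
          rw [e1, e2]; exact hab
        · rw [star_adj] at hab
          obtain ⟨hne, hc | hc⟩ := hab
          · -- a would be the center l-1, so i = m-1 < j : impossible
            exfalso
            have hbb := b.isLt
            omega
          · -- b is the center : j corresponds to the last vertex
            have hne' : (a : ℕ) ≠ (b : ℕ) := fun hh => hne (Fin.ext hh)
            have haa := a.isLt
            have ej : Fin.cast hsz j = last := Fin.ext (by rw [hJv]; omega)
            rw [ej]
            rcases Nat.eq_zero_or_pos (a : ℕ) with ha0 | ha0
            · have ei : Fin.cast hsz i = p := Fin.ext (by rw [hIv]; omega)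
              rw [ei]; exact hp.symm
            · exact hA1 _ (by omega) (by omega)
      · intro hadj
        rw [orderedJoin, SimpleGraph.fromRel_adj]
        refine ⟨fun hh => absurd (congrArg Fin.val hh) (by omega), ?_⟩
        rcases le_or_gt (j : ℕ) P with hjP | hjP
        · -- both in the left part
          left; left
          refine ⟨⟨(i : ℕ), by omega⟩, ⟨(j : ℕ), by omega⟩, ?_, rfl, rfl⟩
          rw [gRestrict_adj]
          have e1 : Fin.castLE hPm ⟨(i : ℕ), by omega⟩ = Fin.cast hsz i := Fin.ext rfl
          have e2 : Fin.castLE hPm ⟨(j : ℕ), by omega⟩ = Fin.cast hsz j := Fin.ext rfl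
          rw [e1, e2]; exact hadj
        · rcases le_or_gt (i : ℕ) P with hiP | hiP
          · -- boundary edge: must be {p, last}
            have hJm1 : (j : ℕ) = m - 1 := by
              by_contra hne
              have h1 := hA0 (Fin.cast hsz j) (by omega) (by omega) (Fin.cast hsz i) hadj.symm
              have h2 := congrArg Fin.val h1
              rw [hIv] at h2
              omega
            have hIP : (i : ℕ) = P := by
              have hjl : Fin.cast hsz j = last := Fin.ext (by rw [hJv]; omega)
              have h1 := hpmin (Fin.cast hsz i) (hjl ▸ hadj.symm)
              rw [hIv] at h1
              omega
            left; right
            refine ⟨⟨0, by omega⟩, ⟨l - 1, by omega⟩, ?_, by simp; omega, by simp; omega⟩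
            rw [star_adj]
            exact ⟨fun hh => absurd (congrArg Fin.val hh) (by simp; omega), Or.inr rfl⟩
          · -- both in the right part
            have hJm1 : (j : ℕ) = m - 1 := by
              by_contra hne
              have h1 := hA0 (Fin.cast hsz i) (by omega) (by omega) (Fin.cast hsz j) hadj
              have h2 := congrArg Fin.val h1
              rw [hJv] at h2
              omega
            left; right
            refine ⟨⟨(i : ℕ) - P, by omega⟩, ⟨l - 1, by omega⟩, ?_, by simp; omega,
              by simp; omega⟩
            rw [star_adj]
            exact ⟨fun hh => absurd (congrArg Fin.val hh) (by simp; omega), Or.inr rfl⟩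
    · -- CASE B : the last vertex is a pendant leaf of the final star S_{1,r}
      have huniq : ∀ y, G.Adj last y → y = p := by
        intro y hy
        by_contra hne
        exact hq ⟨y, hy, hne⟩
      have hB0 : ∀ z : Fin m, P < (z : ℕ) → (z : ℕ) < m - 1 →
          ∀ y : Fin m, G.Adj z y → y = p := by
        intro z hz1 hz2 y hzy
        rcases Nat.lt_trichotomy (y : ℕ) P with hyP | hyP | hyP
        · exfalso
          have := hnc y z p last hzy.symm hp.symm (by omega) (by omega) (by omega) (by omega)
          omega
        · exact Fin.ext (by omega)
        · exfalso
          rcases Nat.lt_trichotomy (y : ℕ) (m - 1) with hym | hym | hym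
          · rcases Nat.lt_trichotomy (z : ℕ) (y : ℕ) with hzy' | hzy' | hzy'
            · have := hnc p last z y hp.symm hzy (by omega) (by omega) (by omega) (by omega)
              omega
            · exact hzy.ne (Fin.ext hzy')
            · have := hnc p last y z hp.symm hzy.symm (by omega) (by omega) (by omega)
                (by omega)
              omega
          · have hyl : y = last := Fin.ext (by omega)
            have h1 := huniq z (hyl ▸ hzy.symm)
            have h2 := congrArg Fin.val h1
            omega
          · have := y.isLt; omega
      have hB1 : ∀ z : Fin m, P < (z : ℕ) → (z : ℕ) < m - 1 → G.Adj z p := by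
        intro z hz1 hz2
        obtain ⟨y, hy⟩ := exists_nbr G hconn hm z
        have := hB0 z hz1 hz2 y hy
        exact this ▸ hy
      have hbound : ∀ x y : Fin m, G.Adj x y → (x : ℕ) ≤ P → P < (y : ℕ) → (x : ℕ) = P := by
        intro x y hxy hx hy
        rcases Nat.lt_trichotomy (y : ℕ) (m - 1) with hym | hym | hym
        · have h1 := hB0 y hy hym x hxy.symm
          have h2 := congrArg Fin.val h1
          omega
        · have hyl : y = last := Fin.ext (by omega)
          have h1 := huniq x (hyl ▸ hxy.symm)
          have h2 := congrArg Fin.val h1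
          omega
        · exfalso; have := y.isLt; omega
      obtain ⟨r, hrdef⟩ : ∃ r, r = m - P := ⟨_, rfl⟩
      have hr2 : 2 ≤ r := by omega
      have hsz : (P + 1) + (1 + r - 1) - 1 = m := by omega
      apply mc_congr hsz _
        (IsMonotoneCaterpillar.join (l := 1) (r := r) le_rfl (by omega) (Or.inl rfl)
          (hG'cat_aux hbound)) G
      apply adj_symm_ext
      intro i j hij
      have hIv : (Fin.cast hsz i : ℕ) = (i : ℕ) := rfl
      have hJv : (Fin.cast hsz j : ℕ) = (j : ℕ) := rfl
      have hjm : (j : ℕ) < m := by have := j.isLt; omega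
      constructor
      · intro hadj
        rcases join_adj_elim hadj with ⟨a, b, hab, ha, hb⟩ | ⟨a, b, hab, ha, hb⟩
        · rw [gRestrict_adj] at hab
          have e1 : Fin.cast hsz i = Fin.castLE hPm a := Fin.ext (by rw [hIv]; exact ha)
          have e2 : Fin.cast hsz j = Fin.castLE hPm b := Fin.ext (by rw [hJv]; exact hb)
          rw [e1, e2]; exact hab
        · rw [star_adj] at hab
          obtain ⟨hne, hc | hc⟩ := hab
          · -- a is the center (value 0) : i corresponds to p
            have hne' : (a : ℕ) ≠ (b : ℕ) := fun hh => hne (Fin.ext hh)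
            have hbb := b.isLt
            have ei : Fin.cast hsz i = p := Fin.ext (by rw [hIv]; omega)
            rw [ei]
            rcases Nat.lt_trichotomy ((b : ℕ) + P) (m - 1) with hbm | hbm | hbm
            · exact (hB1 _ (by omega) (by omega)).symm
            · have ej : Fin.cast hsz j = last := Fin.ext (by rw [hJv]; omega)
              rw [ej]; exact hp.symm
            · exfalso; omega
          · -- b would be the center (value 0) : then j ≤ i, impossible
            exfalso
            have hne' : (a : ℕ) ≠ (b : ℕ) := fun hh => hne (Fin.ext hh)
            omega
      · intro hadj
        rw [orderedJoin, SimpleGraph.fromRel_adj]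
        refine ⟨fun hh => absurd (congrArg Fin.val hh) (by omega), ?_⟩
        rcases le_or_gt (j : ℕ) P with hjP | hjP
        · left; left
          refine ⟨⟨(i : ℕ), by omega⟩, ⟨(j : ℕ), by omega⟩, ?_, rfl, rfl⟩
          rw [gRestrict_adj]
          have e1 : Fin.castLE hPm ⟨(i : ℕ), by omega⟩ = Fin.cast hsz i := Fin.ext rfl
          have e2 : Fin.castLE hPm ⟨(j : ℕ), by omega⟩ = Fin.cast hsz j := Fin.ext rfl
          rw [e1, e2]; exact hadj
        · rcases le_or_gt (i : ℕ) P with hiP | hiP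
          · -- boundary edge : i = P
            have hIP : (i : ℕ) = P := by
              rcases Nat.lt_trichotomy (j : ℕ) (m - 1) with hym | hym | hym
              · have h1 := hB0 (Fin.cast hsz j) (by omega) (by omega) (Fin.cast hsz i)
                  hadj.symm
                have h2 := congrArg Fin.val h1
                rw [hIv] at h2
                omega
              · have hjl : Fin.cast hsz j = last := Fin.ext (by rw [hJv]; omega)
                have h1 := huniq (Fin.cast hsz i) (hjl ▸ hadj.symm)
                have h2 := congrArg Fin.val h1
                rw [hIv] at h2
                omega
              · exfalso; omega
            left; right
            refine ⟨⟨0, by omega⟩, ⟨(j : ℕ) - P, by omega⟩, ?_, by simp; omega,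
              by simp; omega⟩
            rw [star_adj]
            exact ⟨fun hh => absurd (congrArg Fin.val hh) (by simp; omega), Or.inl rfl⟩
          · -- both interior to the right part : impossible in case B
            exfalso
            rcases Nat.lt_trichotomy (j : ℕ) (m - 1) with hym | hym | hym
            · have h1 := hB0 (Fin.cast hsz i) (by omega) (by omega) (Fin.cast hsz j) hadj
              have h2 := congrArg Fin.val h1
              rw [hJv] at h2
              omega
            · have hjl : Fin.cast hsz j = last := Fin.ext (by rw [hJv]; omega)
              have h1 := huniq (Fin.cast hsz i) (hjl ▸ hadj.symm)
              have h2 := congrArg Fin.val h1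
              rw [hIv] at h2
              omega
            · omega

/-! ### The forbidden four-vertex patterns -/

def pat (s : List (Fin 4 × Fin 4)) : SimpleGraph (Fin 4) :=
  SimpleGraph.fromRel (fun i j => (i, j) ∈ s)

instance patDec (s : List (Fin 4 × Fin 4)) : DecidableRel (pat s).Adj := fun a b =>
  decidable_of_iff' _ (SimpleGraph.fromRel_adj _ a b)

lemma pat_adj {s : List (Fin 4 × Fin 4)} {i j : Fin 4} :
    (pat s).Adj i j ↔ i ≠ j ∧ ((i, j) ∈ s ∨ (j, i) ∈ s) :=
  SimpleGraph.fromRel_adj _ i j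

lemma acyclic_of_small (T : SimpleGraph (Fin 4)) [DecidableRel T.Adj]
    (hE : T.edgeFinset.card ≤ 3)
    (htri : ∀ x y z : Fin 4, ¬(T.Adj x y ∧ T.Adj y z ∧ T.Adj z x)) : T.IsAcyclic := by
  intro v c hc
  have h3 : 3 ≤ c.length := hc.three_le_length
  have hnd : c.edges.Nodup := hc.edges_nodup
  have hsub : ∀ e ∈ c.edges.toFinset, e ∈ T.edgeFinset := by
    intro e he
    rw [List.mem_toFinset] at he
    exact SimpleGraph.mem_edgeFinset.mpr (c.edges_subset_edgeSet he)
  have hlen : c.edges.length ≤ 3 := by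
    calc c.edges.length = c.edges.toFinset.card := (List.toFinset_card_of_nodup hnd).symm
    _ ≤ T.edgeFinset.card := Finset.card_le_card fun e he => hsub e he
    _ ≤ 3 := hE
  rw [SimpleGraph.Walk.length_edges] at hlen
  have hlen3 : c.length = 3 := le_antisymm hlen h3
  cases c with
  | nil => simp at hlen3
  | cons h1 q =>
    cases q with
    | nil => simp at hlen3
    | cons h2 r =>
      cases r with
      | nil => simp at hlen3
      | cons h3' s =>
        cases s with
        | nil => exact htri _ _ _ ⟨h1, h2, h3'⟩
        | cons h4 t => simp [SimpleGraph.Walk.length_cons] at hlen3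

/-- the ten forbidden patterns -/
def badPats : List (List (Fin 4 × Fin 4)) :=
  [[(0,2),(1,3),(0,1)], [(0,2),(1,3),(0,3)], [(0,2),(1,3),(1,2)], [(0,2),(1,3),(2,3)],
   [(0,3),(1,2),(0,1)], [(0,3),(1,2),(0,2)], [(0,3),(1,2),(1,3)], [(0,3),(1,2),(2,3)],
   [(0,1),(0,3),(2,3)], [(0,2),(0,3),(1,3)]]

lemma badPats_conn : ∀ s ∈ badPats, (pat s).Connected := by
  intro s hs
  fin_cases hs <;> exact (SimpleGraph.connected_iff _).mpr ⟨by decide, inferInstance⟩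

lemma badPats_acyclic : ∀ s ∈ badPats, (pat s).IsAcyclic := by
  intro s hs
  fin_cases hs <;> exact acyclic_of_small _ (by decide) (by decide)

lemma badPats_notCat : ∀ s ∈ badPats, ¬ IsMonotoneCaterpillar (pat s) := by
  intro s hs hcat
  obtain ⟨h1, h2⟩ := cat_noCross_noSwitch hcat
  fin_cases hs <;>
    first
      | exact absurd h1 (by unfold NoCross; decide)
      | exact absurd h2 (by unfold NoSwitch; decide)


def quad {m : ℕ} (w x y z : Fin m) : Fin 4 → Fin m := fun i =>
  if (i : ℕ) = 0 then w else if (i : ℕ) = 1 then x else if (i : ℕ) = 2 then y else z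

lemma exploit {m : ℕ} {G : SimpleGraph (Fin m)}
    (hNF : ∀ T : SimpleGraph (Fin 4), T.Connected → T.IsAcyclic →
      ¬ IsMonotoneCaterpillar T → ¬ OrderedSubgraph T G)
    (s : List (Fin 4 × Fin 4)) (hs : s ∈ badPats)
    {w x y z : Fin m} (h1 : (w : ℕ) < x) (h2 : (x : ℕ) < y) (h3 : (y : ℕ) < z)
    (hedges : ∀ i j : Fin 4, (i, j) ∈ s → G.Adj (quad w x y z i) (quad w x y z j)) :
    False := by
  apply hNF (pat s) (badPats_conn s hs) (badPats_acyclic s hs) (badPats_notCat s hs)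
  refine ⟨quad w x y z, ?_, ?_⟩
  · intro i j hij
    have hij' : (i : ℕ) < (j : ℕ) := hij
    have hi4 := i.isLt
    have hj4 := j.isLt
    unfold quad
    split_ifs <;> rw [Fin.lt_def] <;> omega
  · intro i j hadj
    rw [pat_adj] at hadj
    obtain ⟨-, hmem | hmem⟩ := hadj
    · exact hedges i j hmem
    · exact (hedges j i hmem).symm

lemma no_triangle {m : ℕ} {G : SimpleGraph (Fin m)} (ha : G.IsAcyclic) {x y z : Fin m}
    (hxy : G.Adj x y) (hyz : G.Adj y z) (hxz : G.Adj x z) : False := by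
  have hpath := SimpleGraph.isAcyclic_iff_path_unique.mp ha
  have hxne : x ∉ (SimpleGraph.Walk.cons hyz SimpleGraph.Walk.nil).support := by
    simp [SimpleGraph.Walk.support_cons]
    exact ⟨hxy.ne, hxz.ne⟩
  have p2ip : (SimpleGraph.Walk.cons hxy (SimpleGraph.Walk.cons hyz SimpleGraph.Walk.nil)).IsPath := by
    rw [SimpleGraph.Walk.cons_isPath_iff]
    exact ⟨(SimpleGraph.Path.singleton hyz).2, hxne⟩
  have heq := hpath (SimpleGraph.Path.singleton hxz)
    ⟨SimpleGraph.Walk.cons hxy (SimpleGraph.Walk.cons hyz SimpleGraph.Walk.nil), p2ip⟩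
  have hlen : (SimpleGraph.Path.singleton hxz : G.Walk x z).length =
      (SimpleGraph.Walk.cons hxy (SimpleGraph.Walk.cons hyz SimpleGraph.Walk.nil)).length := by
    rw [heq]
  simp [SimpleGraph.Path.singleton] at hlen

lemma walk_split {V : Type*} {G : SimpleGraph V} {u v : V} (w : G.Walk u v) :
    ∀ i : ℕ, i ≤ w.length → ∃ (w1 : G.Walk u (w.getVert i)) (w2 : G.Walk (w.getVert i) v),
      w1.length = i ∧ w2.length = w.length - i := by
  induction w with
  | nil =>
    intro i hi
    have hi0 : i = 0 := by simpa using hi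
    subst hi0
    exact ⟨.nil, .nil, rfl, rfl⟩
  | @cons x y z h p ih =>
    intro i hi
    cases i with
    | zero => exact ⟨.nil, .cons h p, rfl, rfl⟩
    | succ j =>
      have hj : j ≤ p.length := by simpa [SimpleGraph.Walk.length_cons] using hi
      obtain ⟨w1, w2, e1, e2⟩ := ih j hj
      refine ⟨.cons h w1, w2, by simp [SimpleGraph.Walk.length_cons, e1], ?_⟩
      rw [SimpleGraph.Walk.length_cons]
      exact e2.trans (Nat.add_sub_add_right _ _ _).symm

lemma NF_noSwitch {m : ℕ} {G : SimpleGraph (Fin m)} (hacyc : G.IsAcyclic)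
    (hNF : ∀ T : SimpleGraph (Fin 4), T.Connected → T.IsAcyclic →
      ¬ IsMonotoneCaterpillar T → ¬ OrderedSubgraph T G) : NoSwitch G := by
  intro a b c d hab had hcd h1 h2 h3 h4
  rcases Nat.lt_trichotomy (b : ℕ) (c : ℕ) with hbc | hbc | hbc
  · refine exploit hNF [(0,1),(0,3),(2,3)] (by simp [badPats]) h1 hbc h4 ?_
    intro i j hmem
    simp at hmem
    rcases hmem with ⟨rfl, rfl⟩ | ⟨rfl, rfl⟩ | ⟨rfl, rfl⟩
    · simpa [quad] using hab
    · simpa [quad] using had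
    · simpa [quad] using hcd
  · have hbc' : b = c := Fin.ext hbc
    have hbd : G.Adj b d := by rw [hbc']; exact hcd
    exact no_triangle hacyc hab hbd had.symm.symm
  · refine exploit hNF [(0,2),(0,3),(1,3)] (by simp [badPats]) h3 hbc h2 ?_
    intro i j hmem
    simp at hmem
    rcases hmem with ⟨rfl, rfl⟩ | ⟨rfl, rfl⟩ | ⟨rfl, rfl⟩
    · simpa [quad] using hab
    · simpa [quad] using had
    · simpa [quad] using hcd

lemma NF_noCross {m : ℕ} {G : SimpleGraph (Fin m)} (hconn : G.Connected)
    (hNF : ∀ T : SimpleGraph (Fin 4), T.Connected → T.IsAcyclic →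
      ¬ IsMonotoneCaterpillar T → ¬ OrderedSubgraph T G) : NoCross G := by
  classical
  intro a0 b0 c0 d0 hab0 hcd0 h10 h20 h30 h40
  by_contra hbd0
  -- Q k : there is a "bad pair" joined by a walk of length k
  set Q : ℕ → Prop := fun k => ∃ a b c d u v : Fin m, ∃ w : G.Walk u v,
      G.Adj a b ∧ G.Adj c d ∧ (a : ℕ) < b ∧ (c : ℕ) < d ∧ (a : ℕ) < c ∧ (c : ℕ) < b ∧
      ¬((b : ℕ) = (d : ℕ)) ∧ (u = a ∨ u = b) ∧ (v = c ∨ v = d) ∧ w.length = k with hQdef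
  have hQex : ∃ k, Q k := by
    obtain ⟨w⟩ := hconn.preconnected b0 c0
    exact ⟨w.length, a0, b0, c0, d0, b0, c0, w, hab0, hcd0, h10, h20, h30, h40, hbd0,
      Or.inr rfl, Or.inl rfl, rfl⟩
  set n := Nat.find hQex with hns
  obtain ⟨a, b, c, d, u, v, w, hab, hcd, h1, h2, h3, h4, hbd, hu, hv, hlen⟩ :=
    Nat.find_spec hQex
  rw [← hns] at hlen
  have hmin : ∀ k, k < n → ¬ Q k := fun k hk => Nat.find_min hQex hk
  clear_value n
  -- a helper producing the contradiction from any bad pair with a shorter connecting walk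
  have contra : ∀ (e₁ e₂ f₁ f₂ pp qq : Fin m) (w' : G.Walk pp qq),
      G.Adj e₁ e₂ → G.Adj f₁ f₂ → (e₁ : ℕ) < e₂ → (f₁ : ℕ) < f₂ →
      (e₁ : ℕ) ≠ f₁ → (e₁ : ℕ) ≠ f₂ → (e₂ : ℕ) ≠ f₁ → (e₂ : ℕ) ≠ f₂ →
      (f₁ : ℕ) < e₂ → (e₁ : ℕ) < f₂ →
      (pp = e₁ ∨ pp = e₂) → (qq = f₁ ∨ qq = f₂) → w'.length < n → False := by
    intro e₁ e₂ f₁ f₂ pp qq w' he hf l1 l2 d1 d2 d3 d4 o1 o2 hp hq hlt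
    rcases Nat.lt_trichotomy (e₁ : ℕ) (f₁ : ℕ) with hef | hef | hef
    · exact hmin w'.length hlt
        ⟨e₁, e₂, f₁, f₂, pp, qq, w', he, hf, l1, l2, hef, o1, d4, hp, hq, rfl⟩
    · exact d1 hef
    · exact hmin w'.length hlt
        ⟨f₁, f₂, e₁, e₂, qq, pp, w'.reverse, hf, he, l2, l1, hef, o2,
          (by omega), hq, hp, by simp⟩
  -- basic distinctness facts
  have hdis : (a : ℕ) ≠ c ∧ (a : ℕ) ≠ d ∧ (b : ℕ) ≠ c ∧ (b : ℕ) ≠ d := by omega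
  rcases Nat.eq_zero_or_pos n with hn0 | hn1
  · -- n = 0 : the two edges share a vertex, contradiction
    rw [hn0] at hlen
    cases w with
    | nil =>
      rcases hu with rfl | rfl <;> rcases hv with hv' | hv' <;>
        · have := congrArg Fin.val hv'; omega
    | cons h q => simp at hlen
  rcases Nat.lt_or_ge n 2 with hn2 | hn2
  · -- n = 1 : the edges are joined by a single edge: direct forbidden pattern
    have hn1' : n = 1 := by omega
    rw [hn1'] at hlen
    have huv : G.Adj u v := by
      cases w with
      | nil => simp at hlen
      | cons h q =>
        cases q with
        | nil => exact h
        | cons h' q' => simp [SimpleGraph.Walk.length_cons] at hlen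
    rcases Nat.lt_trichotomy (b : ℕ) (d : ℕ) with hbd' | hbd' | hbd'
    · -- crossing a < c < b < d, sorted (a, c, b, d)
      rcases hu with rfl | rfl <;> rcases hv with rfl | rfl
      · refine exploit hNF [(0,2),(1,3),(0,1)] (by simp [badPats]) h3 h4 hbd' ?_
        intro i j hmem
        simp at hmem
        rcases hmem with ⟨rfl, rfl⟩ | ⟨rfl, rfl⟩ | ⟨rfl, rfl⟩
        · simpa [quad] using hab
        · simpa [quad] using hcd
        · simpa [quad] using huv
      · refine exploit hNF [(0,2),(1,3),(0,3)] (by simp [badPats]) h3 h4 hbd' ?_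
        intro i j hmem
        simp at hmem
        rcases hmem with ⟨rfl, rfl⟩ | ⟨rfl, rfl⟩ | ⟨rfl, rfl⟩
        · simpa [quad] using hab
        · simpa [quad] using hcd
        · simpa [quad] using huv
      · refine exploit hNF [(0,2),(1,3),(1,2)] (by simp [badPats]) h3 h4 hbd' ?_
        intro i j hmem
        simp at hmem
        rcases hmem with ⟨rfl, rfl⟩ | ⟨rfl, rfl⟩ | ⟨rfl, rfl⟩
        · simpa [quad] using hab
        · simpa [quad] using hcd
        · simpa [quad] using huv.symm
      · refine exploit hNF [(0,2),(1,3),(2,3)] (by simp [badPats]) h3 h4 hbd' ?_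
        intro i j hmem
        simp at hmem
        rcases hmem with ⟨rfl, rfl⟩ | ⟨rfl, rfl⟩ | ⟨rfl, rfl⟩
        · simpa [quad] using hab
        · simpa [quad] using hcd
        · simpa [quad] using huv
    · exact hbd hbd'
    · -- nesting a < c < d < b, sorted (a, c, d, b)
      rcases hu with rfl | rfl <;> rcases hv with rfl | rfl
      · refine exploit hNF [(0,3),(1,2),(0,1)] (by simp [badPats]) h3 h2 hbd' ?_
        intro i j hmem
        simp at hmem
        rcases hmem with ⟨rfl, rfl⟩ | ⟨rfl, rfl⟩ | ⟨rfl, rfl⟩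
        · simpa [quad] using hab
        · simpa [quad] using hcd
        · simpa [quad] using huv
      · refine exploit hNF [(0,3),(1,2),(0,2)] (by simp [badPats]) h3 h2 hbd' ?_
        intro i j hmem
        simp at hmem
        rcases hmem with ⟨rfl, rfl⟩ | ⟨rfl, rfl⟩ | ⟨rfl, rfl⟩
        · simpa [quad] using hab
        · simpa [quad] using hcd
        · simpa [quad] using huv
      · refine exploit hNF [(0,3),(1,2),(1,3)] (by simp [badPats]) h3 h2 hbd' ?_
        intro i j hmem
        simp at hmem
        rcases hmem with ⟨rfl, rfl⟩ | ⟨rfl, rfl⟩ | ⟨rfl, rfl⟩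
        · simpa [quad] using hab
        · simpa [quad] using hcd
        · simpa [quad] using huv.symm
      · refine exploit hNF [(0,3),(1,2),(2,3)] (by simp [badPats]) h3 h2 hbd' ?_
        intro i j hmem
        simp at hmem
        rcases hmem with ⟨rfl, rfl⟩ | ⟨rfl, rfl⟩ | ⟨rfl, rfl⟩
        · simpa [quad] using hab
        · simpa [quad] using hcd
        · simpa [quad] using huv.symm
  · -- n ≥ 2
    have hgl : w.getVert n = v := by rw [← hlen]; exact w.getVert_length
    have hg0 : w.getVert 0 = u := w.getVert_zero
    -- interior vertices are distinct from a, b, c, d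
    have hfresh : ∀ i : ℕ, 0 < i → i < n → (w.getVert i : ℕ) ≠ a ∧ (w.getVert i : ℕ) ≠ b ∧
        (w.getVert i : ℕ) ≠ c ∧ (w.getVert i : ℕ) ≠ d := by
      intro i hi0 hin
      obtain ⟨w1, w2, e1, e2⟩ := walk_split w i (by omega)
      refine ⟨fun hh => ?_, fun hh => ?_, fun hh => ?_, fun hh => ?_⟩
      · exact hmin (n - i) (by omega) ⟨a, b, c, d, w.getVert i, v, w2, hab, hcd,
          h1, h2, h3, h4, hbd, Or.inl (Fin.ext hh), hv, by omega⟩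
      · exact hmin (n - i) (by omega) ⟨a, b, c, d, w.getVert i, v, w2, hab, hcd,
          h1, h2, h3, h4, hbd, Or.inr (Fin.ext hh), hv, by omega⟩
      · exact hmin i (by omega) ⟨a, b, c, d, u, w.getVert i, w1, hab, hcd,
          h1, h2, h3, h4, hbd, hu, Or.inl (Fin.ext hh), by omega⟩
      · exact hmin i (by omega) ⟨a, b, c, d, u, w.getVert i, w1, hab, hcd,
          h1, h2, h3, h4, hbd, hu, Or.inr (Fin.ext hh), by omega⟩
    by_cases hcross : ∃ i : ℕ, i < n ∧
        ¬(((w.getVert i : ℕ) ≤ c) ↔ ((w.getVert (i+1) : ℕ) ≤ c))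
    · -- some edge of the walk crosses the gap (c, c+1)
      obtain ⟨i, hi, hside⟩ := hcross
      have hadjE : G.Adj (w.getVert i) (w.getVert (i+1)) :=
        w.adj_getVert_succ (by omega)
      -- sorted endpoints of the crossing edge
      have hXY : ((w.getVert i : ℕ) ≤ c ∧ c < (w.getVert (i+1) : ℕ)) ∨
          ((w.getVert (i+1) : ℕ) ≤ c ∧ c < (w.getVert i : ℕ)) := by
        by_cases hX : (w.getVert i : ℕ) ≤ c
        · exact Or.inl ⟨hX, by omega⟩
        · exact Or.inr ⟨by omega, by omega⟩
      rcases Nat.eq_zero_or_pos i with hi0 | hip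
      · -- i = 0 : the crossing edge contains u; it is a bad pair with {c, d}
        subst hi0
        have hY := hfresh 1 one_pos (by omega)
        obtain ⟨w1', w2', e1', e2'⟩ := walk_split w 1 (by omega)
        simp only [Nat.zero_add] at hadjE hXY
        rw [hg0] at hadjE hXY
        have huval : (u : ℕ) ≠ c ∧ (u : ℕ) ≠ d := by
          rcases hu with h | h <;> rw [h] <;> omega
        rcases hXY with ⟨hXc, hYc⟩ | ⟨hYc, hXc⟩
        · exact contra u (w.getVert 1) c d (w.getVert 1) v w2' hadjE hcd (by omega) h2
            (by omega) (by omega) (by omega) (by omega) (by omega) (by omega)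
            (Or.inr rfl) hv (by omega)
        · exact contra (w.getVert 1) u c d (w.getVert 1) v w2' hadjE.symm hcd (by omega) h2
            (by omega) (by omega) (by omega) (by omega) (by omega) (by omega)
            (Or.inl rfl) hv (by omega)
      rcases Nat.lt_trichotomy i (n-1) with him | him | him
      · -- 0 < i < n - 1 : fully interior crossing edge; bad pair with {a, b}
        have hX := hfresh i hip (by omega)
        have hY := hfresh (i+1) (by omega) (by omega)
        obtain ⟨w1, w2, e1, e2⟩ := walk_split w i (by omega)
        rcases hXY with ⟨hXc, hYc⟩ | ⟨hYc, hXc⟩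
        · exact contra (w.getVert i) (w.getVert (i+1)) a b (w.getVert i) u w1.reverse
            hadjE hab (by omega) h1 (by omega) (by omega) (by omega) (by omega)
            (by omega) (by omega) (Or.inl rfl) hu
            (by simp; omega)
        · exact contra (w.getVert (i+1)) (w.getVert i) a b (w.getVert i) u w1.reverse
            hadjE.symm hab (by omega) h1 (by omega) (by omega) (by omega) (by omega)
            (by omega) (by omega) (Or.inr rfl) hu (by simp; omega)
      swap
      · -- impossible: n - 1 < i < n
        omega
      · -- i = n - 1 : the crossing edge contains v; bad pair with {a, b}
        subst him
        have hX := hfresh (n-1) hip (by omega)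
        obtain ⟨w1, w2, e1, e2⟩ := walk_split w (n-1) (by omega)
        have hsucc : n - 1 + 1 = n := by omega
        rw [hsucc, hgl] at hadjE hXY
        have hvval : (v : ℕ) ≠ a ∧ (v : ℕ) ≠ b := by
          rcases hv with h | h <;> rw [h] <;> omega
        rcases hXY with ⟨hXc, hYc⟩ | ⟨hYc, hXc⟩
        · exact contra (w.getVert (n-1)) v a b (w.getVert (n-1)) u w1.reverse
            hadjE hab (by omega) h1 (by omega) (by omega) (by omega) (by omega)
            (by omega) (by omega) (Or.inl rfl) hu (by simp; omega)
        · exact contra v (w.getVert (n-1)) a b (w.getVert (n-1)) u w1.reverse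
            hadjE.symm hab (by omega) h1 (by omega) (by omega) (by omega) (by omega)
            (by omega) (by omega) (Or.inr rfl) hu (by simp; omega)
    · -- no crossing: the whole walk stays on one side of the gap
      push_neg at hcross
      have hconst : ∀ i : ℕ, i ≤ n → (((w.getVert i : ℕ) ≤ c) ↔ ((u : ℕ) ≤ c)) := by
        intro i
        induction i with
        | zero => intro _; rw [hg0]
        | succ j ihj =>
          intro hj
          have h1' := hcross j (by omega)
          rw [← h1']
          exact ihj (by omega)
      rcases hu with hua | hub
      · -- u = a : the walk stays left of the gap, and v = c
        have hu_le : (u : ℕ) ≤ (c : ℕ) := by rw [hua]; omega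
        have hvc : (v : ℕ) = (c : ℕ) := by
          rcases hv with h | h
          · rw [h]
          · exfalso
            have hcon := (hconst n le_rfl).mpr hu_le
            rw [hgl, h] at hcon
            omega
        -- the last edge {X, v} with X < c is a bad pair with {a, b}
        have hX := hfresh (n-1) (by omega) (by omega)
        have hXc : (w.getVert (n-1) : ℕ) ≤ c := (hconst (n-1) (by omega)).mpr hu_le
        have hadjE : G.Adj (w.getVert (n-1)) (w.getVert (n-1+1)) :=
          w.adj_getVert_succ (by omega)
        have hsucc : n - 1 + 1 = n := by omega
        rw [hsucc, hgl] at hadjE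
        obtain ⟨w1, w2, e1, e2⟩ := walk_split w (n-1) (by omega)
        have huval : (u : ℕ) = (a : ℕ) := congrArg Fin.val hua
        exact contra (w.getVert (n-1)) v a b (w.getVert (n-1)) u w1.reverse
          hadjE hab (by omega) h1 (by omega) (by omega) (by omega) (by omega)
          (by omega) (by omega) (Or.inl rfl) (Or.inl hua) (by simp; omega)
      · -- u = b : the walk stays right of the gap, and v = d
        have hubv : (u : ℕ) = (b : ℕ) := congrArg Fin.val hub
        have hu_gt : ¬((u : ℕ) ≤ (c : ℕ)) := by omega
        have hvd : (v : ℕ) = (d : ℕ) := by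
          rcases hv with h | h
          · exfalso
            apply hu_gt
            apply (hconst n le_rfl).mp
            rw [hgl, h]
          · rw [h]
        have hvd' : v = d := by
          rcases hv with h | h
          · exfalso
            apply hu_gt
            apply (hconst n le_rfl).mp
            rw [hgl, h]
          · exact h
        rcases Nat.lt_trichotomy (b : ℕ) (d : ℕ) with hbd' | hbd' | hbd'
        · -- crossing (b < d) : the first edge {b, Y} with Y > c is a bad pair with {c, d}
          have hY := hfresh 1 one_pos (by omega)
          have hYc : ¬((w.getVert 1 : ℕ) ≤ c) := by
            intro hh
            exact hu_gt ((hconst 1 (by omega)).mp hh)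
          have hadjE : G.Adj (w.getVert 0) (w.getVert 1) := w.adj_getVert_succ (by omega)
          rw [hg0] at hadjE
          obtain ⟨w1', w2', e1', e2'⟩ := walk_split w 1 (by omega)
          have hlt2 : w2'.length < n := by omega
          rcases Nat.lt_trichotomy (u : ℕ) ((w.getVert 1 : ℕ)) with hor | hor | hor
          · exact contra u (w.getVert 1) c d (w.getVert 1) v w2' hadjE hcd (by omega) h2
              (by omega) (by omega) (by omega) (by omega) (by omega) (by omega)
              (Or.inr rfl) (Or.inr hvd') hlt2
          · exact absurd (Fin.ext hor) hadjE.ne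
          · exact contra (w.getVert 1) u c d (w.getVert 1) v w2' hadjE.symm hcd (by omega) h2
              (by omega) (by omega) (by omega) (by omega) (by omega) (by omega)
              (Or.inl rfl) (Or.inr hvd') hlt2
        · exact hbd hbd'
        · -- nesting (d < b) : the last edge {X, d} with X > c is a bad pair with {a, b}
          have hX := hfresh (n-1) (by omega) (by omega)
          have hXc : ¬((w.getVert (n-1) : ℕ) ≤ c) := by
            intro hh
            exact hu_gt ((hconst (n-1) (by omega)).mp hh)
          have hadjE2 : G.Adj (w.getVert (n-1)) (w.getVert (n-1+1)) :=
            w.adj_getVert_succ (by omega)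
          have hsucc : n - 1 + 1 = n := by omega
          rw [hsucc, hgl] at hadjE2
          obtain ⟨w1, w2, e1, e2⟩ := walk_split w (n-1) (by omega)
          have hlt1 : w1.reverse.length < n := by simp; omega
          rcases Nat.lt_trichotomy ((w.getVert (n-1) : ℕ)) ((v : ℕ)) with hor | hor | hor
          · exact contra (w.getVert (n-1)) v a b (w.getVert (n-1)) u w1.reverse hadjE2 hab
              (by omega) h1 (by omega) (by omega) (by omega) (by omega) (by omega) (by omega)
              (Or.inl rfl) (Or.inr hub) hlt1
          · exact absurd (Fin.ext hor) hadjE2.ne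
          · exact contra v (w.getVert (n-1)) a b (w.getVert (n-1)) u w1.reverse hadjE2.symm hab
              (by omega) h1 (by omega) (by omega) (by omega) (by omega) (by omega) (by omega)
              (Or.inr rfl) (Or.inr hub) hlt1

/-- An ordered tree `G` is a monotone caterpillar graph iff it does not
contain any ordered tree on four vertices that is not a monotone caterpillar graph as an
ordered subgraph. -/
theorem stmt_13 (m : ℕ) (G : SimpleGraph (Fin m)) (hGconn : G.Connected)
    (hGacyc : G.IsAcyclic) :
    IsMonotoneCaterpillar G ↔
      ∀ T : SimpleGraph (Fin 4), T.Connected → T.IsAcyclic →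
        ¬ IsMonotoneCaterpillar T → ¬ OrderedSubgraph T G := by
  constructor
  · intro hcat T hTconn hTacyc hTncat hsub
    obtain ⟨φ, hmono, hφ⟩ := hsub
    obtain ⟨hnc, hns⟩ := cat_noCross_noSwitch hcat
    have mono' : ∀ {x y : Fin 4}, (x : ℕ) < (y : ℕ) → (φ x : ℕ) < (φ y : ℕ) :=
      fun h => hmono h
    apply hTncat
    apply tree_noCross_noSwitch_cat 4 T hTconn hTacyc
    · intro a b c d hab hcd h1 h2 h3 h4
      have heq := hnc (φ a) (φ b) (φ c) (φ d) (hφ _ _ hab) (hφ _ _ hcd)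
        (mono' h1) (mono' h2) (mono' h3) (mono' h4)
      have := hmono.injective (Fin.ext heq)
      exact congrArg Fin.val this
    · intro a b c d hab had hcd h1 h2 h3 h4
      exact hns (φ a) (φ b) (φ c) (φ d) (hφ _ _ hab) (hφ _ _ had) (hφ _ _ hcd)
        (mono' h1) (mono' h2) (mono' h3) (mono' h4)
  · intro hNF
    exact tree_noCross_noSwitch_cat m G hGconn hGacyc (NF_noCross hGconn hNF)
      (NF_noSwitch hGacyc hNF)
end
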